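/- arXiv:2203.00334 — 7 statements merged into one kernel-verified Lean document; each statement's English description precedes it below -/
import Mathlib

section
/- Let G be an Abelian group, H a subgroup of G, and S a subgroup of Ĝ. Then H is dense in G_S if and only if for every φ ∈ S, the image φ[H] is dense in φ[G] as subsets of the circle group 𝕋 = ℝ/ℤ. -/
/-- The coarsest topology on `G` making every character in `S` continuous. -/
noncomputable def tauS {G : Type*} [AddCommGroup G]
    (S : AddSubgroup (G →+ AddCircle (1 : ℝ))) : TopologicalSpace G :=
  ⨅ φ ∈ S, TopologicalSpace.induced ⇑φ inferInstance

/-- The topology of pointwise convergence on the dual group `Ĝ`. -/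
noncomputable def dualTop (G : Type*) [AddCommGroup G] :
    TopologicalSpace (G →+ AddCircle (1 : ℝ)) :=
  TopologicalSpace.induced (fun φ => (φ : G → AddCircle (1 : ℝ))) Pi.topologicalSpace

/-- A group topology on `G` is totally bounded if it is Hausdorff, makes `G` a
topological group, and every neighborhood `U` of `0` satisfies `G = F + U` for
some finite `F`. -/
def IsTotallyBoundedGroupTopology {G : Type*} [AddCommGroup G]
    (t : TopologicalSpace G) : Prop :=
  @IsTopologicalAddGroup G t _ ∧ @T2Space G t ∧
    ∀ U ∈ @nhds G t 0, ∃ F : Set G, F.Finite ∧ ∀ g : G, ∃ f ∈ F, ∃ u ∈ U, g = f + u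
open Submodule Module Topology Filter


lemma exists_line {E : Type*} [NormedAddCommGroup E] [NormedSpace ℝ E] [FiniteDimensional ℝ E]
    (L : AddSubgroup E) (hL : IsClosed (L : Set E))
    (hnd : ∀ ε : ℝ, 0 < ε → ∃ x ∈ L, x ≠ 0 ∧ ‖x‖ < ε) :
    ∃ v : E, v ≠ 0 ∧ ∀ t : ℝ, t • v ∈ L := by
  -- choose u k in L with 0 < ‖u k‖ < 1/(k+1)
  have h : ∀ k : ℕ, ∃ x : E, x ∈ L ∧ x ≠ 0 ∧ ‖x‖ < 1 / (k + 1) := by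
    intro k
    obtain ⟨x, hx, hx0, hxn⟩ := hnd (1 / (k + 1)) (by positivity)
    exact ⟨x, hx, hx0, hxn⟩
  choose u hu hu0 hun using h
  have hr : ∀ k, 0 < ‖u k‖ := fun k => norm_pos_iff.mpr (hu0 k)
  set d : ℕ → E := fun k => ‖u k‖⁻¹ • u k with hd
  have hds : ∀ k, d k ∈ Metric.sphere (0 : E) 1 := by
    intro k
    simp [hd, norm_smul, abs_of_pos (inv_pos.mpr (hr k)), inv_mul_cancel₀ (hr k).ne']
  obtain ⟨v, hv, φ, hφ, hdφ⟩ := (isCompact_sphere (0 : E) 1).tendsto_subseq hds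
  have hv1 : ‖v‖ = 1 := by simpa using hv
  refine ⟨v, by simp [← norm_pos_iff, hv1], fun t => ?_⟩
  -- norms tend to 0
  have hrn : Tendsto (fun j => ‖u (φ j)‖) atTop (𝓝 0) := by
    apply squeeze_zero (fun j => (hr _).le) (fun j => (hun (φ j)).le)
    apply Tendsto.comp (f := fun j : ℕ => φ j) (g := fun k : ℕ => 1 / ((k : ℝ) + 1))
    · exact tendsto_one_div_add_atTop_nhds_zero_nat
    · exact hφ.tendsto_atTop
  -- scalars s j := ⌊t / ‖u (φ j)‖⌋ * ‖u (φ j)‖ tend to t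
  set s : ℕ → ℝ := fun j => (⌊t / ‖u (φ j)‖⌋ : ℝ) * ‖u (φ j)‖ with hs
  have hst : Tendsto s atTop (𝓝 t) := by
    have hb : ∀ j, |s j - t| ≤ ‖u (φ j)‖ := by
      intro j
      have h1 : s j - t = -(Int.fract (t / ‖u (φ j)‖) * ‖u (φ j)‖) := by
        show (⌊t / ‖u (φ j)‖⌋ : ℝ) * ‖u (φ j)‖ - t = _
        have h2 : (⌊t / ‖u (φ j)‖⌋ : ℝ) = t / ‖u (φ j)‖ - Int.fract (t / ‖u (φ j)‖) := by
          rw [Int.self_sub_fract]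
        rw [h2, sub_mul, div_mul_cancel₀ _ (hr (φ j)).ne']
        ring
      rw [h1, abs_neg, abs_mul, abs_of_nonneg (Int.fract_nonneg _),
        abs_of_pos (hr (φ j))]
      calc Int.fract (t / ‖u (φ j)‖) * ‖u (φ j)‖ ≤ 1 * ‖u (φ j)‖ := by
            apply mul_le_mul_of_nonneg_right (Int.fract_lt_one _).le (hr _).le
        _ = ‖u (φ j)‖ := one_mul _
    have : Tendsto (fun j => s j - t) atTop (𝓝 0) :=
      squeeze_zero_norm (fun j => by simpa using hb j) hrn
    simpa using this.add_const t
  -- w j := ⌊t/r⌋ • u (φ j) ∈ L tends to t • v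
  have hw : Tendsto (fun j => (⌊t / ‖u (φ j)‖⌋ : ℤ) • u (φ j)) atTop (𝓝 (t • v)) := by
    have heq : ∀ j, (⌊t / ‖u (φ j)‖⌋ : ℤ) • u (φ j) = s j • d (φ j) := by
      intro j
      show _ = ((⌊t / ‖u (φ j)‖⌋ : ℝ) * ‖u (φ j)‖) • (‖u (φ j)‖⁻¹ • u (φ j))
      rw [← Int.cast_smul_eq_zsmul ℝ, smul_smul]
      congr 1
      rw [mul_assoc, mul_inv_cancel₀ (hr (φ j)).ne', mul_one]
    simp only [heq]
    exact (hst.smul (hdφ : Tendsto (d ∘ φ) atTop (𝓝 v)) : _)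
  exact hL.mem_of_tendsto hw (Eventually.of_forall fun j => L.zsmul_mem (hu (φ j)) _)

lemma disc_of_eps {E : Type*} [NormedAddCommGroup E] (M : Submodule ℤ E) (ε : ℝ) (hε : 0 < ε)
    (h : ∀ x ∈ M, ‖x‖ < ε → x = 0) : DiscreteTopology M := by
  rw [discreteTopology_iff_isOpen_singleton_zero, isOpen_induced_iff]
  refine ⟨Metric.ball 0 ε, Metric.isOpen_ball, ?_⟩
  ext ⟨x, hx⟩
  simp only [Set.mem_preimage, Metric.mem_ball, dist_zero_right, Set.mem_singleton_iff]
  constructor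
  · intro hlt
    exact Subtype.ext (h x hx hlt)
  · intro h0
    have hx0 : x = 0 := by simpa [Subtype.ext_iff] using h0
    simpa [hx0] using hε

lemma lattice_case {E : Type*} [NormedAddCommGroup E] [NormedSpace ℝ E] [FiniteDimensional ℝ E]
    (M : Submodule ℤ E) [DiscreteTopology M] [IsZLattice ℝ M] {q : E} (hq : q ∉ M) :
    ∃ f : E →ₗ[ℝ] ℝ, (∀ x ∈ M, ∃ k : ℤ, (k : ℝ) = f x) ∧ ∀ k : ℤ, (k : ℝ) ≠ f q := by
  have : Module.Finite ℤ M := ZLattice.module_finite ℝ M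
  have : Module.Free ℤ M := ZLattice.module_free ℝ M
  let b := Module.Free.chooseBasis ℤ M
  let B := b.ofZLatticeBasis ℝ M
  have hspan : span ℤ (Set.range B) = M := b.ofZLatticeBasis_span ℝ
  have hmem : ∀ x : E, x ∈ M ↔ ∀ i, ∃ k : ℤ, (k : ℝ) = B.repr x i := by
    intro x
    have h1 := B.mem_span_iff_repr_mem (R := ℤ) x
    rw [hspan] at h1
    rw [h1]
    simp only [Set.mem_range, algebraMap_int_eq, eq_intCast]
  rw [hmem q] at hq
  push_neg at hq
  obtain ⟨i, hi⟩ := hq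
  refine ⟨B.coord i, fun x hx => ?_, fun k hk => hi k ?_⟩
  · obtain ⟨k, hk⟩ := (hmem x).mp hx i
    exact ⟨k, by simpa [Basis.coord_apply] using hk⟩
  · simpa [Basis.coord_apply] using hk

lemma not_int_half : ∀ k : ℤ, (k : ℝ) ≠ 2⁻¹ := by
  intro k hk
  have h2 : ((2 * k : ℤ) : ℝ) = 1 := by push_cast; rw [hk]; norm_num
  have : (2 * k : ℤ) = 1 := by exact_mod_cast h2
  omega
universe u

lemma int_sep : ∀ (n : ℕ) (E : Type u) [NormedAddCommGroup E] [NormedSpace ℝ E]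
    [FiniteDimensional ℝ E], Module.finrank ℝ E = n → ∀ (L : AddSubgroup E),
    IsClosed (L : Set E) → ∀ q : E, q ∉ L →
    ∃ f : E →ₗ[ℝ] ℝ, (∀ x ∈ L, ∃ k : ℤ, (k : ℝ) = f x) ∧ ∀ k : ℤ, (k : ℝ) ≠ f q := by
  intro n
  induction n using Nat.strong_induction_on with
  | _ n IH =>
  intro E _ _ _ hrank L hL q hq
  by_cases hdisc : ∃ ε : ℝ, 0 < ε ∧ ∀ x ∈ L, ‖x‖ < ε → x = 0
  · -- discrete case
    obtain ⟨ε, hε, hsmall⟩ := hdisc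
    set M : Submodule ℤ E := AddSubgroup.toIntSubmodule L with hM
    have hqM : q ∉ M := hq
    have hMe : ∀ x : E, x ∈ M ↔ x ∈ L := fun x => Iff.rfl
    set W : Submodule ℝ E := span ℝ (M : Set E) with hW
    have hLW : (L : Set E) ⊆ W := fun x hx => subset_span hx
    by_cases hqW : q ∈ W
    · -- q in the span: use the lattice structure
      set M' : Submodule ℤ W := M.comap ((W.subtype).restrictScalars ℤ) with hM'
      have hM'mem : ∀ x : W, x ∈ M' ↔ (x : E) ∈ M := fun x => Iff.rfl
      haveI : DiscreteTopology M' := by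
        refine disc_of_eps M' ε hε ?_
        intro x hx hnx
        have : (x : E) = 0 := hsmall _ ((hM'mem x).mp hx) (by simpa using hnx)
        exact Subtype.ext this
      haveI : IsZLattice ℝ M' := by
        constructor
        have hinj : Function.Injective (Submodule.map (W.subtype : W →ₗ[ℝ] E)) :=
          Submodule.map_injective_of_injective W.injective_subtype
        apply hinj
        rw [Submodule.map_span, Submodule.map_top, Submodule.range_subtype]
        have himg : (W.subtype : W →ₗ[ℝ] E) '' (M' : Set W) = (M : Set E) := by
          ext y
          constructor
          · rintro ⟨x, hx, rfl⟩; exact hx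
          · intro hy
            exact ⟨⟨y, hLW hy⟩, hy, rfl⟩
        rw [himg]
      obtain ⟨g, hg1, hg2⟩ := lattice_case M' (q := (⟨q, hqW⟩ : W)) (by exact hqM)
      obtain ⟨W', hcompl⟩ := Submodule.exists_isCompl W
      set π := W.linearProjOfIsCompl W' hcompl with hπ
      refine ⟨g.comp (π : E →ₗ[ℝ] W), fun x hx => ?_, fun k => ?_⟩
      · have hxW : x ∈ W := hLW hx
        have : π x = ⟨x, hxW⟩ := Submodule.linearProjOfIsCompl_apply_left hcompl ⟨x, hxW⟩
        rw [LinearMap.comp_apply, this]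
        exact hg1 _ hx
      · have : π q = ⟨q, hqW⟩ := Submodule.linearProjOfIsCompl_apply_left hcompl ⟨q, hqW⟩
        rw [LinearMap.comp_apply, this]
        exact hg2 k
    · -- q outside the span: kill W
      obtain ⟨f, hfq, hfW⟩ := Submodule.exists_dual_map_eq_bot_of_notMem hqW inferInstance
      refine ⟨(2 * f q)⁻¹ • f, fun x hx => ⟨0, ?_⟩, fun k hk => ?_⟩
      · have hxW : x ∈ W := hLW hx
        have : f x = 0 := by
          have : f x ∈ Submodule.map f W := ⟨x, hxW, rfl⟩
          rwa [hfW, Submodule.mem_bot] at this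
        simp [this]
      · apply not_int_half k
        rw [hk]
        simp only [LinearMap.smul_apply, smul_eq_mul]
        rw [mul_inv, mul_assoc, inv_mul_cancel₀ hfq]
        norm_num
  · -- non-discrete case: contains a line
    push_neg at hdisc
    have hnd : ∀ ε : ℝ, 0 < ε → ∃ x ∈ L, x ≠ 0 ∧ ‖x‖ < ε := by
      intro ε hε
      obtain ⟨x, hx, hxn, hx0⟩ := hdisc ε hε
      exact ⟨x, hx, hx0, hxn⟩
    obtain ⟨v, hv0, hvL⟩ := exists_line L hL hnd
    set V : Submodule ℝ E := span ℝ {v} with hV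
    haveI hVc : IsClosed (V : Set E) := Submodule.closed_of_finiteDimensional V
    have hVL : (V : Set E) ⊆ L := by
      intro x hx
      obtain ⟨t, rfl⟩ := Submodule.mem_span_singleton.mp hx
      exact hvL t
    -- quotient
    set L' : AddSubgroup (E ⧸ V) := L.map (V.mkQ.toAddMonoidHom) with hL'
    have hL'set : (L' : Set (E ⧸ V)) = V.mkQ '' L := rfl
    have hpre : V.mkQ ⁻¹' (V.mkQ '' (L : Set E)) = L := by
      ext x
      simp only [Set.mem_preimage, Set.mem_image, SetLike.mem_coe]
      constructor
      · rintro ⟨y, hy, hxy⟩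
        have hxyV : x - y ∈ V := by
          have := (Submodule.Quotient.eq V).mp hxy.symm
          exact this
        have hx : x - y ∈ L := hVL hxyV
        simpa using L.add_mem hx hy
      · intro hx; exact ⟨x, hx, rfl⟩
    have hL'c : IsClosed (L' : Set (E ⧸ V)) := by
      rw [hL'set, ← (V.isOpenQuotientMap_mkQ.isQuotientMap).isClosed_preimage, hpre]
      exact hL
    have hq' : V.mkQ q ∉ L' := by
      intro hmem
      obtain ⟨y, hy, hxy⟩ := hmem
      have : q ∈ V.mkQ ⁻¹' (V.mkQ '' (L : Set E)) := ⟨y, hy, hxy⟩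
      rw [hpre] at this
      exact hq this
    have hrk : Module.finrank ℝ (E ⧸ V) < n := by
      have h1 : Module.finrank ℝ (E ⧸ V) + Module.finrank ℝ V = Module.finrank ℝ E :=
        Submodule.finrank_quotient_add_finrank V
      have h2 : Module.finrank ℝ V = 1 := finrank_span_singleton hv0
      omega
    obtain ⟨g, hg1, hg2⟩ := IH _ hrk (E ⧸ V) rfl L' hL'c (V.mkQ q) hq'
    refine ⟨g.comp V.mkQ, fun x hx => ?_, fun k => ?_⟩
    · exact hg1 _ ⟨x, hx, rfl⟩
    · exact hg2 k

/-- The coercion `ℝ → 𝕋` as an additive hom. -/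
noncomputable def rho : ℝ →+ AddCircle (1 : ℝ) := QuotientAddGroup.mk' _

lemma rho_apply (x : ℝ) : rho x = (x : AddCircle (1 : ℝ)) := rfl

lemma core_sep {ι : Type u} [Fintype ι] (K : AddSubgroup (ι → AddCircle (1 : ℝ)))
    (p : ι → AddCircle (1 : ℝ)) (hp : p ∉ closure (K : Set (ι → AddCircle (1 : ℝ)))) :
    ∃ m : ι → ℤ, (∀ k ∈ K, ∑ i, m i • k i = 0) ∧ ∑ i, m i • p i ≠ 0 := by
  classical
  -- the coordinatewise projection ℝⁱ → 𝕋ⁱ as a hom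
  let πh : (ι → ℝ) →+ (ι → AddCircle (1 : ℝ)) :=
    { toFun := fun x i => rho (x i)
      map_zero' := by funext i; simp
      map_add' := by intro x y; funext i; simp }
  have hπapp : ∀ (x : ι → ℝ) (i : ι), πh x i = rho (x i) := fun x i => rfl
  have hπc : Continuous πh := continuous_pi fun i =>
    (continuous_quot_mk : Continuous rho).comp (continuous_apply i)
  set L : AddSubgroup (ι → ℝ) := K.topologicalClosure.comap πh with hLdef
  have hLmem : ∀ x : ι → ℝ, x ∈ L ↔ πh x ∈ closure (K : Set (ι → AddCircle (1 : ℝ))) :=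
    fun x => Iff.rfl
  have hLc : IsClosed (L : Set (ι → ℝ)) := IsClosed.preimage hπc isClosed_closure
  -- lift p to q
  have hsurj : ∀ i, ∃ r : ℝ, rho r = p i := fun i => QuotientAddGroup.mk_surjective (p i)
  choose q hq using hsurj
  have hπq : πh q = p := funext fun i => hq i
  have hqL : q ∉ L := by
    intro hmem
    have h2 := (hLmem q).mp hmem
    rw [hπq] at h2
    exact hp h2
  obtain ⟨f, hf1, hf2⟩ := int_sep (Module.finrank ℝ (ι → ℝ)) (ι → ℝ) rfl L hLc q hqL
  -- the standard basis vectors are in L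
  have hsingle : ∀ i : ι, Pi.single i (1 : ℝ) ∈ L := by
    intro i
    rw [hLmem]
    have h0 : πh (Pi.single i (1 : ℝ)) = 0 := by
      funext j
      rw [hπapp]
      rcases eq_or_ne j i with hji | hji
      · subst hji
        rw [Pi.single_eq_same, rho_apply]
        simpa using (AddCircle.coe_period : ((1:ℝ) : AddCircle (1:ℝ)) = 0)
      · rw [Pi.single_eq_of_ne hji]
        simp
    rw [h0]
    exact subset_closure K.zero_mem
  have hm : ∀ i : ι, ∃ k : ℤ, (k : ℝ) = f (Pi.single i 1) := fun i => hf1 _ (hsingle i)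
  choose m hmspec using hm
  -- key computation: ∑ m i • rho (x i) = rho (f x)
  have key : ∀ x : ι → ℝ, (∑ i, m i • (πh x i)) = rho (f x) := by
    intro x
    have hfx : f x = ∑ i, (m i : ℝ) * x i := by
      conv_lhs => rw [← Finset.univ_sum_single x]
      rw [map_sum]
      congr 1
      funext i
      have h1 : (Pi.single i (x i) : ι → ℝ) = x i • (Pi.single i (1 : ℝ) : ι → ℝ) := by
        funext j
        rcases eq_or_ne j i with hji | hji
        · subst hji; simp
        · simp [Pi.single_eq_of_ne hji]
      rw [h1, map_smul, ← hmspec i, smul_eq_mul, mul_comm]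
    rw [hfx, map_sum]
    congr 1
    funext i
    rw [hπapp, ← map_zsmul rho]
    congr 1
    rw [zsmul_eq_mul]
  refine ⟨m, fun k hk => ?_, ?_⟩
  · -- lift k coordinatewise
    have hsurj2 : ∀ i, ∃ r : ℝ, rho r = k i := fun i => QuotientAddGroup.mk_surjective (k i)
    choose l hl using hsurj2
    have hlL : l ∈ L := by
      rw [hLmem]
      have : πh l = k := funext fun i => hl i
      rw [this]
      exact subset_closure hk
    obtain ⟨n, hn⟩ := hf1 l hlL
    have : (∑ i, m i • k i) = rho (f l) := by
      rw [← key l]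
      congr 1
      funext i
      rw [hπapp, hl]
    rw [this, ← hn, rho_apply, AddCircle.coe_eq_zero_iff]
    exact ⟨n, by simp⟩
  · intro h0
    have : (∑ i, m i • p i) = rho (f q) := by
      rw [← key q]
      congr 1
      funext i
      rw [hπapp, hq]
    rw [this, rho_apply, AddCircle.coe_eq_zero_iff] at h0
    obtain ⟨n, hn⟩ := h0
    exact hf2 n (by simpa using hn)


theorem stmt5 {G : Type*} [AddCommGroup G] (H : AddSubgroup G)
    (S : AddSubgroup (G →+ AddCircle (1 : ℝ))) :
    @Dense G (tauS S) (H : Set G) ↔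
      ∀ φ ∈ S, Set.range ⇑φ ⊆ closure (⇑φ '' (H : Set G)) := by
  classical
  constructor
  · intro hd φ hφ
    have hle : tauS S ≤ TopologicalSpace.induced ⇑φ inferInstance := by
      rw [tauS]
      exact iInf_le_of_le φ (iInf_le _ hφ)
    have hcont : @Continuous G (AddCircle (1:ℝ)) (tauS S) _ ⇑φ :=
      continuous_iff_le_induced.mpr hle
    rintro _ ⟨g, rfl⟩
    have hg : g ∈ @closure G (tauS S) (H : Set G) := hd g
    have hsub := @image_closure_subset_closure_image G (AddCircle (1:ℝ)) (tauS S) _ ⇑φ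
      (H : Set G) hcont
    exact hsub (Set.mem_image_of_mem _ hg)
  · intro hS
    refine (@dense_iff_inter_open G (tauS S) (H : Set G)).mpr ?_
    rintro U hUopen ⟨g, hg⟩
    have hU' : U ∈ @nhds G (tauS S) g := @IsOpen.mem_nhds G (tauS S) _ _ hUopen hg
    have hnh : @nhds G (tauS S) g =
        ⨅ (φ : {ψ : G →+ AddCircle (1:ℝ) // ψ ∈ S}), Filter.comap ⇑φ.1 (nhds (φ.1 g)) := by
      rw [tauS, iInf_subtype']
      rw [_root_.nhds_iInf]
      exact iInf_congr fun φ => nhds_induced _ _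
    rw [hnh] at hU'
    obtain ⟨I, hIfin, V, hV, hUeq⟩ := Filter.mem_iInf.mp hU'
    haveI : Fintype ↥I := hIfin.fintype
    have hV' : ∀ i : ↥I, ∃ O : Set (AddCircle (1:ℝ)),
        IsOpen O ∧ (i : {ψ // ψ ∈ S}).1 g ∈ O ∧ ⇑(i : {ψ // ψ ∈ S}).1 ⁻¹' O ⊆ V i := by
      intro i
      obtain ⟨W, hW, hWV⟩ := Filter.mem_comap.mp (hV i)
      obtain ⟨O, hOW, hOopen, hgO⟩ := mem_nhds_iff.mp hW
      exact ⟨O, hOopen, hgO, fun x hx => hWV (hOW hx)⟩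
    choose O hOopen hgO hOV using hV'
    -- the evaluation hom into the finite product
    let Φ : G →+ (↥I → AddCircle (1:ℝ)) :=
      { toFun := fun a i => (i : {ψ // ψ ∈ S}).1 a
        map_zero' := by funext i; simp
        map_add' := by intro x y; funext i; simp }
    have hΦapp : ∀ (a : G) (i : ↥I), Φ a i = (i : {ψ // ψ ∈ S}).1 a := fun a i => rfl
    set K : AddSubgroup (↥I → AddCircle (1:ℝ)) := H.map Φ with hK
    set p : ↥I → AddCircle (1:ℝ) := Φ g with hp
    have hpc : p ∈ closure (K : Set (↥I → AddCircle (1:ℝ))) := by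
      by_contra hpc
      obtain ⟨m, hm1, hm2⟩ := core_sep K p hpc
      set ψ : G →+ AddCircle (1:ℝ) := ∑ i : ↥I, m i • ((i : {ψ // ψ ∈ S}).1 : G →+ AddCircle (1:ℝ)) with hψ
      have hψa : ∀ a : G, ψ a = ∑ i : ↥I, m i • ((i : {ψ // ψ ∈ S}).1 a) := by
        intro a
        rw [hψ, AddMonoidHom.finset_sum_apply]
        exact Finset.sum_congr rfl fun i _ => rfl
      have hψS : ψ ∈ S := by
        rw [hψ]
        exact AddSubgroup.sum_mem S fun i _ => AddSubgroup.zsmul_mem S i.1.2 (m i)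
      have hψH : ∀ h ∈ H, ψ h = 0 := by
        intro h hh
        rw [hψa]
        exact hm1 (Φ h) ⟨h, hh, rfl⟩
      have h1 : ψ g ∈ closure (⇑ψ '' (H : Set G)) := hS ψ hψS ⟨g, rfl⟩
      have h2 : (⇑ψ '' (H : Set G)) ⊆ {0} := by
        rintro _ ⟨h, hh, rfl⟩
        exact hψH h hh
      have h3 : ψ g = 0 := closure_minimal h2 isClosed_singleton h1
      rw [hψa] at h3
      exact hm2 h3
    have hObox : IsOpen (Set.pi Set.univ O) := isOpen_set_pi Set.finite_univ fun i _ => hOopen i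
    have hpO : p ∈ Set.pi Set.univ O := fun i _ => hgO i
    obtain ⟨x, hxO, hxK⟩ := _root_.mem_closure_iff.mp hpc _ hObox hpO
    obtain ⟨h, hhH, rfl⟩ := hxK
    refine ⟨h, ?_, hhH⟩
    rw [hUeq]
    refine Set.mem_iInter.mpr fun i => ?_
    exact hOV i (hxO i (Set.mem_univ i))
end

section
/- Let G be an Abelian group, H a subgroup of G, and S a subgroup of Ĝ. Then H is closed in G_S if and only if A(Ĝ, H) equals the closure of A(S, H) in Ĝ (equivalently, the closure in Ĝ of S ∩ A(Ĝ, H)), where Ĝ carries the topology of pointwise convergence. -/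
namespace Stmt8Aux

open MeasureTheory Set

noncomputable section

local notation "𝕋" => AddCircle (1 : ℝ)

variable {I : Type*}

/-- The pairing between finitely supported integer vectors and points of `𝕋^I`. -/
def pair (n : I →₀ ℤ) (f : I → 𝕋) : 𝕋 := n.sum fun i z => z • f i

lemma pair_add_left (n m : I →₀ ℤ) (f : I → 𝕋) :
    pair (n + m) f = pair n f + pair m f :=
  Finsupp.sum_add_index' (fun a => zero_smul ℤ (f a)) (fun a b₁ b₂ => add_smul b₁ b₂ (f a))

lemma pair_zero_left (f : I → 𝕋) : pair (0 : I →₀ ℤ) f = 0 := by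
  simp [pair, Finsupp.sum_zero_index]

lemma pair_neg_left (n : I →₀ ℤ) (f : I → 𝕋) : pair (-n) f = - pair n f := by
  have h := pair_add_left n (-n) f
  rw [add_neg_cancel, pair_zero_left] at h
  exact eq_neg_of_add_eq_zero_right h.symm

lemma pair_add_right (n : I →₀ ℤ) (f g : I → 𝕋) :
    pair n (f + g) = pair n f + pair n g := by
  simp only [pair, Finsupp.sum, Pi.add_apply, smul_add, Finset.sum_add_distrib]

lemma pair_single (i : I) (f : I → 𝕋) : pair (Finsupp.single i 1) f = f i := by
  rw [pair, Finsupp.sum_single_index (zero_smul ℤ (f i)), one_smul]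

lemma continuous_pair (n : I →₀ ℤ) : Continuous fun f : I → 𝕋 => pair n f := by
  simp only [pair, Finsupp.sum]
  exact continuous_finset_sum _ fun i _ => (continuous_apply i).zsmul _

lemma pair_hom {G : Type*} [AddCommGroup G] (φ : G →+ 𝕋) (n : G →₀ ℤ) :
    pair n ⇑φ = φ (n.sum fun g z => z • g) := by
  rw [map_finsuppSum]
  simp [pair]

/-- The character of `𝕋^I` attached to an integer vector. -/
def evChar (n : I →₀ ℤ) : C(I → 𝕋, ℂ) :=
  ⟨fun f => (AddCircle.toCircle (pair n f) : ℂ),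
    continuous_subtype_val.comp (AddCircle.continuous_toCircle.comp (continuous_pair n))⟩

lemma evChar_apply (n : I →₀ ℤ) (f : I → 𝕋) :
    evChar n f = (AddCircle.toCircle (pair n f) : ℂ) := rfl

lemma evChar_mul (n m : I →₀ ℤ) : evChar n * evChar m = evChar (n + m) := by
  ext f
  simp [evChar_apply, pair_add_left, AddCircle.toCircle_add]

lemma evChar_zero : (evChar (0 : I →₀ ℤ)) = 1 := by
  ext f
  simp [evChar_apply, pair_zero_left]

lemma toCircle_neg (x : 𝕋) :
    AddCircle.toCircle (-x) = (AddCircle.toCircle x)⁻¹ := by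
  apply eq_inv_of_mul_eq_one_left
  rw [← AddCircle.toCircle_add, neg_add_cancel, AddCircle.toCircle_zero]

lemma evChar_star (n : I →₀ ℤ) : star (evChar n) = evChar (-n) := by
  ext f
  simp only [ContinuousMap.coe_star, Pi.star_apply, evChar_apply, pair_neg_left, toCircle_neg]
  rw [Circle.coe_inv_eq_conj]
  rfl

/-- The span of the characters, as a star subalgebra of `C(𝕋^I, ℂ)`. -/
def charSpan (I : Type*) : Submodule ℂ C(I → 𝕋, ℂ) :=
  Submodule.span ℂ (Set.range (evChar (I := I)))

lemma mul_mem_charSpan {a b : C(I → 𝕋, ℂ)} (ha : a ∈ charSpan I) (hb : b ∈ charSpan I) :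
    a * b ∈ charSpan I := by
  induction ha using Submodule.span_induction with
  | mem x hx =>
    obtain ⟨n, rfl⟩ := hx
    induction hb using Submodule.span_induction with
    | mem y hy =>
      obtain ⟨m, rfl⟩ := hy
      rw [evChar_mul]
      exact Submodule.subset_span ⟨n + m, rfl⟩
    | zero => rw [mul_zero]; exact zero_mem _
    | add y z _ _ hy hz => rw [mul_add]; exact add_mem hy hz
    | smul c y _ hy => rw [mul_smul_comm]; exact Submodule.smul_mem _ _ hy
  | zero => rw [zero_mul]; exact zero_mem _
  | add x y _ _ hx hy => rw [add_mul]; exact add_mem hx hy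
  | smul c x _ hx => rw [smul_mul_assoc]; exact Submodule.smul_mem _ _ hx

lemma star_mem_charSpan {a : C(I → 𝕋, ℂ)} (ha : a ∈ charSpan I) : star a ∈ charSpan I := by
  induction ha using Submodule.span_induction with
  | mem x hx =>
    obtain ⟨n, rfl⟩ := hx
    rw [evChar_star]
    exact Submodule.subset_span ⟨-n, rfl⟩
  | zero => rw [star_zero]; exact zero_mem _
  | add x y _ _ hx hy => rw [star_add]; exact add_mem hx hy
  | smul c x _ hx =>
    rw [star_smul]
    exact Submodule.smul_mem _ _ hx

/-- The star subalgebra of `C(𝕋^I, ℂ)` generated (spanned) by the characters. -/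
def charAlg (I : Type*) : StarSubalgebra ℂ C(I → 𝕋, ℂ) where
  carrier := (charSpan I : Set C(I → 𝕋, ℂ))
  mul_mem' := mul_mem_charSpan
  add_mem' := fun ha hb => add_mem ha hb
  one_mem' := by
    show (1 : C(I → 𝕋, ℂ)) ∈ charSpan I
    rw [← evChar_zero]
    exact Submodule.subset_span ⟨0, rfl⟩
  zero_mem' := zero_mem _
  algebraMap_mem' := fun c => by
    show (algebraMap ℂ C(I → 𝕋, ℂ)) c ∈ charSpan I
    rw [Algebra.algebraMap_eq_smul_one, ← evChar_zero]
    exact Submodule.smul_mem _ _ (Submodule.subset_span ⟨0, rfl⟩)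
  star_mem' := star_mem_charSpan

lemma charAlg_separatesPoints (I : Type*) : (charAlg I).SeparatesPoints := by
  intro f g hfg
  have : ∃ i, f i ≠ g i := by
    by_contra h
    push_neg at h
    exact hfg (funext h)
  obtain ⟨i, hi⟩ := this
  refine ⟨_, ⟨evChar (Finsupp.single i 1), Submodule.subset_span ⟨_, rfl⟩, rfl⟩, ?_⟩
  simp only [evChar_apply, pair_single]
  intro h
  exact hi (AddCircle.injective_toCircle one_ne_zero (Subtype.coe_injective h))

lemma charAlg_dense (I : Type*) (f : C(I → 𝕋, ℂ)) :
    f ∈ closure (charSpan I : Set C(I → 𝕋, ℂ)) := by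
  have h := ContinuousMap.starSubalgebra_topologicalClosure_eq_top_of_separatesPoints
    (charAlg I) (charAlg_separatesPoints I)
  have : f ∈ (charAlg I).topologicalClosure := h ▸ trivial
  exact this

/-- **Master lemma**: a point of `𝕋^I` annihilated by every integer character that kills a
closed subgroup `K` lies in `K`. -/
theorem mem_of_forall_char (K : AddSubgroup (I → 𝕋)) (hKc : IsClosed (K : Set (I → 𝕋)))
    (x : I → 𝕋) (hx : ∀ n : I →₀ ℤ, (∀ k ∈ K, pair n k = 0) → pair n x = 0) :
    x ∈ K := by
  by_contra hxK
  -- set up Haar measure on K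
  haveI : CompactSpace K := isCompact_iff_compactSpace.mp hKc.isCompact
  letI : MeasurableSpace K := borel K
  haveI : BorelSpace K := ⟨rfl⟩
  haveI : Nonempty K := ⟨0⟩
  set μ : Measure K := Measure.addHaarMeasure (⊤ : TopologicalSpace.PositiveCompacts K) with hμ
  have hμuniv : μ Set.univ = 1 := by
    simpa using Measure.addHaarMeasure_self (K₀ := (⊤ : TopologicalSpace.PositiveCompacts K))
  haveI : IsFiniteMeasure μ := ⟨by rw [hμuniv]; exact ENNReal.one_lt_top⟩
  have hint : ∀ g : K → ℂ, Continuous g → Integrable g μ := fun g hg =>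
    hg.integrable_of_hasCompactSupport (HasCompactSupport.of_compactSpace g)
  have hintR : ∀ g : K → ℝ, Continuous g → Integrable g μ := fun g hg =>
    hg.integrable_of_hasCompactSupport (HasCompactSupport.of_compactSpace g)
  -- the linear functional
  let J : C(I → 𝕋, ℂ) →ₗ[ℂ] ℂ :=
    { toFun := fun f => (∫ k : K, f (x + ↑k) ∂μ) - ∫ k : K, f ↑k ∂μ
      map_add' := by
        intro f g
        have h1 : Continuous fun k : K => f (x + ↑k) :=
          f.continuous.comp (continuous_const.add continuous_subtype_val)
        have h2 : Continuous fun k : K => g (x + ↑k) :=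
          g.continuous.comp (continuous_const.add continuous_subtype_val)
        have h3 : Continuous fun k : K => f ↑k := f.continuous.comp continuous_subtype_val
        have h4 : Continuous fun k : K => g ↑k := g.continuous.comp continuous_subtype_val
        simp only [ContinuousMap.add_apply]
        rw [integral_add (hint _ h1) (hint _ h2), integral_add (hint _ h3) (hint _ h4)]
        ring
      map_smul' := by
        intro c f
        simp only [ContinuousMap.smul_apply, RingHom.id_apply]
        rw [integral_smul, integral_smul, smul_eq_mul, smul_eq_mul, smul_eq_mul]
        ring }
  -- J vanishes on characters
  have hJchar : ∀ n : I →₀ ℤ, J (evChar n) = 0 := by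
    intro n
    by_cases hn : ∀ k : K, pair n ↑k = 0
    · have hx0 : pair n x = 0 := hx n fun k hk => hn ⟨k, hk⟩
      have h1 : ∀ k : K, evChar n (x + ↑k) = 1 := by
        intro k
        rw [evChar_apply, pair_add_right, hx0, hn k, add_zero, AddCircle.toCircle_zero]
        rfl
      have h2 : ∀ k : K, evChar n (↑k : I → 𝕋) = 1 := by
        intro k
        rw [evChar_apply, hn k, AddCircle.toCircle_zero]
        rfl
      have e1 : ∫ k : K, evChar n (x + ↑k) ∂μ = ∫ _k : K, (1 : ℂ) ∂μ :=
        integral_congr_ae (Filter.Eventually.of_forall h1)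
      have e2 : ∫ k : K, evChar n (↑k : I → 𝕋) ∂μ = ∫ _k : K, (1 : ℂ) ∂μ :=
        integral_congr_ae (Filter.Eventually.of_forall h2)
      show (∫ k : K, evChar n (x + ↑k) ∂μ) - ∫ k : K, evChar n ↑k ∂μ = 0
      rw [e1, e2]
      ring
    · push_neg at hn
      obtain ⟨k₀, hk₀⟩ := hn
      -- the character restricted to K
      set c : K → ℂ := fun k => evChar n ↑k with hc
      have hcc : Continuous c := (evChar n).continuous.comp continuous_subtype_val
      have hmul : ∀ k k' : K, c (k + k') = c k * c k' := by
        intro k k'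
        simp only [hc, evChar_apply]
        rw [show ((k + k' : K) : I → 𝕋) = (↑k + ↑k' : I → 𝕋) from rfl, pair_add_right,
          AddCircle.toCircle_add]
        push_cast
        ring
      have hck₀ : c k₀ ≠ 1 := by
        simp only [hc, evChar_apply]
        intro h
        have : AddCircle.toCircle (pair n ↑k₀) = AddCircle.toCircle (0 : 𝕋) := by
          rw [AddCircle.toCircle_zero]
          exact Subtype.coe_injective h
        exact hk₀ (AddCircle.injective_toCircle one_ne_zero this)
      have hintc : ∫ k : K, c k ∂μ = 0 := by
        have hinv : ∫ k : K, c (k₀ + k) ∂μ = ∫ k : K, c k ∂μ :=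
          integral_add_left_eq_self c k₀
        have : ∫ k : K, c (k₀ + k) ∂μ = c k₀ * ∫ k : K, c k ∂μ := by
          simp_rw [hmul k₀]
          rw [integral_const_mul]
        rw [this] at hinv
        by_contra h
        exact hck₀ (mul_right_cancel₀ h (by rw [hinv, one_mul]))
      have h1 : ∫ k : K, evChar n (x + ↑k) ∂μ = 0 := by
        have : ∀ k : K, evChar n (x + ↑k) = evChar n x * c k := by
          intro k
          simp only [hc, evChar_apply]
          rw [pair_add_right, AddCircle.toCircle_add]
          push_cast
          ring
        simp_rw [this]
        rw [integral_const_mul, hintc, mul_zero]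
      show (∫ k : K, evChar n (x + ↑k) ∂μ) - ∫ k : K, evChar n ↑k ∂μ = 0
      rw [h1, hintc]
      ring
  -- J vanishes on the span
  have hJspan : ∀ f ∈ charSpan I, J f = 0 := by
    intro f hf
    have : charSpan I ≤ LinearMap.ker J := by
      rw [charSpan, Submodule.span_le]
      rintro _ ⟨n, rfl⟩
      exact hJchar n
    exact this hf
  -- J is continuous
  have hJcont : Continuous J := by
    have key : ∀ (T : K → (I → 𝕋)), Continuous T →
        LipschitzWith 1 (fun f : C(I → 𝕋, ℂ) => ∫ k : K, f (T k) ∂μ) := by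
      intro T hT
      apply LipschitzWith.of_dist_le_mul
      intro f g
      rw [NNReal.coe_one, one_mul, dist_eq_norm, dist_eq_norm]
      have heq : (∫ k : K, f (T k) ∂μ) - ∫ k : K, g (T k) ∂μ
          = ∫ k : K, (f (T k) - g (T k)) ∂μ :=
        (integral_sub (hint _ (f.continuous.comp hT)) (hint _ (g.continuous.comp hT))).symm
      rw [heq]
      calc ‖∫ k : K, (f (T k) - g (T k)) ∂μ‖ ≤ ‖f - g‖ * (μ Set.univ).toReal :=
            norm_integral_le_of_norm_le_const
              (Filter.Eventually.of_forall fun k => by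
                rw [← ContinuousMap.sub_apply]
                exact ContinuousMap.norm_coe_le_norm (f - g) (T k))
        _ = ‖f - g‖ := by rw [hμuniv]; simp
    have h1 := (key (fun k : K => x + (k : I → 𝕋))
      (continuous_const.add continuous_subtype_val)).continuous
    have h2 := (key (fun k : K => (k : I → 𝕋)) continuous_subtype_val).continuous
    exact h1.sub h2
  -- J vanishes on the closure of the span, i.e. everywhere
  have hJall : ∀ f : C(I → 𝕋, ℂ), J f = 0 := by
    intro f
    have hcl : closure (charSpan I : Set C(I → 𝕋, ℂ)) ⊆ (fun f => J f) ⁻¹' {0} := by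
      apply closure_minimal
      · intro f hf
        exact hJspan f hf
      · exact IsClosed.preimage hJcont isClosed_singleton
    exact hcl (charAlg_dense I f)
  -- Urysohn function separating x from K
  obtain ⟨g, hg0, hg1, hg01⟩ := exists_continuous_zero_one_of_isClosed hKc
    (isClosed_singleton (x := x)) (by simpa [Set.disjoint_singleton_right] using hxK)
  set gc : C(I → 𝕋, ℂ) := ⟨fun y => (g y : ℂ), Complex.continuous_ofReal.comp g.continuous⟩
    with hgc
  have hJg : J gc = 0 := hJall gc
  have h2 : ∫ k : K, gc ↑k ∂μ = 0 := by
    have : ∀ k : K, gc (↑k : I → 𝕋) = 0 := by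
      intro k
      have := hg0 k.2
      simp only [hgc, ContinuousMap.coe_mk]
      rw [show g ↑k = 0 from this]
      simp
    have e : ∫ k : K, gc ↑k ∂μ = ∫ _k : K, (0 : ℂ) ∂μ :=
      integral_congr_ae (Filter.Eventually.of_forall this)
    rw [e]
    simp
  have h1 : ∫ k : K, gc (x + ↑k) ∂μ = ((∫ k : K, g (x + ↑k) ∂μ : ℝ) : ℂ) :=
    integral_ofReal (𝕜 := ℂ)
  have hpos : 0 < ∫ k : K, g (x + ↑k) ∂μ := by
    set h : K → ℝ := fun k => g (x + ↑k) with hh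
    have hhc : Continuous h := g.continuous.comp (continuous_const.add continuous_subtype_val)
    have hnn : 0 ≤ h := fun k => (hg01 _).1
    have hint' : Integrable h μ := hintR h hhc
    rw [integral_pos_iff_support_of_nonneg hnn hint']
    have hopen : IsOpen (Function.support h) := by
      have : Function.support h = h ⁻¹' {0}ᶜ := by
        ext k; simp [Function.mem_support]
      rw [this]
      exact (isClosed_singleton.preimage hhc).isOpen_compl
    apply hopen.measure_pos μ
    refine ⟨0, ?_⟩
    simp only [Function.mem_support, hh]
    rw [show x + ((0 : K) : I → 𝕋) = x by simp]
    rw [hg1 rfl]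
    norm_num
  have : J gc = ((∫ k : K, g (x + ↑k) ∂μ : ℝ) : ℂ) := by
    show (∫ k : K, gc (x + ↑k) ∂μ) - ∫ k : K, gc ↑k ∂μ = _
    rw [h1, h2, sub_zero]
  rw [hJg] at this
  exact absurd this.symm (by
    simp only [Complex.ofReal_eq_zero]
    exact ne_of_gt hpos)

end


local notation "𝕋" => AddCircle (1 : ℝ)

lemma pair_def {I : Type*} (n : I →₀ ℤ) (f : I → 𝕋) :
    pair n f = n.sum fun i z => z • f i := rfl

variable {G : Type*} [AddCommGroup G]


/-- Existence of characters separating a point from a subgroup. -/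
lemma exists_char (H : AddSubgroup G) (x : G) (hx : x ∉ H) :
    ∃ χ : G →+ 𝕋, (∀ h ∈ H, χ h = 0) ∧ χ x ≠ 0 := by
  set q : G ⧸ H := QuotientAddGroup.mk x with hq
  have hq0 : q ≠ 0 := by
    rw [hq, Ne, QuotientAddGroup.eq_zero_iff]
    exact hx
  have baer : Module.Baer ℤ 𝕋 := Module.Baer.of_divisible _
  have main : ∃ ψ : G ⧸ H →+ 𝕋, ψ q ≠ 0 := by
    by_cases hfin : addOrderOf q = 0
    · -- infinite order case
      have hinj : Function.Injective (zmultiplesHom (G ⧸ H) q) := by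
        intro a b hab
        by_contra hne
        simp only [zmultiplesHom_apply] at hab
        have h1 : (a - b) • q = 0 := by
          rw [sub_smul, hab, sub_self]
        have : IsOfFinAddOrder q :=
          isOfFinAddOrder_iff_zsmul_eq_zero.mpr ⟨a - b, sub_ne_zero.mpr hne, h1⟩
        rw [← addOrderOf_pos_iff] at this
        omega
      set t : 𝕋 := ((1/2 : ℝ) : 𝕋) with ht
      have ht0 : t ≠ 0 := by
        rw [ht, Ne, AddCircle.coe_eq_zero_iff]
        rintro ⟨n, hn⟩
        rw [zsmul_eq_mul, mul_one] at hn
        have : ((2 * n : ℤ) : ℝ) = 1 := by push_cast; rw [hn]; ring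
        have : (2 * n : ℤ) = 1 := by exact_mod_cast this
        omega
      obtain ⟨ψ, hψ⟩ := baer.extension_property_addMonoidHom
        (zmultiplesHom (G ⧸ H) q) hinj (zmultiplesHom 𝕋 t)
      refine ⟨ψ, ?_⟩
      have := DFunLike.congr_fun hψ (1 : ℤ)
      simp only [AddMonoidHom.comp_apply, zmultiplesHom_apply, one_zsmul] at this
      rw [this]
      exact ht0
    · -- finite order case
      haveI : NeZero (addOrderOf q) := ⟨hfin⟩
      set m := addOrderOf q with hm
      have hm1 : m ≠ 1 := by
        intro h
        exact hq0 (AddMonoid.addOrderOf_eq_one_iff.mp h)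
      have hker : (zmultiplesHom (G ⧸ H) q) (m : ℤ) = 0 := by
        simp only [zmultiplesHom_apply, natCast_zsmul]
        exact addOrderOf_nsmul_eq_zero q
      set f : ZMod m →+ G ⧸ H := ZMod.lift m ⟨zmultiplesHom (G ⧸ H) q, hker⟩ with hf
      have hinj : Function.Injective f := by
        rw [hf, ZMod.lift_injective]
        intro c hc
        simp only [zmultiplesHom_apply] at hc
        rw [ZMod.intCast_zmod_eq_zero_iff_dvd]
        exact_mod_cast addOrderOf_dvd_iff_zsmul_eq_zero.mpr hc
      obtain ⟨ψ, hψ⟩ := baer.extension_property_addMonoidHom f hinj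
        (ZMod.toAddCircle : ZMod m →+ 𝕋)
      refine ⟨ψ, ?_⟩
      have hf1 : f ((1 : ℤ) : ZMod m) = q := by
        rw [hf, ZMod.lift_coe]
        simp
      have := DFunLike.congr_fun hψ ((1 : ℤ) : ZMod m)
      rw [AddMonoidHom.comp_apply, hf1] at this
      rw [this, Ne, ZMod.toAddCircle_eq_zero]
      intro h1
      have h2 : ((1 : ℤ) : ZMod m) = 0 := by exact_mod_cast h1
      have h3 : (m : ℤ) ∣ 1 := (ZMod.intCast_zmod_eq_zero_iff_dvd 1 m).mp h2
      have h4 : (m : ℤ) ≤ 1 := Int.le_of_dvd one_pos h3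
      have : m = 1 := by omega
      exact hm1 this
  obtain ⟨ψ, hψ⟩ := main
  refine ⟨ψ.comp (QuotientAddGroup.mk' H), fun h hh => ?_, hψ⟩
  simp only [AddMonoidHom.comp_apply, QuotientAddGroup.mk'_apply]
  rw [(QuotientAddGroup.eq_zero_iff h).mpr hh, map_zero]



lemma tauS_eq_induced (S : AddSubgroup (G →+ 𝕋)) :
    tauS S = TopologicalSpace.induced (fun g (φ : S) => (φ : G →+ 𝕋) g) Pi.topologicalSpace := by
  rw [tauS, induced_to_pi, iInf_subtype']

/-- The evaluation homomorphism `G →+ (S → 𝕋)`. -/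
noncomputable def eHom (S : AddSubgroup (G →+ 𝕋)) : G →+ (S → 𝕋) :=
  AddMonoidHom.mk' (fun g φ => (φ : G →+ 𝕋) g)
    (fun a b => funext fun φ => map_add (φ : G →+ 𝕋) a b)

lemma eHom_apply (S : AddSubgroup (G →+ 𝕋)) (g : G) (φ : S) :
    eHom S g φ = (φ : G →+ 𝕋) g := rfl

/-- The coercion homomorphism `(G →+ 𝕋) →+ (G → 𝕋)`. -/
noncomputable def coeHom (G : Type*) [AddCommGroup G] : (G →+ 𝕋) →+ (G → 𝕋) :=
  AddMonoidHom.mk' (fun φ => ⇑φ) (fun _ _ => rfl)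

/-- The annihilator of `H` inside the full dual, as a subgroup. -/
noncomputable def annih (H : AddSubgroup G) : AddSubgroup (G →+ 𝕋) where
  carrier := {φ | ∀ h ∈ H, φ h = 0}
  zero_mem' := fun h _ => rfl
  add_mem' := by
    intro a b ha hb h hh
    simp [AddMonoidHom.add_apply, ha h hh, hb h hh]
  neg_mem' := by
    intro a ha h hh
    simp [AddMonoidHom.neg_apply, ha h hh]

lemma pair_eHom (S : AddSubgroup (G →+ 𝕋)) (n : S →₀ ℤ) (g : G) :
    pair n (eHom S g) = (n.sum fun φ z => z • (φ : G →+ 𝕋)) g := by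
  rw [pair_def, Finsupp.sum, Finsupp.sum, AddMonoidHom.finset_sum_apply]
  refine Finset.sum_congr rfl fun φ _ => ?_
  rw [AddMonoidHom.smul_apply, eHom_apply]

lemma closure_tauS (H : AddSubgroup G) (S : AddSubgroup (G →+ 𝕋)) :
    @closure G (tauS S) ↑H = {x : G | ∀ φ ∈ S, (∀ h ∈ H, φ h = 0) → φ x = 0} := by
  have hle : ∀ φ ∈ S, tauS S ≤ TopologicalSpace.induced ⇑φ inferInstance := by
    intro φ hφ
    rw [tauS]
    exact iInf_le_of_le φ (iInf_le _ hφ)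
  letI : TopologicalSpace G := tauS S
  show closure (H : Set G) = {x : G | ∀ φ ∈ S, (∀ h ∈ H, φ h = 0) → φ x = 0}
  apply subset_antisymm
  · apply closure_minimal
    · intro h hh
      intro φ _ hφH
      exact hφH h hh
    · have hset : {x : G | ∀ φ ∈ S, (∀ h ∈ H, φ h = 0) → φ x = 0}
          = ⋂ (φ : G →+ 𝕋) (_ : φ ∈ S) (_ : ∀ h ∈ H, φ h = 0), (⇑φ ⁻¹' {0}) := by
        ext x
        simp [Set.mem_iInter]
      rw [hset]
      refine isClosed_iInter fun φ => isClosed_iInter fun hφ => isClosed_iInter fun _ => ?_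
      have hcont : Continuous ⇑φ := continuous_iff_le_induced.mpr (hle φ hφ)
      exact IsClosed.preimage hcont isClosed_singleton
  · intro x hxN
    have hiff : x ∈ @closure G (tauS S) ↑H ↔ eHom S x ∈ closure (eHom S '' ↑H) := by
      rw [tauS_eq_induced S]
      exact closure_induced
    rw [show closure (H : Set G) = @closure G (tauS S) ↑H from rfl, hiff]
    set KA : AddSubgroup (S → 𝕋) := (AddSubgroup.map (eHom S) H).topologicalClosure with hKA
    have hmem : eHom S x ∈ KA := by
      apply mem_of_forall_char KA
      · exact AddSubgroup.isClosed_topologicalClosure _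
      · intro n hn
        have hψS : (n.sum fun φ z => z • (φ : G →+ 𝕋)) ∈ S :=
          AddSubgroup.sum_mem S fun φ _ => AddSubgroup.zsmul_mem S φ.2 _
        have hψH : ∀ h ∈ H, (n.sum fun φ z => z • (φ : G →+ 𝕋)) h = 0 := by
          intro h hh
          rw [← pair_eHom]
          exact hn (eHom S h) (AddSubgroup.le_topologicalClosure _
            (AddSubgroup.mem_map.mpr ⟨h, hh, rfl⟩))
        have := hxN _ hψS hψH
        rw [← pair_eHom] at this
        exact this
    have : (KA : Set (S → 𝕋)) = closure ↑(AddSubgroup.map (eHom S) H) :=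
      AddSubgroup.topologicalClosure_coe
    rw [← AddSubgroup.coe_map]
    exact this ▸ hmem

lemma closure_dual (H : AddSubgroup G) (S : AddSubgroup (G →+ 𝕋)) :
    @closure _ (dualTop G) {φ : G →+ 𝕋 | φ ∈ S ∧ ∀ h ∈ H, φ h = 0}
      = {χ : G →+ 𝕋 | ∀ x : G, (∀ φ ∈ S, (∀ h ∈ H, φ h = 0) → φ x = 0) → χ x = 0} := by
  have hind : ∀ (χ : G →+ 𝕋) (s : Set (G →+ 𝕋)),
      χ ∈ @closure _ (dualTop G) s ↔ ⇑χ ∈ closure ((fun φ : G →+ 𝕋 => ⇑φ) '' s) := by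
    intro χ s
    rw [dualTop]
    exact closure_induced
  apply subset_antisymm
  · intro χ hχ x hx
    rw [hind] at hχ
    have hC : IsClosed {f : G → 𝕋 | f x = 0} :=
      IsClosed.preimage (continuous_apply x) isClosed_singleton
    have hsub : ((fun φ : G →+ 𝕋 => ⇑φ) '' {φ | φ ∈ S ∧ ∀ h ∈ H, φ h = 0})
        ⊆ {f : G → 𝕋 | f x = 0} := by
      rintro _ ⟨φ, ⟨hφS, hφH⟩, rfl⟩
      exact hx φ hφS hφH
    exact closure_minimal hsub hC hχ
  · intro χ hχ
    rw [hind]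
    set T' : AddSubgroup (G →+ 𝕋) := S ⊓ annih H with hT'
    have hTset : {φ : G →+ 𝕋 | φ ∈ S ∧ ∀ h ∈ H, φ h = 0} = (T' : Set (G →+ 𝕋)) := by
      ext φ
      simp [hT', AddSubgroup.mem_inf, annih]
    set KB : AddSubgroup (G → 𝕋) := (AddSubgroup.map (coeHom G) T').topologicalClosure with hKB
    have hmem : ⇑χ ∈ KB := by
      apply mem_of_forall_char KB
      · exact AddSubgroup.isClosed_topologicalClosure _
      · intro n hn
        have hstar : ∀ φ : G →+ 𝕋, φ ∈ T' → φ (n.sum fun g z => z • g) = 0 := by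
          intro φ hφ
          rw [← pair_hom]
          exact hn ⇑φ (AddSubgroup.le_topologicalClosure _
            (AddSubgroup.mem_map.mpr ⟨φ, hφ, rfl⟩))
        have hxprop : ∀ φ ∈ S, (∀ h ∈ H, φ h = 0) → φ (n.sum fun g z => z • g) = 0 := by
          intro φ hφS hφH
          exact hstar φ (by rw [hT']; exact ⟨hφS, hφH⟩)
        have := hχ _ hxprop
        rw [← pair_hom] at this
        exact this
    have hKBcoe : (KB : Set (G → 𝕋)) = closure ↑(AddSubgroup.map (coeHom G) T') :=
      AddSubgroup.topologicalClosure_coe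
    have himg : (fun φ : G →+ 𝕋 => ⇑φ) '' {φ | φ ∈ S ∧ ∀ h ∈ H, φ h = 0}
        = ↑(AddSubgroup.map (coeHom G) T') := by
      rw [AddSubgroup.coe_map, hTset]
      rfl
    rw [himg, ← hKBcoe]
    exact hmem


end Stmt8Aux

theorem stmt8 {G : Type*} [AddCommGroup G] (H : AddSubgroup G)
    (S : AddSubgroup (G →+ AddCircle (1 : ℝ))) :
    @IsClosed G (tauS S) (H : Set G) ↔
      {φ : G →+ AddCircle (1 : ℝ) | ∀ h ∈ H, φ h = 0} =
        @closure _ (dualTop G) {φ : G →+ AddCircle (1 : ℝ) | φ ∈ S ∧ ∀ h ∈ H, φ h = 0} := by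
  constructor
  · intro hcl
    have hNH : {x : G | ∀ φ ∈ S, (∀ h ∈ H, φ h = 0) → φ x = 0} = (H : Set G) := by
      letI : TopologicalSpace G := tauS S
      rw [← Stmt8Aux.closure_tauS H S]
      exact hcl.closure_eq
    have hNHiff : ∀ x : G, (∀ φ ∈ S, (∀ h ∈ H, φ h = 0) → φ x = 0) ↔ x ∈ H := by
      intro x
      constructor
      · intro hx
        have : x ∈ {x : G | ∀ φ ∈ S, (∀ h ∈ H, φ h = 0) → φ x = 0} := hx
        rw [hNH] at this
        exact this
      · intro hx φ _ hφH
        exact hφH x hx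
    rw [Stmt8Aux.closure_dual H S]
    ext χ
    simp only [Set.mem_setOf_eq]
    constructor
    · intro hχ x hx
      exact hχ x ((hNHiff x).mp hx)
    · intro hχ h hh
      exact hχ h ((hNHiff h).mpr hh)
  · intro heq
    letI : TopologicalSpace G := tauS S
    have hsub : closure (H : Set G) ⊆ ↑H := by
      rw [show closure (H : Set G) = @closure G (tauS S) ↑H from rfl,
        Stmt8Aux.closure_tauS H S]
      intro x hxN
      by_contra hxH
      obtain ⟨χ, hχH, hχx⟩ := Stmt8Aux.exists_char H x hxH
      have hχmem : χ ∈ {φ : G →+ AddCircle (1 : ℝ) | ∀ h ∈ H, φ h = 0} := hχH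
      rw [heq, Stmt8Aux.closure_dual H S] at hχmem
      exact hχx (hχmem x hxN)
    have hceq : closure (H : Set G) = ↑H := subset_antisymm hsub subset_closure
    show IsClosed (H : Set G)
    exact closure_eq_iff_isClosed.mp hceq
end

section
/- Let G be an Abelian group, H a subgroup of G, and S a subgroup of Ĝ. If A(Ĝ, H) ⊆ S, then H is closed in G_S. Conversely, if H has finite index in G and H is closed in G_S, then A(Ĝ, H) ⊆ S. -/
open scoped BigOperators
open MeasureTheory

local notation "𝕋" => AddCircle (1 : ℝ)

local instance : Fact ((0:ℝ) < 1) := ⟨one_pos⟩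

lemma torsion_repr {k : ℕ} (hk : k ≠ 0) {x : 𝕋} (hx : (k:ℤ) • x = 0) :
    ∃ j : ℤ, x = j • ((((k:ℝ)⁻¹ : ℝ)) : 𝕋) := by
  induction x using QuotientAddGroup.induction_on with
  | H r =>
    have : ((((k:ℤ) • r : ℝ)) : 𝕋) = 0 := by
      rw [← hx]; push_cast [← AddCircle.coe_zsmul]; ring_nf
    rw [AddCircle.coe_eq_zero_iff] at this
    obtain ⟨n, hn⟩ := this
    refine ⟨n, ?_⟩
    have hk' : (k:ℝ) ≠ 0 := Nat.cast_ne_zero.mpr hk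
    have h1 : (k:ℝ) * r = n := by
      have h := hn.symm
      rw [zsmul_eq_mul, zsmul_eq_mul] at h
      push_cast at h ⊢
      linarith [h]
    rw [← AddCircle.coe_zsmul]
    congr 1
    rw [zsmul_eq_mul]
    push_cast at h1 ⊢
    field_simp
    linarith [h1]

lemma torsion_gen_zero_iff {k : ℕ} (hk : k ≠ 0) (j : ℤ) :
    j • ((((k:ℝ)⁻¹ : ℝ)) : 𝕋) = 0 ↔ (k:ℤ) ∣ j := by
  rw [← AddCircle.coe_zsmul, AddCircle.coe_eq_zero_iff]
  constructor
  · rintro ⟨n, hn⟩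
    have hk' : (k:ℝ) ≠ 0 := Nat.cast_ne_zero.mpr hk
    refine ⟨n, ?_⟩
    have : (j:ℝ) = (k:ℝ) * n := by
      rw [zsmul_eq_mul, zsmul_eq_mul] at hn
      field_simp at hn
      linarith [hn]
    exact_mod_cast this
  · rintro ⟨n, rfl⟩
    refine ⟨n, ?_⟩
    have hk' : (k:ℝ) ≠ 0 := Nat.cast_ne_zero.mpr hk
    rw [zsmul_eq_mul, zsmul_eq_mul]
    push_cast
    field_simp

/-- A subgroup of the `k`-torsion of the circle is generated by one element. -/
lemma subgroup_tors_gen (R : AddSubgroup 𝕋) {k : ℕ} (hk : k ≠ 0)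
    (hR : ∀ r ∈ R, (k:ℤ) • r = 0) :
    ∃ c ∈ R, ∀ r ∈ R, ∃ j : ℤ, r = j • c := by
  set u : 𝕋 := ((((k:ℝ)⁻¹ : ℝ)) : 𝕋) with hu
  set D : AddSubgroup ℤ := R.comap (zmultiplesHom 𝕋 u) with hD
  obtain ⟨d, hd⟩ := Int.subgroup_cyclic D
  have hdD : d ∈ D := by rw [hd]; exact AddSubgroup.subset_closure rfl
  refine ⟨d • u, hdD, ?_⟩
  intro r hr
  obtain ⟨j, hj⟩ := torsion_repr hk (hR r hr)
  have hjD : j ∈ D := by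
    simp only [hD, AddSubgroup.mem_comap, zmultiplesHom_apply]
    rw [← hj]; exact hr
  rw [hd, ← AddSubgroup.zmultiples_eq_closure, AddSubgroup.mem_zmultiples_iff] at hjD
  obtain ⟨t, ht⟩ := hjD
  refine ⟨t, ?_⟩
  rw [hj, ← ht]
  simp [zsmul_eq_mul, smul_smul, hu]

lemma main_alg {R : AddSubgroup 𝕋} {c : 𝕋} {k : ℕ} (hk : k ≠ 0)
    (hck : (k:ℤ) • c = 0) (hR : ∀ r ∈ R, (k:ℤ) • r = 0)
    (hsep : ∀ j : ℤ, j • c ≠ 0 → ∃ r ∈ R, j • r ≠ 0) : c ∈ R := by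
  set u : 𝕋 := ((((k:ℝ)⁻¹ : ℝ)) : 𝕋) with hu
  set D : AddSubgroup ℤ := R.comap (zmultiplesHom 𝕋 u) with hD
  obtain ⟨d, hd⟩ := Int.subgroup_cyclic D
  have hDiff : ∀ j : ℤ, j ∈ D ↔ d ∣ j := by
    intro j
    rw [hd, ← AddSubgroup.zmultiples_eq_closure, AddSubgroup.mem_zmultiples_iff]
    constructor
    · rintro ⟨t, ht⟩; exact ⟨t, by rw [← ht, smul_eq_mul, mul_comm]⟩
    · rintro ⟨t, ht⟩; exact ⟨t, by rw [ht, smul_eq_mul, mul_comm]⟩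
  have hkD : (k:ℤ) ∈ D := by
    simp only [hD, AddSubgroup.mem_comap, zmultiplesHom_apply]
    rw [(torsion_gen_zero_iff hk (k:ℤ)).mpr dvd_rfl]
    exact R.zero_mem
  obtain ⟨j₀, hj₀⟩ := torsion_repr hk hck
  by_cases hdj : d ∣ j₀
  · have : j₀ ∈ D := (hDiff j₀).mpr hdj
    simpa [hD, AddSubgroup.mem_comap, zmultiplesHom_apply, hu, ← hj₀] using this
  · exfalso
    obtain ⟨t, htk⟩ := (hDiff (k:ℤ)).mp hkD
    have ht0 : t ≠ 0 := by
      rintro rfl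
      rw [mul_zero] at htk
      exact hk (by exact_mod_cast htk)
    have hjc : t • c ≠ 0 := by
      rw [hj₀, smul_smul]
      simp only [ne_eq, torsion_gen_zero_iff hk]
      rintro ⟨s, hs⟩
      apply hdj
      refine ⟨s, ?_⟩
      have h2 : t * j₀ = t * (d * s) := by rw [hs, htk]; ring
      exact mul_left_cancel₀ ht0 h2
    obtain ⟨r, hrR, hrt⟩ := hsep t hjc
    apply hrt
    obtain ⟨j', hj'⟩ := torsion_repr hk (hR r hrR)
    have hj'D : j' ∈ D := by
      simp only [hD, AddSubgroup.mem_comap, zmultiplesHom_apply]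
      rw [← hj']; exact hrR
    obtain ⟨s, hs⟩ := (hDiff j').mp hj'D
    rw [hj', smul_smul, torsion_gen_zero_iff hk]
    exact ⟨s, by rw [hs, htk]; ring⟩

section Separation

variable {ι : Type*} [Fintype ι]

/-- The character of `ι → 𝕋` with frequency `m : ι → ℤ`, as a continuous map to `ℂ`. -/
noncomputable def charFn (m : ι → ℤ) : C(ι → 𝕋, ℂ) :=
  ⟨fun x => (AddCircle.toCircle (∑ i, m i • x i) : ℂ),
   continuous_induced_dom.comp <| AddCircle.continuous_toCircle.comp <|
     continuous_finset_sum _ fun i _ => ((continuous_zsmul (m i)).comp (continuous_apply i))⟩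


lemma toCircle_conj (t : 𝕋) :
    (starRingEnd ℂ) (AddCircle.toCircle t : ℂ) = (AddCircle.toCircle (-t) : ℂ) := by
  have h := fourier_neg' (T := (1:ℝ)) (n := 1) (x := t)
  simp only [one_zsmul, fourier_one] at h
  rw [← h]

@[simp] lemma charFn_apply (m : ι → ℤ) (x : ι → 𝕋) :
    charFn m x = (AddCircle.toCircle (∑ i, m i • x i) : ℂ) := rfl

lemma charFn_mul (m m' : ι → ℤ) : charFn m * charFn m' = charFn (m + m') := by
  ext x
  simp only [ContinuousMap.mul_apply, charFn_apply]
  rw [← Circle.coe_mul, ← AddCircle.toCircle_add]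
  congr 2
  rw [← Finset.sum_add_distrib]
  exact Finset.sum_congr rfl fun i _ => by simp [add_zsmul]

lemma charFn_zero : (charFn (0 : ι → ℤ)) = 1 := by
  ext x
  simp [charFn_apply]

lemma charFn_star (m : ι → ℤ) : star (charFn m) = charFn (-m) := by
  ext x
  simp only [ContinuousMap.star_apply, charFn_apply]
  rw [RCLike.star_def, toCircle_conj]
  congr 2
  rw [← Finset.sum_neg_distrib]
  exact Finset.sum_congr rfl fun i _ => by simp [neg_zsmul]

lemma charFn_add_arg (m : ι → ℤ) (x y : ι → 𝕋) :
    charFn m (x + y) = charFn m x * charFn m y := by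
  simp only [charFn_apply]
  rw [← Circle.coe_mul, ← AddCircle.toCircle_add]
  congr 2
  rw [← Finset.sum_add_distrib]
  exact Finset.sum_congr rfl fun i _ => by simp [smul_add]

lemma charFn_eq_one_iff (m : ι → ℤ) (x : ι → 𝕋) :
    charFn m x = 1 ↔ ∑ i, m i • x i = 0 := by
  simp only [charFn_apply]
  rw [show (1:ℂ) = ((1 : Circle) : ℂ) by simp, Circle.coe_inj,
    ← AddCircle.toCircle_zero]
  exact ⟨fun h => AddCircle.injective_toCircle one_ne_zero h, fun h => by rw [h]⟩


theorem sep_lemma (M : AddSubgroup (ι → 𝕋)) (hM : IsClosed (M : Set (ι → 𝕋)))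
    (z : ι → 𝕋)
    (h : ∀ m : ι → ℤ, (∀ x ∈ M, ∑ i, m i • x i = 0) → ∑ i, m i • z i = 0) :
    z ∈ M := by
  classical
  by_contra hz
  -- set up Haar measure on the compact group M
  haveI : CompactSpace ↥M := isCompact_iff_compactSpace.mp hM.isCompact
  haveI : Nonempty ↥M := ⟨0⟩
  haveI : BorelSpace ↥M := inferInstanceAs (BorelSpace ((M : Set (ι → 𝕋)) : Type _))
  let μ : Measure ↥M := Measure.addHaarMeasure ⊤
  have hμuniv : μ Set.univ = 1 := by
    have := Measure.addHaarMeasure_self (K₀ := (⊤ : TopologicalSpace.PositiveCompacts ↥M))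
    rwa [TopologicalSpace.PositiveCompacts.coe_top] at this
  haveI : IsFiniteMeasure μ := ⟨by rw [hμuniv]; exact ENNReal.one_lt_top⟩
  -- the two relevant functionals
  have integr : ∀ (g : ↥M → ι → 𝕋), Continuous g → ∀ f : C(ι → 𝕋, ℂ),
      Integrable (fun a => f (g a)) μ := by
    intro g hg f
    exact (f.continuous.comp hg).integrable_of_hasCompactSupport
      (isClosed_tsupport _).isCompact
  have hcontΛ : ∀ (g : ↥M → ι → 𝕋) (hg : Continuous g),
      Continuous fun f : C(ι → 𝕋, ℂ) => ∫ a, f (g a) ∂μ := by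
    intro g hg
    have : LipschitzWith 1 fun f : C(ι → 𝕋, ℂ) => ∫ a, f (g a) ∂μ := by
      refine LipschitzWith.of_dist_le_mul ?_
      intro f₁ f₂
      rw [dist_eq_norm, ← integral_sub (integr g hg f₁) (integr g hg f₂)]
      calc ‖∫ a, (f₁ (g a) - f₂ (g a)) ∂μ‖
          ≤ dist f₁ f₂ * (μ Set.univ).toReal := by
            refine norm_integral_le_of_norm_le_const ?_
            filter_upwards with a
            rw [← ContinuousMap.sub_apply, show (f₁ - f₂) (g a) = (f₁ - f₂) (g a) from rfl]
            calc ‖(f₁ - f₂) (g a)‖ = dist (f₁ (g a)) (f₂ (g a)) := by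
                  rw [ContinuousMap.sub_apply, dist_eq_norm]
              _ ≤ dist f₁ f₂ := ContinuousMap.dist_apply_le_dist _
        _ = 1 * dist f₁ f₂ := by rw [hμuniv]; simp [mul_comm]
    exact this.continuous
  have hcont1 : Continuous fun x : ↥M => (x : ι → 𝕋) + z :=
    (continuous_subtype_val).add continuous_const
  have hcont0 : Continuous fun x : ↥M => (x : ι → 𝕋) := continuous_subtype_val
  -- all characters are in the kernel of the difference functional
  have hchar : ∀ m : ι → ℤ,
      ∫ a, charFn m ((a : ι → 𝕋) + z) ∂μ = ∫ a, charFn m (a : ι → 𝕋) ∂μ := by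
    intro m
    have hsplit : ∀ a : ↥M, charFn m ((a : ι → 𝕋) + z)
        = charFn m (a : ι → 𝕋) * charFn m z := fun a => charFn_add_arg m _ z
    simp_rw [hsplit]
    rw [integral_mul_const]
    by_cases hv : ∀ x ∈ M, ∑ i, m i • x i = 0
    · rw [(charFn_eq_one_iff m z).mpr (h m hv), mul_one]
    · push_neg at hv
      obtain ⟨x₀, hx₀M, hx₀⟩ := hv
      have hI : ∫ a, charFn m (a : ι → 𝕋) ∂μ = 0 := by
        set a₀ : ↥M := ⟨x₀, hx₀M⟩
        have inv := integral_add_left_eq_self (μ := μ)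
          (fun a : ↥M => charFn m (a : ι → 𝕋)) a₀
        have hsplit2 : ∀ a : ↥M, charFn m ((a₀ + a : ↥M) : ι → 𝕋)
            = charFn m x₀ * charFn m (a : ι → 𝕋) := by
          intro a
          rw [AddSubgroup.coe_add, charFn_add_arg]
        simp_rw [hsplit2, integral_const_mul] at inv
        have hc₀ : charFn m x₀ ≠ 1 := fun hc => hx₀ ((charFn_eq_one_iff m x₀).mp hc)
        have := sub_eq_zero.mpr inv
        rw [← sub_one_mul] at this
        rcases mul_eq_zero.mp this with h1 | h2
        · exact absurd (by linear_combination h1) hc₀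
        · exact h2
      rw [hI, zero_mul]
  -- hence all continuous functions
  have hall : ∀ f : C(ι → 𝕋, ℂ),
      ∫ a, f ((a : ι → 𝕋) + z) ∂μ = ∫ a, f (a : ι → 𝕋) ∂μ := by
    set E : Set C(ι → 𝕋, ℂ) := Set.range (charFn (ι := ι)) with hE
    have hstar : ∀ f ∈ Algebra.adjoin ℂ E, star f ∈ Algebra.adjoin ℂ E := by
      intro f hf
      induction hf using Algebra.adjoin_induction with
      | mem x hx =>
        obtain ⟨m, rfl⟩ := hx
        rw [charFn_star]
        exact Algebra.subset_adjoin ⟨-m, rfl⟩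
      | algebraMap r =>
        rw [← algebraMap_star_comm]
        exact Subalgebra.algebraMap_mem _ _
      | add x y hx hy px py => rw [star_add]; exact add_mem px py
      | mul x y hx hy px py => rw [star_mul]; exact mul_mem py px
    let SA : StarSubalgebra ℂ C(ι → 𝕋, ℂ) :=
      { Algebra.adjoin ℂ E with star_mem' := fun hf => hstar _ hf }
    -- the monoid of characters
    let Esub : Submonoid C(ι → 𝕋, ℂ) :=
      { carrier := E
        one_mem' := ⟨0, charFn_zero⟩
        mul_mem' := by rintro a b ⟨m, rfl⟩ ⟨m', rfl⟩; exact ⟨m + m', (charFn_mul m m').symm⟩ }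
    have hEclosure : (Submonoid.closure E : Set C(ι → 𝕋, ℂ)) ⊆ E :=
      Submonoid.closure_le (S := Esub).mpr subset_rfl
    have hspan : ∀ f ∈ Submodule.span ℂ ((Submonoid.closure E : Submonoid C(ι → 𝕋, ℂ)) :
        Set C(ι → 𝕋, ℂ)),
        ∫ a, f ((a : ι → 𝕋) + z) ∂μ = ∫ a, f (a : ι → 𝕋) ∂μ := by
      intro f hf
      induction hf using Submodule.span_induction with
      | mem g hg =>
        obtain ⟨m, rfl⟩ := hEclosure hg
        exact hchar m
      | zero => simp
      | add x y hx hy px py =>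
        simp_rw [ContinuousMap.add_apply]
        rw [integral_add (integr _ hcont1 x) (integr _ hcont1 y),
          integral_add (integr _ hcont0 x) (integr _ hcont0 y), px, py]
      | smul c x hx px =>
        simp_rw [ContinuousMap.smul_apply]
        rw [integral_smul, integral_smul, px]
    have hsub : ∀ f ∈ SA, ∫ a, f ((a : ι → 𝕋) + z) ∂μ = ∫ a, f (a : ι → 𝕋) ∂μ := by
      intro f hf
      refine hspan f ?_
      have : f ∈ Subalgebra.toSubmodule (Algebra.adjoin ℂ E) := hf
      rwa [Algebra.adjoin_eq_span] at this
    have hsep : SA.SeparatesPoints := by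
      intro x y hxy
      obtain ⟨i, hi⟩ := Function.ne_iff.mp hxy
      have hval : ∀ w : ι → 𝕋, charFn (fun j => if j = i then (1:ℤ) else 0) w
          = (AddCircle.toCircle (w i) : ℂ) := by
        intro w
        rw [charFn_apply]
        congr 2
        rw [show ∑ j, (if j = i then (1:ℤ) else 0) • w j = ∑ j, if j = i then w j else 0 from
          Finset.sum_congr rfl fun j _ => by split <;> simp]
        simp
      refine ⟨_, ⟨charFn (fun j => if j = i then (1:ℤ) else 0),
        Algebra.subset_adjoin ⟨_, rfl⟩, rfl⟩, ?_⟩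
      show (charFn (fun j => if j = i then (1:ℤ) else 0)) x
        ≠ (charFn (fun j => if j = i then (1:ℤ) else 0)) y
      rw [hval x, hval y]
      exact fun hc => hi (AddCircle.injective_toCircle one_ne_zero (Circle.coe_injective hc))
    have htop := ContinuousMap.starSubalgebra_topologicalClosure_eq_top_of_separatesPoints SA hsep
    intro f
    have hf : f ∈ closure (SA : Set C(ι → 𝕋, ℂ)) := by
      rw [← StarSubalgebra.topologicalClosure_coe, htop]
      trivial
    have hKc : IsClosed {f : C(ι → 𝕋, ℂ) |
        ∫ a, f ((a : ι → 𝕋) + z) ∂μ = ∫ a, f (a : ι → 𝕋) ∂μ} :=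
      isClosed_eq (hcontΛ _ hcont1) (hcontΛ _ hcont0)
    exact (hKc.closure_subset_iff.mpr hsub) hf
  -- contradiction via Urysohn
  have himg : IsClosed ((fun x : ι → 𝕋 => x + z) '' (M : Set (ι → 𝕋))) := by
    have := (Homeomorph.addRight z).isClosedMap _ hM
    simpa using this
  have hdisj : Disjoint (M : Set (ι → 𝕋)) ((fun x : ι → 𝕋 => x + z) '' (M : Set (ι → 𝕋))) := by
    rw [Set.disjoint_left]
    rintro x hxM ⟨x', hx'M, rfl⟩
    refine hz ?_
    have := M.sub_mem hxM hx'M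
    simpa using this
  obtain ⟨gU, hg0, hg1, -⟩ := exists_continuous_zero_one_of_isClosed hM himg hdisj
  set f : C(ι → 𝕋, ℂ) := ⟨fun x => (gU x : ℂ), Complex.continuous_ofReal.comp gU.continuous⟩
    with hfdef
  have h0 : ∫ a, f ((a : ↥M) : ι → 𝕋) ∂μ = 0 := by
    have hv : ∀ a : ↥M, f ((a : ↥M) : ι → 𝕋) = 0 := by
      intro a
      have := hg0 a.2
      simp only [hfdef, ContinuousMap.coe_mk]
      rw [show gU (a : ι → 𝕋) = 0 from this]
      simp
    simp_rw [hv]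
    simp
  have h1 : ∫ a, f (((a : ↥M) : ι → 𝕋) + z) ∂μ = 1 := by
    have hv : ∀ a : ↥M, f (((a : ↥M) : ι → 𝕋) + z) = 1 := by
      intro a
      have hmem : ((a : ↥M) : ι → 𝕋) + z ∈ (fun x : ι → 𝕋 => x + z) '' (M : Set (ι → 𝕋)) :=
        ⟨a, a.2, rfl⟩
      have := hg1 hmem
      simp only [hfdef, ContinuousMap.coe_mk]
      rw [show gU (((a : ↥M) : ι → 𝕋) + z) = 1 from this]
      simp
    simp_rw [hv]
    rw [integral_const, measureReal_def, hμuniv]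
    simp
  rw [hall f, h0] at h1
  exact one_ne_zero h1.symm

end Separation

noncomputable def ratCircleHom : AddCircle (1 : ℚ) →+ 𝕋 :=
  QuotientAddGroup.map _ _ (Rat.castHom ℝ).toAddMonoidHom (by
    intro x hx
    obtain ⟨n, hn⟩ := AddSubgroup.mem_zmultiples_iff.mp hx
    refine AddSubgroup.mem_comap.mpr (AddSubgroup.mem_zmultiples_iff.mpr ⟨n, ?_⟩)
    rw [← hn]
    simp [zsmul_eq_mul])

lemma ratCircleHom_eq_zero_iff (q : AddCircle (1 : ℚ)) :
    ratCircleHom q = 0 ↔ q = 0 := by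
  constructor
  · induction q using QuotientAddGroup.induction_on with
    | H r =>
      intro hr
      have : ratCircleHom ((r : AddCircle (1:ℚ))) = (((r:ℝ)) : 𝕋) := rfl
      rw [this, AddCircle.coe_eq_zero_iff] at hr
      obtain ⟨n, hn⟩ := hr
      rw [AddCircle.coe_eq_zero_iff]
      refine ⟨n, ?_⟩
      have : ((n • (1:ℚ) : ℚ) : ℝ) = (r : ℝ) := by push_cast [zsmul_eq_mul]; simpa [zsmul_eq_mul] using hn
      exact_mod_cast this
  · rintro rfl; simp

theorem part1 {G : Type*} [AddCommGroup G] (H : AddSubgroup G)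
    (S : AddSubgroup (G →+ 𝕋))
    (hsub : {φ : G →+ 𝕋 | ∀ h ∈ H, φ h = 0} ⊆ (S : Set (G →+ 𝕋))) :
    @IsClosed G (tauS S) (H : Set G) := by
  letI := tauS S
  have hH : (H : Set G) = ⋂ φ ∈ {φ : G →+ 𝕋 | ∀ h ∈ H, φ h = 0}, (⇑φ ⁻¹' {0}) := by
    apply Set.Subset.antisymm
    · intro g hg
      exact Set.mem_iInter₂.mpr fun φ hφ => hφ g hg
    · intro g hg
      by_contra hgH
      obtain ⟨c, hc⟩ := CharacterModule.exists_character_apply_ne_zero_of_ne_zero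
        (a := QuotientAddGroup.mk (s := H) g)
        (by rwa [ne_eq, QuotientAddGroup.eq_zero_iff])
      let ψ : G →+ 𝕋 :=
        { toFun := fun x => ratCircleHom (c (QuotientAddGroup.mk (s := H) x))
          map_zero' := by simp
          map_add' := fun a b => by simp [QuotientAddGroup.mk_add, map_add] }
      have hψmem : ψ ∈ {φ : G →+ 𝕋 | ∀ h ∈ H, φ h = 0} := by
        intro h hh
        have : QuotientAddGroup.mk (s := H) h = 0 := (QuotientAddGroup.eq_zero_iff h).mpr hh
        simp only [ψ, AddMonoidHom.coe_mk, ZeroHom.coe_mk, this, map_zero]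
      have h0 := Set.mem_iInter₂.mp hg ψ hψmem
      simp only [Set.mem_preimage, Set.mem_singleton_iff] at h0
      have : c (QuotientAddGroup.mk (s := H) g) = 0 :=
        (ratCircleHom_eq_zero_iff _).mp h0
      exact hc this
  rw [hH]
  refine isClosed_biInter fun φ hφ => IsClosed.preimage ?_ isClosed_singleton
  have hle : tauS S ≤ TopologicalSpace.induced ⇑φ inferInstance :=
    iInf_le_of_le φ (iInf_le _ (hsub hφ))
  exact continuous_iff_le_induced.mpr hle

set_option maxHeartbeats 1000000 in
set_option synthInstance.maxHeartbeats 400000 in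
theorem part2 {G : Type*} [AddCommGroup G] (H : AddSubgroup G)
    (S : AddSubgroup (G →+ 𝕋)) (hindex : H.index ≠ 0)
    (hclosed : @IsClosed G (tauS S) (H : Set G)) :
    {φ : G →+ 𝕋 | ∀ h ∈ H, φ h = 0} ⊆ (S : Set (G →+ 𝕋)) := by
  classical
  letI := tauS S
  haveI htg : IsTopologicalAddGroup G := by
    show @IsTopologicalAddGroup G (⨅ φ ∈ S, TopologicalSpace.induced ⇑φ inferInstance) _
    exact topologicalAddGroup_iInf fun φ => topologicalAddGroup_iInf fun _ =>
      topologicalAddGroup_induced φ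
  haveI : H.FiniteIndex := ⟨hindex⟩
  have hopen : IsOpen (H : Set G) := H.isOpen_of_isClosed_of_finiteIndex hclosed
  -- extract a finite family of characters and radii controlling membership in H
  have hnhds : (H : Set G) ∈ @nhds G (tauS S) 0 := hopen.mem_nhds H.zero_mem
  have hnhds2 : (H : Set G) ∈ ⨅ x : ↥S, Filter.comap (⇑((x : ↥S) : G →+ 𝕋)) (nhds 0) := by
    have heq : (⨅ x : ↥S, Filter.comap (⇑((x : ↥S) : G →+ 𝕋)) (nhds (0 : 𝕋)))
        = @nhds G (tauS S) 0 := by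
      rw [iInf_subtype]
      show _ = @nhds G (⨅ φ ∈ S, TopologicalSpace.induced ⇑φ inferInstance) 0
      simp only [nhds_iInf, nhds_induced, map_zero]
    rwa [heq]
  obtain ⟨I, hIfin, V, hV, hHeq⟩ := Filter.mem_iInf.mp hnhds2
  haveI : Fintype ↥I := hIfin.fintype
  set φi : ↥I → (G →+ 𝕋) := fun i => ((i : ↥S) : G →+ 𝕋) with hφi
  have hφiS : ∀ i, φi i ∈ S := fun i => ((i : ↥S)).2
  have hV' : ∀ i : ↥I, ∃ ε > 0, ∀ g : G, ‖φi i g‖ < ε → g ∈ V i := by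
    intro i
    obtain ⟨W, hW, hWV⟩ := Filter.mem_comap.mp (hV i)
    obtain ⟨ε, hε, hball⟩ := Metric.mem_nhds_iff.mp hW
    refine ⟨ε, hε, fun g hg => ?_⟩
    apply hWV
    simp only [Set.mem_preimage]
    exact hball (mem_ball_zero_iff.mpr hg)
  choose ε hε hball using hV'
  have hU : ∀ g : G, (∀ i : ↥I, ‖φi i g‖ < ε i) → g ∈ H := by
    intro g hg
    have : g ∈ ⋂ i, V i := Set.mem_iInter.mpr fun i => hball i g (hg i)
    rw [← hHeq] at this
    exact this
  -- now take a character vanishing on H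
  intro χ hχ
  set H' : AddSubgroup G := χ.ker with hH'
  have hHH' : H ≤ H' := fun h hh => AddMonoidHom.mem_ker.mpr (hχ h hh)
  have hχH' : ∀ h ∈ H', χ h = 0 := fun h hh => AddMonoidHom.mem_ker.mp hh
  -- H' is closed
  haveI : Finite (G ⧸ H) := H.finite_quotient_of_finiteIndex
  have hH'closed : IsClosed (H' : Set G) := by
    have hsat : (H' : Set G) =
        ⋃ q ∈ (QuotientAddGroup.mk '' (H' : Set G) : Set (G ⧸ H)),
          (QuotientAddGroup.mk (s := H)) ⁻¹' {q} := by
      apply Set.Subset.antisymm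
      · intro x hx
        exact Set.mem_biUnion (Set.mem_image_of_mem _ hx) rfl
      · intro x hx
        simp only [Set.mem_iUnion, Set.mem_preimage, Set.mem_singleton_iff] at hx
        obtain ⟨q, ⟨x', hx', rfl⟩, hq⟩ := hx
        have : -x' + x ∈ H := (QuotientAddGroup.eq (s := H)).mp hq.symm
        have hx2 : x = x' + (-x' + x) := by abel
        rw [hx2]
        exact H'.add_mem hx' (hHH' this)
    rw [hsat]
    refine Set.Finite.isClosed_biUnion (Set.toFinite _) fun q _ => ?_
    obtain ⟨r, rfl⟩ := QuotientAddGroup.mk_surjective q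
    have : (QuotientAddGroup.mk (s := H)) ⁻¹' {QuotientAddGroup.mk (s := H) r}
        = (fun x => -r + x) ⁻¹' (H : Set G) := by
      ext x
      simp only [Set.mem_preimage, Set.mem_singleton_iff, SetLike.mem_coe]
      exact ⟨fun hh => (QuotientAddGroup.eq (s := H)).mp hh.symm,
        fun hh => ((QuotientAddGroup.eq (s := H)).mpr hh).symm⟩
    rw [this]
    exact hclosed.preimage (continuous_const.add continuous_id)
  have hH'index : H'.index ≠ 0 := by
    intro h0
    have hdvd := AddSubgroup.index_dvd_of_le hHH'
    rw [h0] at hdvd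
    exact hindex (zero_dvd_iff.mp hdvd)
  haveI : H'.FiniteIndex := ⟨hH'index⟩
  haveI : Finite (G ⧸ H') := H'.finite_quotient_of_finiteIndex
  -- every value of χ is torsion
  set N : ℕ := H'.index with hN
  have hNg : ∀ g : G, N • g ∈ H' := by
    intro g
    have : (N : ℕ) • (QuotientAddGroup.mk (s := H') g) = 0 := by
      rw [hN, AddSubgroup.index]
      exact card_nsmul_eq_zero'
    rwa [← QuotientAddGroup.mk_nsmul, QuotientAddGroup.eq_zero_iff] at this
  have hNtors : ∀ g : G, (N:ℤ) • χ g = 0 := by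
    intro g
    rw [← map_zsmul, natCast_zsmul]
    exact hχH' _ (hNg g)
  -- the image of χ is cyclic, generated by c = χ g₀
  obtain ⟨c, hcmem, hcgen⟩ := subgroup_tors_gen χ.range hH'index
    (by rintro r ⟨g, rfl⟩; exact hNtors g)
  obtain ⟨g₀, hg₀⟩ := hcmem
  have hctor : IsOfFinAddOrder c := by
    rw [isOfFinAddOrder_iff_nsmul_eq_zero]
    exact ⟨N, Nat.pos_of_ne_zero hH'index, by
      rw [← natCast_zsmul, ← hg₀]; exact hNtors g₀⟩
  set k : ℕ := addOrderOf c with hk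
  have hk0 : k ≠ 0 := (hctor.addOrderOf_pos).ne'
  have hkc : (k:ℤ) • c = 0 := by rw [natCast_zsmul]; exact addOrderOf_nsmul_eq_zero c
  have hdvdk : ∀ j : ℤ, j • c = 0 ↔ (k:ℤ) ∣ j := fun j =>
    ⟨fun hj => addOrderOf_dvd_iff_zsmul_eq_zero.mpr hj, fun hj =>
      addOrderOf_dvd_iff_zsmul_eq_zero.mp hj⟩
  -- the evaluation homomorphism into the finite product of circles
  let Φ : G →+ (↥I → 𝕋) :=
    { toFun := fun g i => φi i g
      map_zero' := by funext i; simp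
      map_add' := fun a b => by funext i; simp }
  set M : AddSubgroup (↥I → 𝕋) := (H'.map Φ).topologicalClosure with hM
  have hMclosed : IsClosed (M : Set (↥I → 𝕋)) := AddSubgroup.isClosed_topologicalClosure _
  set y : ↥I → 𝕋 := Φ g₀ with hy
  have hMann : ∀ m : ↥I → ℤ, (∀ h' ∈ H', ∑ i, m i • φi i h' = 0) →
      (∀ x ∈ M, ∑ i, m i • x i = 0) := by
    intro m hm
    have hcont : Continuous fun x : ↥I → 𝕋 => ∑ i, m i • x i :=
      continuous_finset_sum _ fun i _ => (continuous_zsmul (m i)).comp (continuous_apply i)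
    have hcl : IsClosed {x : ↥I → 𝕋 | ∑ i, m i • x i = 0} :=
      isClosed_eq hcont continuous_const
    have hsub : ((H'.map Φ : AddSubgroup (↥I → 𝕋)) : Set (↥I → 𝕋)) ⊆
        {x | ∑ i, m i • x i = 0} := by
      rintro x ⟨h', hh', rfl⟩
      exact hm h' hh'
    intro x hx
    have : (M : Set (↥I → 𝕋)) ⊆ {x | ∑ i, m i • x i = 0} := by
      have := closure_minimal hsub hcl
      intro w hw
      exact this hw
    exact this hx
  -- separation: if j • g₀ ∉ H' then j • y ∉ M
  have hjyM : ∀ j : ℤ, j • g₀ ∉ H' → j • y ∉ M := by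
    intro j hj hmem
    have hclos : (j • y) ∈ closure ((H'.map Φ : AddSubgroup (↥I → 𝕋)) : Set (↥I → 𝕋)) := hmem
    have hopen2 : IsOpen {x : ↥I → 𝕋 | ∀ i, ‖x i - (j • y) i‖ < ε i} := by
      rw [show {x : ↥I → 𝕋 | ∀ i, ‖x i - (j • y) i‖ < ε i}
          = ⋂ i, {x : ↥I → 𝕋 | ‖x i - (j • y) i‖ < ε i} from by ext x; simp]
      refine isOpen_iInter_of_finite fun i => ?_
      have hc : Continuous fun x : ↥I → 𝕋 => ‖x i - (j • y) i‖ :=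
        ((continuous_apply i).sub continuous_const).norm
      exact isOpen_lt hc continuous_const
    obtain ⟨x, hx1, hx2⟩ := mem_closure_iff.mp hclos _ hopen2 (by intro i; simp [hε i])
    obtain ⟨h', hh', rfl⟩ := hx2
    have hgH : h' - j • g₀ ∈ H := by
      apply hU
      intro i
      have : φi i (h' - j • g₀) = Φ h' i - (j • y) i := by
        simp only [map_sub, map_zsmul]
        rfl
      rw [this]
      exact hx1 i
    exact hj (by
      have : j • g₀ = h' - (h' - j • g₀) := by abel
      rw [this]
      exact H'.sub_mem hh' (hHH' hgH))
  -- the subgroup of "achievable" values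
  let ann : AddSubgroup (↥I → ℤ) :=
    { carrier := {m | ∀ h' ∈ H', ∑ i, m i • φi i h' = 0}
      zero_mem' := by intro h' hh'; simp
      add_mem' := by
        intro m m' hm hm' h' hh'
        have h1 := hm h' hh'
        have h2 := hm' h' hh'
        simp only [Pi.add_apply, add_zsmul]
        rw [Finset.sum_add_distrib, h1, h2, add_zero]
      neg_mem' := by
        intro m hm h' hh'
        have h1 := hm h' hh'
        simp only [Pi.neg_apply, neg_zsmul]
        rw [Finset.sum_neg_distrib, h1, neg_zero] }
  let pairing : (↥I → ℤ) →+ 𝕋 :=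
    { toFun := fun m => ∑ i, m i • y i
      map_zero' := by simp
      map_add' := fun m m' => by
        simp only [Pi.add_apply, add_zsmul]
        rw [Finset.sum_add_distrib] }
  set R : AddSubgroup 𝕋 := ann.map pairing with hR
  -- R is k-torsion
  have hkg₀ : (k:ℤ) • g₀ ∈ H' := by
    refine AddMonoidHom.mem_ker.mpr ?_
    rw [map_zsmul, hg₀, hkc]
  have hRtors : ∀ r ∈ R, (k:ℤ) • r = 0 := by
    rintro r ⟨m, hm, rfl⟩
    show (k:ℤ) • (∑ i, m i • y i) = 0
    rw [Finset.smul_sum]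
    have : ∀ i : ↥I, (k:ℤ) • (m i • y i) = m i • (φi i ((k:ℤ) • g₀)) := by
      intro i
      rw [smul_comm]
      congr 1
      rw [map_zsmul]
      rfl
    rw [Finset.sum_congr rfl fun i _ => this i]
    exact hm _ hkg₀
  -- separation gives the hypothesis of main_alg
  have hsep : ∀ j : ℤ, j • c ≠ 0 → ∃ r ∈ R, j • r ≠ 0 := by
    intro j hj
    have hjg₀ : j • g₀ ∉ H' := by
      intro hmem
      apply hj
      rw [← hg₀, ← map_zsmul]
      exact hχH' _ hmem
    have hjy : j • y ∉ M := hjyM j hjg₀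
    by_contra hcon
    push_neg at hcon
    apply hjy
    apply sep_lemma M hMclosed (j • y)
    intro m hm
    have hmann : m ∈ ann := by
      intro h' hh'
      -- from hm restricted to image elements
      exact hm (Φ h') (AddSubgroup.le_topologicalClosure _ (AddSubgroup.mem_map_of_mem _ hh'))
    have hr := hcon (pairing m) (AddSubgroup.mem_map_of_mem _ hmann)
    -- hr : j • pairing m = 0 ; transfer to the needed sum
    have : ∑ i, m i • (j • y) i = j • (∑ i, m i • y i) := by
      rw [Finset.smul_sum]
      refine Finset.sum_congr rfl fun i _ => ?_
      rw [smul_comm]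
      rfl
    rw [this]
    exact hr
  -- main_alg gives c ∈ R
  obtain ⟨m, hmann, hmc⟩ := main_alg hk0 hkc hRtors hsep
  -- the corresponding element of S
  set ξ : G →+ 𝕋 := ∑ i ∈ Finset.univ, (m i) • (φi i) with hξ
  have hξS : ξ ∈ S := by
    refine AddSubgroup.sum_mem S fun i _ => AddSubgroup.zsmul_mem S (hφiS i) (m i)
  have hξap : ∀ g : G, ξ g = ∑ i, m i • φi i g := by
    intro g
    rw [hξ, AddMonoidHom.finset_sum_apply]
    exact Finset.sum_congr rfl fun i _ => rfl
  have hχξ : χ = ξ := by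
    ext g
    obtain ⟨j, hj⟩ := hcgen (χ g) ⟨g, rfl⟩
    have hgj : g - j • g₀ ∈ H' := by
      refine AddMonoidHom.mem_ker.mpr ?_
      rw [map_sub, map_zsmul, hg₀, hj, sub_self]
    have hξH' : ∀ h' ∈ H', ξ h' = 0 := by
      intro h' hh'
      rw [hξap]
      exact hmann h' hh'
    have hξg₀ : ξ g₀ = c := by
      rw [hξap]
      exact hmc
    have : ξ g = ξ (g - j • g₀) + j • ξ g₀ := by
      rw [← map_zsmul, ← map_add]
      congr 1
      abel
    rw [this, hξH' _ hgj, hξg₀, zero_add, hj]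
  rw [hχξ]
  exact hξS

theorem stmt9 {G : Type*} [AddCommGroup G] (H : AddSubgroup G)
    (S : AddSubgroup (G →+ AddCircle (1 : ℝ))) :
    ({φ : G →+ AddCircle (1 : ℝ) | ∀ h ∈ H, φ h = 0} ⊆ (S : Set (G →+ AddCircle (1 : ℝ))) →
        @IsClosed G (tauS S) (H : Set G)) ∧
      (H.index ≠ 0 → @IsClosed G (tauS S) (H : Set G) →
        {φ : G →+ AddCircle (1 : ℝ) | ∀ h ∈ H, φ h = 0} ⊆ (S : Set (G →+ AddCircle (1 : ℝ)))) := by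
  exact ⟨part1 H S, fun hi hc => part2 H S hi hc⟩
end

section
/- Let G be an Abelian group, H a subgroup of G, and S a subgroup of Ĝ. Then the closure of H in G_S equals A(G, A(S, H)) = {g ∈ G : φ(g) = 0 for every φ ∈ S with φ(h) = 0 for all h ∈ H}. -/
section Aux
open Module Submodule Topology

open Module Submodule

/-- A non-discrete closed subgroup of a finite-dimensional real space contains a line. -/
theorem lemA {E : Type*} [NormedAddCommGroup E] [NormedSpace ℝ E] [FiniteDimensional ℝ E]
    (L : AddSubgroup E) (hL : IsClosed (L : Set E))
    (h : ∀ ε : ℝ, 0 < ε → ∃ l ∈ L, l ≠ 0 ∧ ‖l‖ < ε) :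
    ∃ u : E, u ≠ 0 ∧ ∀ t : ℝ, t • u ∈ L := by
  have hseq : ∀ n : ℕ, ∃ l : E, l ∈ L ∧ l ≠ 0 ∧ ‖l‖ < 1 / (n + 1) := by
    intro n
    obtain ⟨l, hl, hne, hlt⟩ := h (1 / (n + 1)) (by positivity)
    exact ⟨l, hl, hne, hlt⟩
  choose l hlL hlne hlnorm using hseq
  set u : ℕ → E := fun n => ‖l n‖⁻¹ • l n with hu
  have hnormpos : ∀ n, (0:ℝ) < ‖l n‖ := fun n => norm_pos_iff.2 (hlne n)
  have husphere : ∀ n, u n ∈ Metric.sphere (0:E) 1 := by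
    intro n
    simp [hu, norm_smul, abs_of_pos (inv_pos.2 (hnormpos n)),
      inv_mul_cancel₀ (hnormpos n).ne']
  obtain ⟨uL, huLmem, σ, hσmono, hσtend⟩ :=
    (isCompact_sphere (0:E) 1).tendsto_subseq husphere
  have huL : uL ≠ 0 := by
    intro h0
    rw [h0, Metric.mem_sphere, dist_zero_left] at huLmem
    simp at huLmem
  refine ⟨uL, huL, fun t => ?_⟩
  -- t • uL is the limit of (round (t / ‖l (σ n)‖)) • l (σ n)
  set k : ℕ → ℤ := fun n => round (t / ‖l (σ n)‖) with hk
  have hterm : ∀ n, (k n : ℝ) • l (σ n) = ((k n : ℝ) * ‖l (σ n)‖) • u (σ n) := by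
    intro n
    rw [hu, smul_smul, mul_assoc, mul_inv_cancel₀ (hnormpos (σ n)).ne', mul_one]
  have hscal : Filter.Tendsto (fun n => (k n : ℝ) * ‖l (σ n)‖) Filter.atTop (nhds t) := by
    have hbound : ∀ n : ℕ, ‖(k n : ℝ) * ‖l (σ n)‖ - t‖ ≤ 1 / (n + 1) := by
      intro n
      have h1 : |t / ‖l (σ n)‖ - (k n : ℝ)| ≤ 1 / 2 := by
        exact abs_sub_round (t / ‖l (σ n)‖)
      have h2 : |(k n : ℝ) * ‖l (σ n)‖ - t| = |t / ‖l (σ n)‖ - (k n : ℝ)| * ‖l (σ n)‖ := by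
        have he : (t / ‖l (σ n)‖ - (k n : ℝ)) * ‖l (σ n)‖ = t - (k n : ℝ) * ‖l (σ n)‖ := by
          rw [sub_mul, div_mul_cancel₀ _ (hnormpos (σ n)).ne']
        rw [abs_sub_comm, ← he, abs_mul, abs_of_pos (hnormpos (σ n))]
      have h3 : ‖l (σ n)‖ < 1 / (n + 1) := by
        calc ‖l (σ n)‖ < 1 / (σ n + 1) := hlnorm (σ n)
        _ ≤ 1 / (n + 1) := by
            apply one_div_le_one_div_of_le (by positivity)
            exact_mod_cast Nat.succ_le_succ hσmono.le_apply
      calc ‖(k n : ℝ) * ‖l (σ n)‖ - t‖ = |t / ‖l (σ n)‖ - (k n : ℝ)| * ‖l (σ n)‖ := by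
            rw [Real.norm_eq_abs, h2]
        _ ≤ 1 * ‖l (σ n)‖ := by
            apply mul_le_mul_of_nonneg_right (h1.trans (by norm_num)) (norm_nonneg _)
        _ ≤ 1 / (n + 1) := by rw [one_mul]; exact h3.le
    have h0 : Filter.Tendsto (fun n : ℕ => (1:ℝ) / (n + 1)) Filter.atTop (nhds 0) :=
      tendsto_one_div_add_atTop_nhds_zero_nat
    have := squeeze_zero_norm hbound h0
    have h4 : Filter.Tendsto (fun n => ((k n : ℝ) * ‖l (σ n)‖ - t) + t) Filter.atTop
        (nhds (0 + t)) := this.add tendsto_const_nhds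
    simpa using h4
  have hlim : Filter.Tendsto (fun n => (k n : ℝ) • l (σ n)) Filter.atTop (nhds (t • uL)) := by
    have := hscal.smul hσtend
    simpa only [hterm, Function.comp_apply] using this
  have hmem : ∀ n, (k n : ℝ) • l (σ n) ∈ (L : Set E) := by
    intro n
    have hz : (k n) • l (σ n) ∈ L := zsmul_mem (hlL (σ n)) (k n)
    rw [Int.cast_smul_eq_zsmul]
    exact hz
  exact hL.mem_of_tendsto hlim (Filter.Eventually.of_forall hmem)


theorem lemB {E : Type*} [NormedAddCommGroup E] [NormedSpace ℝ E] [FiniteDimensional ℝ E]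
    (L : Submodule ℤ E) [DiscreteTopology L] (y : E) (hy : y ∉ L) :
    ∃ f : E →ₗ[ℝ] ℝ, (∀ l ∈ L, ∃ n : ℤ, f l = n) ∧ ∀ n : ℤ, f y ≠ n := by
  classical
  set U : Submodule ℝ E := span ℝ (L : Set E) with hU
  obtain ⟨W, hW⟩ := Submodule.exists_isCompl U
  by_cases hyU : y ∈ U
  · -- y is in the real span of L
    set L₀ : Submodule ℤ U := L.comap ((U.subtype).restrictScalars ℤ) with hL₀
    have hmemL₀ : ∀ x : U, x ∈ L₀ ↔ (x : E) ∈ L := fun x => Iff.rfl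
    have hdisc : DiscreteTopology L₀ := by
      refine DiscreteTopology.preimage_of_continuous_injective (L : Set E) ?_
        (injective_subtype _)
      exact LinearMap.continuous_of_finiteDimensional U.subtype
    have hlat : IsZLattice ℝ L₀ := ⟨by
      rw [← (Submodule.map_injective_of_injective (injective_subtype U)).eq_iff,
        Submodule.map_span, Submodule.map_top, range_subtype]
      have h_img : U.subtype '' L₀ = L := by
        ext x
        simp only [Set.mem_image, SetLike.mem_coe]
        constructor
        · rintro ⟨⟨x, hxU⟩, hxL, rfl⟩; exact hxL
        · intro hx; exact ⟨⟨x, subset_span hx⟩, hx, rfl⟩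
      rw [show U.subtype '' (L₀ : Set U) = (L : Set E) from h_img, hU]⟩
    set b₀ := Free.chooseBasis ℤ L₀ with hb₀
    set B := b₀.ofZLatticeBasis ℝ L₀ with hB
    -- the coordinates of y in the basis B cannot all be integers
    have hx : (⟨y, hyU⟩ : U) ∉ L₀ := fun h => hy h
    have hnotall : ¬ ∀ i, ∃ n : ℤ, B.repr ⟨y, hyU⟩ i = n := by
      intro hall
      choose n hn using hall
      apply hx
      have : (⟨y, hyU⟩ : U) = ∑ i, n i • B i := by
        conv_lhs => rw [← B.sum_repr ⟨y, hyU⟩]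
        refine Finset.sum_congr rfl fun i _ => ?_
        rw [hn i, Int.cast_smul_eq_zsmul]
      have hmem2 : (∑ i, n i • B i) ∈ span ℤ (Set.range B) :=
        Submodule.sum_mem _ fun i _ =>
          Submodule.smul_mem _ (n i) (Submodule.subset_span (Set.mem_range_self i))
      rw [show (Set.range B) = Set.range (b₀.ofZLatticeBasis ℝ) from rfl,
        b₀.ofZLatticeBasis_span ℝ] at hmem2
      rw [this]
      exact hmem2
    push_neg at hnotall
    obtain ⟨i, hi⟩ := hnotall
    set pU : E →ₗ[ℝ] U := U.linearProjOfIsCompl W hW with hpU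
    refine ⟨(B.coord i) ∘ₗ pU, fun l hl => ?_, fun n hn => ?_⟩
    · have hlU : l ∈ U := subset_span hl
      have : pU l = ⟨l, hlU⟩ := Submodule.linearProjOfIsCompl_apply_left hW ⟨l, hlU⟩
      refine ⟨b₀.repr (⟨⟨l, hlU⟩, hl⟩ : L₀) i, ?_⟩
      simp only [LinearMap.coe_comp, Function.comp_apply, this, Basis.coord_apply]
      exact b₀.ofZLatticeBasis_repr_apply ℝ L₀ (⟨⟨l, hlU⟩, hl⟩ : L₀) i
    · apply hi n
      have : pU y = ⟨y, hyU⟩ := Submodule.linearProjOfIsCompl_apply_left hW ⟨y, hyU⟩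
      simpa only [LinearMap.coe_comp, Function.comp_apply, this, Basis.coord_apply] using hn
  · -- y is not in the real span of L
    have hq : U.mkQ y ≠ 0 := by
      simpa [Submodule.Quotient.mk_eq_zero] using hyU
    obtain ⟨g, hg⟩ : ∃ g : Module.Dual ℝ (E ⧸ U), g (U.mkQ y) ≠ 0 := by
      by_contra h
      push_neg at h
      exact hq ((Module.forall_dual_apply_eq_zero_iff ℝ _).1 h)
    refine ⟨(1 / (2 * g (U.mkQ y))) • (g ∘ₗ U.mkQ), fun l hl => ⟨0, ?_⟩, fun n hn => ?_⟩
    · have hlU : l ∈ U := subset_span hl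
      simp [Submodule.Quotient.mk_eq_zero, hlU, (Submodule.Quotient.mk_eq_zero U).2 hlU]
    · simp only [LinearMap.smul_apply, LinearMap.coe_comp, Function.comp_apply,
        smul_eq_mul, one_div, mul_inv] at hn
      rw [mul_assoc, inv_mul_cancel₀ hg, mul_one] at hn
      have : (1 : ℝ) = 2 * n := by
        rw [← hn]; norm_num
      have : (1 : ℤ) = 2 * n := by exact_mod_cast this
      omega


theorem lemC (n : ℕ) :
    ∀ (E : Type*) [NormedAddCommGroup E] [NormedSpace ℝ E] [FiniteDimensional ℝ E]
      (L : AddSubgroup E), IsClosed (L : Set E) → Module.finrank ℝ E ≤ n →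
      ∀ y ∉ L, ∃ f : E →ₗ[ℝ] ℝ, (∀ l ∈ L, ∃ k : ℤ, f l = k) ∧ ∀ k : ℤ, f y ≠ k := by
  induction n with
  | zero =>
    intro E _ _ _ L hL hrank y hy
    have : Module.finrank ℝ E = 0 := Nat.le_zero.1 hrank
    have : Subsingleton E := Module.finrank_zero_iff.1 this
    exact absurd (Subsingleton.elim y 0 ▸ L.zero_mem) hy
  | succ n ih =>
    intro E _ _ _ L hL hrank y hy
    by_cases hline : ∃ u : E, u ≠ 0 ∧ ∀ t : ℝ, t • u ∈ L
    · obtain ⟨u, hu0, huL⟩ := hline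
      set V : Submodule ℝ E := span ℝ {u} with hV
      obtain ⟨W, hVW⟩ := V.exists_isCompl
      set pW : E →ₗ[ℝ] W := W.linearProjOfIsCompl V hVW.symm with hpW
      have hdecomp : ∀ x : E, (V.linearProjOfIsCompl W hVW x : E) + (pW x : E) = x :=
        fun x => Submodule.projection_add_projection_eq_self hVW x
      have hVL : ∀ v ∈ V, v ∈ L := by
        intro v hv
        obtain ⟨t, rfl⟩ := Submodule.mem_span_singleton.1 hv
        exact huL t
      set LW : AddSubgroup W := L.comap W.subtype.toAddMonoidHom with hLW
      have hmemLW : ∀ w : W, w ∈ LW ↔ (w : E) ∈ L := fun w => Iff.rfl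
      have hLWclosed : IsClosed (LW : Set W) := by
        have : (LW : Set W) = (Subtype.val : W → E) ⁻¹' (L : Set E) := rfl
        rw [this]
        exact hL.preimage continuous_subtype_val
      have hpWy : pW y ∉ LW := by
        intro hmem
        apply hy
        have h1 : (V.linearProjOfIsCompl W hVW y : E) ∈ L :=
          hVL _ (V.linearProjOfIsCompl W hVW y).2
        have := AddSubgroup.add_mem L h1 ((hmemLW _).1 hmem)
        rwa [hdecomp y] at this
      have hrankW : Module.finrank ℝ W ≤ n := by
        have h1 : Module.finrank ℝ V + Module.finrank ℝ W = Module.finrank ℝ E :=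
          Submodule.finrank_add_eq_of_isCompl hVW
        have h2 : Module.finrank ℝ V = 1 := finrank_span_singleton hu0
        omega
      obtain ⟨fW, hfW1, hfW2⟩ := ih W LW hLWclosed hrankW (pW y) hpWy
      refine ⟨fW ∘ₗ pW, fun l hl => ?_, fun k hk => hfW2 k hk⟩
      have h1 : (V.linearProjOfIsCompl W hVW l : E) ∈ L :=
        hVL _ (V.linearProjOfIsCompl W hVW l).2
      have h2 : (pW l : E) ∈ L := by
        have h3 := hdecomp l
        have : (pW l : E) = l - (V.linearProjOfIsCompl W hVW l : E) := by
          rw [eq_sub_iff_add_eq, add_comm]; exact h3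
        rw [this]
        exact AddSubgroup.sub_mem L hl h1
      exact hfW1 (pW l) ((hmemLW _).2 h2)
    · -- no line: L is discrete
      have hsep : ∃ ε : ℝ, 0 < ε ∧ ∀ l ∈ L, l ≠ 0 → ε ≤ ‖l‖ := by
        by_contra h
        push_neg at h
        exact hline (lemA L hL (fun ε hε => by
          obtain ⟨l, hl, hne, hlt⟩ := h ε hε
          exact ⟨l, hl, hne, hlt⟩))
      obtain ⟨ε, hε, hsep⟩ := hsep
      set M : Submodule ℤ E := AddSubgroup.toIntSubmodule L with hM
      have hmemM : ∀ x : E, x ∈ M ↔ x ∈ L := fun x => Iff.rfl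
      have hdisc : DiscreteTopology M := by
        rw [discreteTopology_iff_isOpen_singleton_zero]
        refine ⟨Metric.ball 0 ε, Metric.isOpen_ball, ?_⟩
        ext x
        rw [Set.mem_preimage, mem_ball_zero_iff, Set.mem_singleton_iff]
        constructor
        · intro hx
          by_contra hne
          have : (x : E) ≠ 0 := fun h0 => hne (Subtype.ext h0)
          exact absurd hx (not_lt.2 (hsep (x : E) x.2 this))
        · rintro rfl
          simpa using hε
      obtain ⟨f, hf1, hf2⟩ := lemB M y hy
      exact ⟨f, fun l hl => hf1 l hl, hf2⟩


/-- The quotient map `ℝ^ι → 𝕋^ι` as an `AddMonoidHom`. -/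
noncomputable def QHom (ι : Type*) : (ι → ℝ) →+ (ι → AddCircle (1 : ℝ)) where
  toFun v i := (v i : AddCircle (1 : ℝ))
  map_zero' := by ext i; simp
  map_add' a b := by ext i; simp

theorem QHom_continuous (ι : Type*) : Continuous (QHom ι) := by
  refine continuous_pi fun i => ?_
  exact (AddCircle.continuous_mk' 1).comp (continuous_apply i)

theorem QHom_surjective (ι : Type*) : Function.Surjective (QHom ι) := by
  intro z
  have h : ∀ i, ∃ r : ℝ, (r : AddCircle (1:ℝ)) = z i :=
    fun i => Quotient.exists_rep (z i)
  choose v hv using h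
  exact ⟨v, funext hv⟩

theorem lemD {ι : Type*} [Fintype ι] (K : AddSubgroup (ι → AddCircle (1:ℝ)))
    (hK : IsClosed (K : Set (ι → AddCircle (1:ℝ)))) (x : ι → AddCircle (1:ℝ)) (hx : x ∉ K) :
    ∃ m : ι → ℤ, (∀ k ∈ K, ∑ i, m i • k i = 0) ∧ ∑ i, m i • x i ≠ 0 := by
  classical
  set Q := QHom ι with hQ
  set L : AddSubgroup (ι → ℝ) := K.comap Q with hL
  have hLclosed : IsClosed (L : Set (ι → ℝ)) := by
    have : (L : Set (ι → ℝ)) = Q ⁻¹' (K : Set (ι → AddCircle (1:ℝ))) := rfl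
    rw [this]
    exact hK.preimage (QHom_continuous ι)
  obtain ⟨y, hyx⟩ := QHom_surjective ι x
  have hyL : y ∉ L := fun h => hx (hyx ▸ h)
  obtain ⟨f, hf1, hf2⟩ := lemC (Module.finrank ℝ (ι → ℝ)) (ι → ℝ) L hLclosed le_rfl y hyL
  -- the standard basis vectors are in L
  have hsingle : ∀ i : ι, Pi.single i (1:ℝ) ∈ L := by
    intro i
    have : Q (Pi.single i (1:ℝ)) = 0 := by
      ext j
      have hQj : Q (Pi.single i (1:ℝ)) j = (((Pi.single i (1:ℝ) : ι → ℝ) j : ℝ) : AddCircle (1:ℝ)) := rfl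
      rw [hQj, Pi.zero_apply]
      by_cases hij : j = i
      · subst hij; rw [Pi.single_eq_same]; exact AddCircle.coe_period 1
      · rw [Pi.single_eq_of_ne hij]; simp
    show Q (Pi.single i (1:ℝ)) ∈ K
    rw [this]
    exact K.zero_mem
  have hm : ∀ i : ι, ∃ k : ℤ, f (Pi.single i (1:ℝ)) = k :=
    fun i => hf1 _ (hsingle i)
  choose m hmspec using hm
  -- expansion of f
  have hexp : ∀ v : ι → ℝ, f v = ∑ i, (m i : ℝ) * v i := by
    intro v
    conv_lhs => rw [show v = ∑ i, Pi.single i (v i) from (Finset.univ_sum_single v).symm]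
    rw [map_sum]
    refine Finset.sum_congr rfl fun i _ => ?_
    have : (Pi.single i (v i) : ι → ℝ) = v i • (Pi.single i (1:ℝ) : ι → ℝ) := by
      rw [← Pi.single_smul, smul_eq_mul, mul_one]
    rw [this, map_smul, smul_eq_mul, hmspec i, mul_comm]
  -- the ℝ →+ AddCircle quotient hom
  set mk1 : ℝ →+ AddCircle (1:ℝ) := QuotientAddGroup.mk' (AddSubgroup.zmultiples (1:ℝ)) with hmk1
  have hbridge : ∀ v : ι → ℝ, (∑ i, m i • (Q v) i) = mk1 (f v) := by
    intro v
    rw [hexp v, map_sum]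
    refine Finset.sum_congr rfl fun i _ => ?_
    show m i • ((v i : ℝ) : AddCircle (1:ℝ)) = mk1 ((m i : ℝ) * v i)
    have : ((m i : ℝ) * v i) = m i • v i := by
      rw [zsmul_eq_mul]
    rw [this, map_zsmul]
    rfl
  have hintcast : ∀ k : ℤ, mk1 ((k : ℝ)) = 0 := by
    intro k
    rw [show mk1 ((k : ℝ)) = (((k : ℝ)) : AddCircle (1:ℝ)) from rfl]
    rw [AddCircle.coe_eq_zero_iff]
    exact ⟨k, by rw [zsmul_eq_mul, mul_one]⟩
  refine ⟨m, fun k hk => ?_, ?_⟩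
  · obtain ⟨l, hlk⟩ := QHom_surjective ι k
    have hlL : l ∈ L := by show Q l ∈ K; rw [hlk]; exact hk
    obtain ⟨N, hN⟩ := hf1 l hlL
    rw [← hlk, hbridge l, hN, hintcast]
  · rw [← hyx, hbridge y]
    intro h0
    rw [show mk1 (f y) = ((f y : ℝ) : AddCircle (1:ℝ)) from rfl, AddCircle.coe_eq_zero_iff] at h0
    obtain ⟨n, hn⟩ := h0
    rw [zsmul_eq_mul, mul_one] at hn
    exact hf2 n hn.symm

end Aux

open Topology in
theorem stmt10 {G : Type*} [AddCommGroup G] (H : AddSubgroup G)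
    (S : AddSubgroup (G →+ AddCircle (1 : ℝ))) :
    @closure G (tauS S) (H : Set G) =
      {g : G | ∀ φ ∈ S, (∀ h ∈ H, φ h = 0) → φ g = 0} := by
  classical
  letI : TopologicalSpace G := tauS S
  ext g
  simp only [Set.mem_setOf_eq]
  constructor
  · -- easy inclusion
    intro hg φ hφ hφH
    have hle : tauS S ≤ TopologicalSpace.induced ⇑φ inferInstance :=
      iInf₂_le φ hφ
    have hcont : Continuous[tauS S, inferInstance] ⇑φ :=
      (continuous_iff_le_induced (f := ⇑φ) (t₁ := tauS S)).2 hle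
    have hker : IsClosed[tauS S] {x : G | φ x = 0} := by
      have h0 : IsClosed ({0} : Set (AddCircle (1:ℝ))) := isClosed_singleton
      exact @IsClosed.preimage G (AddCircle (1:ℝ)) (tauS S) _ ⇑φ hcont _ h0
    have hsub : (H : Set G) ⊆ {x : G | φ x = 0} := fun h hh => hφH h hh
    exact closure_minimal hsub hker hg
  · -- hard inclusion
    intro hg
    by_contra hgc
    have hgc2 : ¬ ∀ o : Set G, IsOpen[tauS S] o → g ∈ o → (o ∩ (H : Set G)).Nonempty := by
      intro hall
      exact hgc (mem_closure_iff.2 hall)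
    push_neg at hgc2
    obtain ⟨U, hUopen, hgU, hUH⟩ := hgc2
    have hUnhds : U ∈ @nhds G (tauS S) g := hUopen.mem_nhds hgU
    have hnhds : @nhds G (tauS S) g =
        ⨅ p : {φ : G →+ AddCircle (1:ℝ) // φ ∈ S},
          Filter.comap ⇑(p : G →+ AddCircle (1:ℝ)) (nhds ((p : G →+ AddCircle (1:ℝ)) g)) := by
      have h1 : tauS S = ⨅ p : {φ : G →+ AddCircle (1:ℝ) // φ ∈ S},
          TopologicalSpace.induced ⇑(p : G →+ AddCircle (1:ℝ)) inferInstance := by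
        rw [tauS, iInf_subtype]
      rw [h1, nhds_iInf]
      exact iInf_congr fun p => nhds_induced _ _
    rw [hnhds] at hUnhds
    obtain ⟨I, hIfin, V, hV, hUeq⟩ := Filter.mem_iInf.1 hUnhds
    haveI : Fintype ↥I := hIfin.fintype
    -- extract open neighborhoods
    have hVc : ∀ i : ↥I, ∃ t : Set (AddCircle (1:ℝ)),
        t ∈ nhds (((i : {φ : G →+ AddCircle (1:ℝ) // φ ∈ S}) : G →+ AddCircle (1:ℝ)) g) ∧
        ⇑((i : {φ : G →+ AddCircle (1:ℝ) // φ ∈ S}) : G →+ AddCircle (1:ℝ)) ⁻¹' t ⊆ V i :=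
      fun i => Filter.mem_comap.1 (hV i)
    choose t ht htsub using hVc
    have hOc : ∀ i : ↥I, ∃ O : Set (AddCircle (1:ℝ)), O ⊆ t i ∧ IsOpen O ∧
        ((i : {φ : G →+ AddCircle (1:ℝ) // φ ∈ S}) : G →+ AddCircle (1:ℝ)) g ∈ O :=
      fun i => mem_nhds_iff.1 (ht i)
    choose O hOsub hOopen hgO using hOc
    -- the evaluation homomorphism
    set Φ : G →+ (↥I → AddCircle (1:ℝ)) :=
      { toFun := fun a i => ((i : {φ : G →+ AddCircle (1:ℝ) // φ ∈ S}) : G →+ AddCircle (1:ℝ)) a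
        map_zero' := by ext i; simp
        map_add' := fun a b => by ext i; simp } with hΦ
    set K : AddSubgroup (↥I → AddCircle (1:ℝ)) :=
      (AddSubgroup.map Φ H).topologicalClosure with hK
    have hKclosed : IsClosed (K : Set (↥I → AddCircle (1:ℝ))) :=
      AddSubgroup.isClosed_topologicalClosure _
    have hxK : Φ g ∉ K := by
      intro hmem
      have hmem2 : Φ g ∈ closure ((AddSubgroup.map Φ H : AddSubgroup _) : Set _) := hmem
      rw [mem_closure_iff] at hmem2
      obtain ⟨z, hzO, hzH⟩ := hmem2 (Set.univ.pi fun i => O i)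
        (isOpen_set_pi Set.finite_univ fun i _ => hOopen i)
        (by intro i _; exact hgO i)
      obtain ⟨h, hh, rfl⟩ := hzH
      have hhU : h ∈ U := by
        rw [hUeq]
        refine Set.mem_iInter.2 fun i => ?_
        apply htsub i
        exact hOsub i (hzO i (Set.mem_univ i))
      exact absurd (Set.mem_inter hhU hh) (hUH ▸ Set.notMem_empty h)
    obtain ⟨m, hm1, hm2⟩ := lemD K hKclosed (Φ g) hxK
    set φs : G →+ AddCircle (1:ℝ) :=
      ∑ i : ↥I, m i • ((i : {φ : G →+ AddCircle (1:ℝ) // φ ∈ S}) : G →+ AddCircle (1:ℝ)) with hφs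
    have hφsS : φs ∈ S :=
      AddSubgroup.sum_mem S fun i _ =>
        AddSubgroup.zsmul_mem S (i : {φ : G →+ AddCircle (1:ℝ) // φ ∈ S}).2 (m i)
    have hφseval : ∀ a : G, φs a = ∑ i : ↥I, m i • Φ a i := by
      intro a
      rw [hφs, AddMonoidHom.finset_sum_apply]
      rfl
    have hvanish : ∀ h ∈ H, φs h = 0 := by
      intro h hh
      rw [hφseval]
      exact hm1 (Φ h) (AddSubgroup.le_topologicalClosure _ ⟨h, hh, rfl⟩)
    have := hg φs hφsS hvanish
    rw [hφseval] at this
    exact hm2 this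
end

section
/- Let G be an Abelian group and S a subgroup of Ĝ. Then (G, τ_S) contains no proper dense subgroup if and only if S is topologically essential in Ĝ, i.e., S ∩ L ≠ {0} for every nontrivial closed subgroup L of Ĝ. -/
local notation "𝕋" => AddCircle (1 : ℝ)

lemma coe_T_eq_zero_iff (r : ℝ) : (r : 𝕋) = 0 ↔ ∃ z : ℤ, r = (z : ℝ) := by
  rw [AddCircle.coe_eq_zero_iff]
  constructor
  · rintro ⟨z, hz⟩; exact ⟨z, by simpa using hz.symm⟩
  · rintro ⟨z, rfl⟩; exact ⟨z, by simp⟩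

lemma torsion_iff {n : ℕ} (hn : 0 < n) (t : 𝕋) :
    (n : ℤ) • t = 0 ↔ ∃ z : ℤ, t = ((z / n : ℝ) : 𝕋) := by
  obtain ⟨r, rfl⟩ := QuotientAddGroup.mk_surjective t
  have hn' : (n : ℝ) ≠ 0 := by positivity
  constructor
  · intro h
    rw [← AddCircle.coe_zsmul, coe_T_eq_zero_iff] at h
    obtain ⟨z, hz⟩ := h
    refine ⟨z, ?_⟩
    have : r = z / n := by field_simp; rw [mul_comm]; simpa [zsmul_eq_mul] using hz
    rw [this]
  · rintro ⟨z, hz⟩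
    rw [hz, ← AddCircle.coe_zsmul, coe_T_eq_zero_iff]
    exact ⟨z, by rw [zsmul_eq_mul]; push_cast; field_simp⟩

lemma closed_subgroup_T {J : AddSubgroup 𝕋} (hJ : IsClosed (J : Set 𝕋)) (hJtop : J ≠ ⊤) :
    ∃ n : ℕ, 0 < n ∧ ∀ t : 𝕋, t ∈ J ↔ (n : ℤ) • t = 0 := by
  set f : ℝ →+ 𝕋 := QuotientAddGroup.mk' (AddSubgroup.zmultiples (1:ℝ)) with hf
  have hfr : ∀ r : ℝ, f r = (r : 𝕋) := fun r => rfl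
  have hfs : Function.Surjective f := QuotientAddGroup.mk'_surjective _
  set R : AddSubgroup ℝ := J.comap f with hR
  have hRc : IsClosed (R : Set ℝ) := hJ.preimage continuous_quotient_mk'
  have hmap : R.map f = J := AddSubgroup.map_comap_eq_self_of_surjective hfs J
  rcases AddSubgroup.dense_or_cyclic R with hd | ⟨a, ha⟩
  · exfalso
    apply hJtop
    have : R = ⊤ := by
      have : (R : Set ℝ) = Set.univ := by rw [← hRc.closure_eq, hd.closure_eq]
      exact SetLike.coe_injective (by simpa using this)
    rw [← hmap, this]
    exact AddSubgroup.map_top_of_surjective f hfs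
  · rw [← AddSubgroup.zmultiples_eq_closure] at ha
    have h1R : (1:ℝ) ∈ R := by
      have h0 : ((1:ℝ) : 𝕋) = 0 := AddCircle.coe_period 1
      show f 1 ∈ J
      rw [hfr, h0]; exact J.zero_mem
    obtain ⟨z, hz⟩ : ∃ z : ℤ, z • a = 1 := by rwa [ha, AddSubgroup.mem_zmultiples_iff] at h1R
    have hzne : z ≠ 0 := by rintro rfl; simp at hz
    set n : ℕ := z.natAbs with hn
    have hnpos : 0 < n := Int.natAbs_pos.2 hzne
    have hza : (z : ℝ) * a = 1 := by rwa [zsmul_eq_mul] at hz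
    obtain ⟨ε, hε1, hεa⟩ : ∃ ε : ℤ, (ε = 1 ∨ ε = -1) ∧ (n : ℝ) * a = (ε : ℝ) := by
      rcases le_or_gt 0 z with h0 | h0
      · have hc : ((n : ℕ) : ℝ) = (z : ℝ) := by
          rw [hn, Nat.cast_natAbs]; norm_cast; exact abs_of_nonneg h0
        exact ⟨1, Or.inl rfl, by rw [hc, hza]; norm_num⟩
      · have hc : ((n : ℕ) : ℝ) = -(z : ℝ) := by
          rw [hn, Nat.cast_natAbs]; norm_cast; exact abs_of_nonpos h0.le
        exact ⟨-1, Or.inr rfl, by rw [hc]; push_cast; linarith [hza]⟩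
    have hε2 : (ε : ℝ) * (ε : ℝ) = 1 := by rcases hε1 with rfl | rfl <;> norm_num
    have hane : (n : ℝ) ≠ 0 := by positivity
    have haval : a = (ε : ℝ) / (n : ℝ) := by rw [eq_div_iff hane]; linear_combination hεa
    refine ⟨n, hnpos, fun t => ?_⟩
    constructor
    · intro ht
      obtain ⟨r, rfl⟩ := hfs t
      have hrR : r ∈ R := by rwa [AddSubgroup.mem_comap]
      obtain ⟨m, hm⟩ : ∃ m : ℤ, m • a = r := by rwa [ha, AddSubgroup.mem_zmultiples_iff] at hrR
      rw [hfr, ← AddCircle.coe_zsmul, coe_T_eq_zero_iff]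
      refine ⟨m * ε, ?_⟩
      rw [zsmul_eq_mul, ← hm, zsmul_eq_mul]
      push_cast
      linear_combination (m : ℝ) * hεa
    · intro ht
      obtain ⟨r, rfl⟩ := hfs t
      rw [hfr, ← AddCircle.coe_zsmul, coe_T_eq_zero_iff] at ht
      obtain ⟨w, hw⟩ := ht
      rw [zsmul_eq_mul] at hw; push_cast at hw
      have hr : r = (w:ℝ) / (n:ℝ) := by rw [eq_div_iff hane]; linear_combination hw
      have hmem : (w * ε) • a = r := by
        rw [zsmul_eq_mul, haval, hr]
        push_cast
        field_simp
        linear_combination (w:ℝ) * hε2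
      have hrR : r ∈ R := by rw [ha, AddSubgroup.mem_zmultiples_iff]; exact ⟨w * ε, hmem⟩
      rwa [AddSubgroup.mem_comap] at hrR

lemma endo_T (η : 𝕋 → 𝕋) (hadd : ∀ a b, η (a + b) = η a + η b) (hcont : Continuous η) :
    ∃ d : ℤ, ∀ t : 𝕋, η t = d • t := by
  set E : 𝕋 →+ 𝕋 := AddMonoidHom.mk' η hadd with hE
  have hEr : ∀ t, E t = η t := fun t => rfl
  set u : ℕ → ℝ := fun k => (2:ℝ)⁻¹ ^ k with hu
  have hupos : ∀ k, 0 < u k := fun k => by positivity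
  have hu2 : ∀ k, 2 * u (k+1) = u k := fun k => by
    simp only [hu, pow_succ]; ring
  have hu1 : ∀ k, (2:ℝ)^k * u k = 1 := fun k => by
    simp only [hu]; rw [← mul_pow]; norm_num
  set t : ℕ → 𝕋 := fun k => η ((u k : ℝ) : 𝕋) with ht
  have h2 : ∀ k, (2:ℤ) • t (k+1) = t k := by
    intro k
    show (2:ℤ) • η ((u (k+1) : ℝ) : 𝕋) = η ((u k : ℝ) : 𝕋)
    rw [← hEr, ← hEr, ← map_zsmul, ← AddCircle.coe_zsmul]
    congr 2
    rw [zsmul_eq_mul]; push_cast; exact hu2 k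
  have htor : ∀ k, ((2:ℤ)^k) • t k = 0 := by
    intro k
    show ((2:ℤ)^k) • η ((u k : ℝ) : 𝕋) = 0
    rw [← hEr, ← map_zsmul, ← AddCircle.coe_zsmul]
    have h1 : ((2:ℤ)^k : ℤ) • u k = (1:ℝ) := by
      rw [zsmul_eq_mul]; push_cast; exact hu1 k
    rw [h1]
    have h0 : ((1:ℝ) : 𝕋) = 0 := AddCircle.coe_period 1
    rw [h0, map_zero]
  have hlift : ∀ k, ∃ r : ℝ, ((r : ℝ) : 𝕋) = t k ∧ |r| = ‖t k‖ := by
    intro k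
    obtain ⟨x, hx⟩ := QuotientAddGroup.mk_surjective (t k)
    refine ⟨x - round x, ?_, ?_⟩
    · rw [AddCircle.coe_sub, ← hx]
      have : ((round x : ℝ) : 𝕋) = 0 := by
        rw [coe_T_eq_zero_iff]; exact ⟨round x, rfl⟩
      rw [this, sub_zero]
    · rw [← hx]; exact (UnitAddCircle.norm_eq).symm
  choose r hr hrn using hlift
  have hulim : Filter.Tendsto u Filter.atTop (nhds 0) := by
    simpa [hu] using tendsto_pow_atTop_nhds_zero_of_lt_one (by norm_num : (0:ℝ) ≤ 2⁻¹)
      (by norm_num : (2:ℝ)⁻¹ < 1)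
  have htlim : Filter.Tendsto t Filter.atTop (nhds 0) := by
    have h1 : Filter.Tendsto (fun k => ((u k : ℝ) : 𝕋)) Filter.atTop (nhds ((0:ℝ):𝕋)) :=
      (continuous_quotient_mk'.tendsto _).comp hulim
    have h2' := (hcont.tendsto _).comp h1
    have h3 : η (((0:ℝ) : 𝕋)) = 0 := by
      have h4 : (((0:ℝ)) : 𝕋) = 0 := by norm_num
      rw [h4, ← hEr, map_zero]
    rwa [h3] at h2'
  have hev : ∀ᶠ k in Filter.atTop, ‖t k‖ < 4⁻¹ := by
    have hn := htlim.norm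
    rw [norm_zero] at hn
    exact hn.eventually_lt_const (by norm_num)
  obtain ⟨K, hK⟩ := Filter.eventually_atTop.1 hev
  have hstep : ∀ k, K ≤ k → r k = 2 * r (k + 1) := by
    intro k hk
    have hd0 : ((2 * r (k+1) - r k : ℝ) : 𝕋) = 0 := by
      rw [AddCircle.coe_sub, hr]
      have hc : ((2 * r (k+1) : ℝ) : 𝕋) = (2:ℤ) • ((r (k+1) : ℝ) : 𝕋) := by
        rw [← AddCircle.coe_zsmul]; norm_num
      rw [hc, hr, h2, sub_self]
    obtain ⟨z, hz⟩ := (coe_T_eq_zero_iff _).1 hd0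
    have hb1 : |r k| < 4⁻¹ := by rw [hrn]; exact hK k hk
    have hb2 : |r (k+1)| < 4⁻¹ := by rw [hrn]; exact hK (k+1) (by omega)
    have hzb : |(z:ℝ)| < 1 := by
      rw [← hz]
      calc |2 * r (k+1) - r k| ≤ 2 * |r (k+1)| + |r k| := by
            have := abs_sub (2 * r (k+1)) (r k)
            calc |2 * r (k+1) - r k| ≤ |2 * r (k+1)| + |r k| := abs_sub _ _
            _ = 2 * |r (k+1)| + |r k| := by rw [abs_mul]; norm_num
        _ < 1 := by linarith
    have hz0 : z = 0 := by
      have h5 : |z| < 1 := by exact_mod_cast (by rwa [← Int.cast_abs] at hzb : ((|z|:ℤ):ℝ) < 1)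
      rw [abs_lt] at h5
      omega
    rw [hz0] at hz
    simp at hz
    linarith [hz]
  -- integer values
  have hint : ∀ k, ∃ m : ℤ, (2:ℝ)^k * r k = (m : ℝ) := by
    intro k
    rw [← coe_T_eq_zero_iff]
    have : (((2:ℝ)^k * r k : ℝ) : 𝕋) = ((2:ℤ)^k) • ((r k : ℝ) : 𝕋) := by
      rw [← AddCircle.coe_zsmul, zsmul_eq_mul]; push_cast; ring_nf
    rw [this, hr, htor]
  choose m hm using hint
  have hmconst : ∀ k, K ≤ k → m k = m K := by
    intro k hk
    induction k, hk using Nat.le_induction with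
    | base => rfl
    | succ k hk ih =>
      have : (m (k+1) : ℝ) = (m k : ℝ) := by
        rw [← hm, ← hm, hstep k hk, pow_succ]; ring
      have := Int.cast_injective (α := ℝ) this
      rw [this, ih]
  set d : ℤ := m K with hd
  have hAget : ∀ k, K ≤ k → t k = d • ((u k : ℝ) : 𝕋) := by
    intro k hk
    have hrk : r k = (d : ℝ) * u k := by
      have h1 : (2:ℝ)^k * r k = (d:ℝ) := by
        rw [hm k]; exact_mod_cast (hmconst k hk)
      have h3 := hu1 k
      linear_combination (u k) * h1 - (r k) * h3
    rw [← hr, hrk, ← AddCircle.coe_zsmul, zsmul_eq_mul]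
  have hiter : ∀ k j, t k = ((2:ℤ)^j) • t (k + j) := by
    intro k j
    induction j with
    | zero => simp
    | succ j ih =>
      rw [ih, ← h2 (k+j), pow_succ, ← Nat.add_assoc]
      rw [← smul_smul]
  have hdy : ∀ k, t k = d • ((u k : ℝ) : 𝕋) := by
    intro k
    have h1 := hiter k K
    rw [hAget (k+K) (by omega)] at h1
    have h5 : ((2:ℤ)^K) • ((u (k+K) : ℝ) : 𝕋) = ((u k : ℝ) : 𝕋) := by
      rw [← AddCircle.coe_zsmul]
      congr 1
      rw [zsmul_eq_mul]
      push_cast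
      simp only [hu, pow_add]
      have h6 : (2:ℝ)^K * (2:ℝ)⁻¹^K = 1 := by rw [← mul_pow]; norm_num
      linear_combination ((2:ℝ)⁻¹^k) * h6
    rw [h1, smul_comm ((2:ℤ)^K) d, h5]
  -- dense subset
  set A : Set ℝ := {x : ℝ | ∃ z : ℤ, ∃ k : ℕ, x = (z : ℝ) * u k} with hA
  have hAdense : Dense A := by
    rw [dense_iff_exists_between]
    intro a b hab
    obtain ⟨k, hk⟩ := exists_pow_lt_of_lt_one (by linarith : (0:ℝ) < b - a)
      (by norm_num : (2:ℝ)⁻¹ < 1)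
    refine ⟨((⌊a / u k⌋ + 1 : ℤ) : ℝ) * u k, ⟨⌊a / u k⌋ + 1, k, rfl⟩, ?_, ?_⟩
    · have h1 : a / u k < ((⌊a / u k⌋ : ℝ) + 1) := Int.lt_floor_add_one _
      have := (div_lt_iff₀ (hupos k)).1 h1
      push_cast
      linarith
    · have h1 : (⌊a / u k⌋ : ℝ) ≤ a / u k := Int.floor_le _
      have h2 : (⌊a / u k⌋ : ℝ) * u k ≤ a := by
        have := (mul_le_mul_of_nonneg_right h1 (hupos k).le)
        rwa [div_mul_cancel₀ a (hupos k).ne'] at this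
      push_cast
      have : u k < b - a := by simpa [hu] using hk
      nlinarith [hupos k]
  have hDdense : Dense (((↑) : ℝ → 𝕋) '' A) :=
    (QuotientAddGroup.mk_surjective.denseRange).dense_image continuous_quotient_mk' hAdense
  refine ⟨d, ?_⟩
  have heq : Set.EqOn η (fun x => d • x) (((↑) : ℝ → 𝕋) '' A) := by
    rintro x ⟨y, ⟨z, k, rfl⟩, rfl⟩
    have h1 : (((z:ℝ) * u k : ℝ) : 𝕋) = z • ((u k : ℝ) : 𝕋) := by
      rw [← AddCircle.coe_zsmul, zsmul_eq_mul]
    show η _ = d • _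
    rw [h1, ← hEr, map_zsmul, hEr]
    have h3 : η ((u k : ℝ) : 𝕋) = d • ((u k : ℝ) : 𝕋) := hdy k
    rw [h3, smul_comm]
  have := Continuous.ext_on hDdense hcont (continuous_zsmul d) heq
  exact fun x => congrFun this x

lemma torus_sep : ∀ (n : ℕ) (K : AddSubgroup (Fin n → 𝕋)), IsClosed (K : Set (Fin n → 𝕋)) →
    ∀ x : Fin n → 𝕋, x ∉ K →
    ∃ c : Fin n → ℤ, (∀ y ∈ K, ∑ i, c i • y i = 0) ∧ ∑ i, c i • x i ≠ 0 := by
  intro n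
  induction n with
  | zero =>
    intro K hK x hx
    have hx0 : x = 0 := funext fun i => i.elim0
    exact absurd (hx0 ▸ K.zero_mem) hx
  | succ n ih =>
    intro K hK x hx
    have hKcpt : IsCompact (K : Set (Fin (n+1) → 𝕋)) := hK.isCompact
    set J : AddSubgroup 𝕋 := K.map (Pi.evalAddMonoidHom (fun _ : Fin (n+1) => 𝕋) 0) with hJ
    have hJco : (J : Set 𝕋) = (fun y : Fin (n+1) → 𝕋 => y 0) '' (K : Set _) := by
      rw [hJ]; rfl
    have hJc : IsClosed (J : Set 𝕋) := by
      rw [hJco]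
      exact (hKcpt.image (continuous_apply 0)).isClosed
    have hymem : ∀ y, y ∈ K → y 0 ∈ J := fun y hy => ⟨y, hy, rfl⟩
    by_cases hpx : x 0 ∈ J
    · -- case: extend character from smaller torus
      obtain ⟨k, hkK, hk0⟩ : ∃ k ∈ K, k 0 = x 0 := by
        obtain ⟨k, hk, hk0⟩ := hpx; exact ⟨k, hk, hk0⟩
      set ι : (Fin n → 𝕋) →+ (Fin (n+1) → 𝕋) :=
        AddMonoidHom.mk' (fun a => Fin.cons 0 a) (by
          intro a b
          funext i
          refine Fin.cases ?_ (fun j => ?_) i <;> simp) with hι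
      have hιc : Continuous ι := by
        apply continuous_pi
        intro i
        refine Fin.cases ?_ (fun j => ?_) i
        · show Continuous fun a : Fin n → 𝕋 => (Fin.cons (0:𝕋) a : Fin (n+1) → 𝕋) 0
          simp only [Fin.cons_zero]; exact continuous_const
        · show Continuous fun a : Fin n → 𝕋 => (Fin.cons (0:𝕋) a : Fin (n+1) → 𝕋) j.succ
          simp only [Fin.cons_succ]; exact continuous_apply j
      set K₀ : AddSubgroup (Fin n → 𝕋) := K.comap ι with hK₀
      have hK₀c : IsClosed (K₀ : Set (Fin n → 𝕋)) := hK.preimage hιc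
      set x' : Fin n → 𝕋 := Fin.tail (x - k) with hx'
      have hιx' : ι x' = x - k := by
        show Fin.cons 0 (Fin.tail (x - k)) = x - k
        have h0 : (x - k) 0 = 0 := by
          rw [Pi.sub_apply, hk0, sub_self]
        conv_rhs => rw [← Fin.cons_self_tail (x - k)]
        rw [h0]
      have hx'K : x' ∉ K₀ := by
        intro h
        rw [hK₀, AddSubgroup.mem_comap, hιx'] at h
        exact hx (by simpa using K.add_mem h hkK)
      obtain ⟨c', hc'0, hc'x⟩ := ih K₀ hK₀c x' hx'K
      set ψ : (Fin (n+1) → 𝕋) →+ 𝕋 :=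
        AddMonoidHom.mk' (fun y => ∑ i, c' i • y i.succ) (by
          intro a b
          simp [smul_add, Finset.sum_add_distrib]) with hψ
      have hψplay : ∀ y, ψ y = ∑ i, c' i • y i.succ := fun y => rfl
      have hψι : ∀ a, ψ (ι a) = ∑ i, c' i • a i := by
        intro a
        rw [hψplay]
        congr 1
      have hψ0 : ∀ y ∈ K, y 0 = 0 → ψ y = 0 := by
        intro y hy h0
        have hyι : ι (Fin.tail y) = y := by
          show Fin.cons 0 (Fin.tail y) = y
          conv_rhs => rw [← Fin.cons_self_tail y]
          rw [h0]
        have : Fin.tail y ∈ K₀ := by rw [hK₀, AddSubgroup.mem_comap, hyι]; exact hy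
        rw [← hyι, hψι]
        exact hc'0 _ this
      have hψcont : Continuous ψ := by
        show Continuous fun y : Fin (n+1) → 𝕋 => ∑ i, c' i • y i.succ
        exact continuous_finset_sum _ fun i _ => (continuous_apply (i.succ : Fin (n+1))).zsmul (c' i)
      -- find d with ψ y = d • y 0 on K
      have hd : ∃ d : ℤ, ∀ y ∈ K, ψ y = d • y 0 := by
        by_cases hJt : J = ⊤
        · -- quotient map argument
          haveI : CompactSpace ↥(K : Set (Fin (n+1) → 𝕋)) := isCompact_iff_compactSpace.1 hKcpt
          set f : ↥(K : Set (Fin (n+1) → 𝕋)) → 𝕋 := fun y => (y : Fin (n+1) → 𝕋) 0 with hf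
          have hfc : Continuous f := (continuous_apply (0 : Fin (n+1))).comp continuous_subtype_val
          have hfs : Function.Surjective f := by
            intro t
            have ht : t ∈ J := hJt ▸ AddSubgroup.mem_top t
            obtain ⟨y, hy, hy0⟩ := ht
            exact ⟨⟨y, hy⟩, hy0⟩
          have hq : Topology.IsQuotientMap f := hfc.isClosedMap.isQuotientMap hfc hfs
          have hwd : ∀ y₁ y₂ : ↥(K : Set (Fin (n+1) → 𝕋)), f y₁ = f y₂ →
              ψ (y₁ : Fin (n+1) → 𝕋) = ψ (y₂ : Fin (n+1) → 𝕋) := by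
            intro y₁ y₂ hfe
            have hsub : ((y₁ : Fin (n+1) → 𝕋) - (y₂ : Fin (n+1) → 𝕋)) ∈ K := K.sub_mem y₁.2 y₂.2
            have h0 : ((y₁ : Fin (n+1) → 𝕋) - (y₂ : Fin (n+1) → 𝕋)) 0 = 0 := by
              rw [Pi.sub_apply, sub_eq_zero]; exact hfe
            have h1 := hψ0 _ hsub h0
            rw [map_sub] at h1
            exact sub_eq_zero.1 h1
          set η : 𝕋 → 𝕋 := fun s => ψ (((hfs s).choose : ↥(K : Set (Fin (n+1) → 𝕋))) : Fin (n+1) → 𝕋) with hη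
          have hηf : ∀ y : ↥(K : Set (Fin (n+1) → 𝕋)), η (f y) = ψ (y : Fin (n+1) → 𝕋) :=
            fun y => hwd _ y ((hfs (f y)).choose_spec)
          have hηadd : ∀ a b, η (a + b) = η a + η b := by
            intro a b
            obtain ⟨ya, hya⟩ := hfs a
            obtain ⟨yb, hyb⟩ := hfs b
            have hwK : ((ya : Fin (n+1) → 𝕋) + (yb : Fin (n+1) → 𝕋)) ∈ K := K.add_mem ya.2 yb.2
            have hfw : f (⟨(ya : Fin (n+1) → 𝕋) + (yb : Fin (n+1) → 𝕋), hwK⟩ :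
                ↥(K : Set (Fin (n+1) → 𝕋))) = f ya + f yb := rfl
            rw [← hya, ← hyb, ← hfw, hηf, hηf ya, hηf yb]
            exact map_add ψ _ _
          have hηc : Continuous η := by
            rw [hq.continuous_iff]
            have heq : (η ∘ f) = fun y : ↥(K : Set (Fin (n+1) → 𝕋)) => ψ (y : Fin (n+1) → 𝕋) :=
              funext hηf
            rw [heq]
            exact hψcont.comp continuous_subtype_val
          obtain ⟨d, hdd⟩ := endo_T η hηadd hηc
          refine ⟨d, fun y hy => ?_⟩
          exact (hηf ⟨y, hy⟩).symm.trans (hdd (y 0))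
        · obtain ⟨n₀, hn₀, hJtor⟩ := closed_subgroup_T hJc hJt
          have hn₀R : ((n₀:ℝ)) ≠ 0 := by positivity
          set aT : 𝕋 := (((n₀:ℝ)⁻¹ : ℝ) : 𝕋) with haT
          have hn₀a : (n₀ : ℤ) • aT = 0 := by
            rw [haT, ← AddCircle.coe_zsmul, coe_T_eq_zero_iff]
            exact ⟨1, by rw [zsmul_eq_mul]; push_cast; field_simp⟩
          have haJ : aT ∈ J := (hJtor aT).2 hn₀a
          have hmemJ : ∀ t ∈ J, ∃ z : ℤ, t = z • aT := by
            intro t ht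
            obtain ⟨z, hz⟩ := (torsion_iff hn₀ t).1 ((hJtor t).1 ht)
            refine ⟨z, ?_⟩
            rw [hz, haT, ← AddCircle.coe_zsmul]
            congr 1
            rw [zsmul_eq_mul]; field_simp
          obtain ⟨k₀, hk₀K, hk₀0⟩ := haJ
          have htors : (n₀:ℤ) • ψ k₀ = 0 := by
            rw [← map_zsmul]
            apply hψ0 _ (K.zsmul_mem hk₀K _)
            show ((n₀:ℤ) • k₀) 0 = 0
            rw [Pi.smul_apply]
            have : k₀ 0 = aT := hk₀0
            rw [this, hn₀a]
          obtain ⟨d, hdψ⟩ := (torsion_iff hn₀ (ψ k₀)).1 htors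
          have hdψ' : ψ k₀ = d • aT := by
            rw [hdψ, haT, ← AddCircle.coe_zsmul]
            congr 1
            rw [zsmul_eq_mul]; field_simp
          refine ⟨d, fun y hy => ?_⟩
          obtain ⟨z, hz⟩ := hmemJ (y 0) (hymem y hy)
          have hyz : (y - z • k₀) ∈ K := K.sub_mem hy (K.zsmul_mem hk₀K z)
          have hy0 : (y - z • k₀) 0 = 0 := by
            have hks : k₀ 0 = aT := hk₀0
            rw [Pi.sub_apply, Pi.smul_apply, hks, ← hz, sub_self]
          have h1 := hψ0 _ hyz hy0
          rw [map_sub, map_zsmul, sub_eq_zero] at h1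
          rw [h1, hdψ', hz, smul_comm]
      obtain ⟨d, hdval⟩ := hd
      refine ⟨Fin.cons (-d) c', fun y hy => ?_, ?_⟩
      · rw [Fin.sum_univ_succ]
        simp only [Fin.cons_zero, Fin.cons_succ]
        rw [← hψplay, hdval y hy, neg_smul, neg_add_cancel]
      · rw [Fin.sum_univ_succ]
        simp only [Fin.cons_zero, Fin.cons_succ]
        rw [← hψplay]
        have hψx : ψ x = ψ (x - k) + ψ k := by rw [map_sub]; abel
        have h1 : ψ (x - k) = ∑ i, c' i • x' i := by rw [← hιx', hψι]
        have h2 : ψ k = d • x 0 := by rw [hdval k hkK, hk0]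
        rw [hψx, h1, h2]
        intro hcon
        apply hc'x
        have : -d • x 0 + (∑ i, c' i • x' i + d • x 0) = ∑ i, c' i • x' i := by
          rw [neg_smul]; abel
        rwa [this] at hcon
    · -- case: kill with torsion character on coordinate 0
      have hJt : J ≠ ⊤ := fun h => hpx (h ▸ AddSubgroup.mem_top _)
      obtain ⟨n₀, hn₀, hJtor⟩ := closed_subgroup_T hJc hJt
      refine ⟨Fin.cons (n₀ : ℤ) 0, fun y hy => ?_, ?_⟩
      · rw [Fin.sum_univ_succ]
        simp only [Fin.cons_zero, Fin.cons_succ, Pi.zero_apply, zero_smul,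
          Finset.sum_const_zero, add_zero]
        exact (hJtor _).1 (hymem y hy)
      · rw [Fin.sum_univ_succ]
        simp only [Fin.cons_zero, Fin.cons_succ, Pi.zero_apply, zero_smul,
          Finset.sum_const_zero, add_zero]
        exact fun hcon => hpx ((hJtor _).2 hcon)

lemma torus_sep' {ι : Type*} [Fintype ι] (K : AddSubgroup (ι → 𝕋))
    (hK : IsClosed (K : Set (ι → 𝕋))) {x : ι → 𝕋} (hx : x ∉ K) :
    ∃ c : ι → ℤ, (∀ y ∈ K, ∑ i, c i • y i = 0) ∧ ∑ i, c i • x i ≠ 0 := by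
  classical
  set e : ι ≃ Fin (Fintype.card ι) := Fintype.equivFin ι with he
  set g' : (Fin (Fintype.card ι) → 𝕋) →+ (ι → 𝕋) :=
    AddMonoidHom.mk' (fun z i => z (e i)) (fun a b => rfl) with hg'
  have hg'c : Continuous g' := continuous_pi fun i => continuous_apply (e i)
  set K' : AddSubgroup (Fin (Fintype.card ι) → 𝕋) := K.comap g' with hK'
  have hK'c : IsClosed (K' : Set (Fin (Fintype.card ι) → 𝕋)) := hK.preimage hg'c
  set x' : Fin (Fintype.card ι) → 𝕋 := fun j => x (e.symm j) with hx'
  have hg'x : g' x' = x := by funext i; show x' (e i) = x i; rw [hx']; simp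
  have hx'K : x' ∉ K' := by
    intro h
    rw [hK', AddSubgroup.mem_comap, hg'x] at h
    exact hx h
  obtain ⟨c, hc0, hcx⟩ := torus_sep _ K' hK'c x' hx'K
  refine ⟨fun i => c (e i), fun y hy => ?_, ?_⟩
  · have hzK : (fun j => y (e.symm j)) ∈ K' := by
      rw [hK', AddSubgroup.mem_comap]
      have : g' (fun j => y (e.symm j)) = y := by funext i; show y (e.symm (e i)) = y i; simp
      rw [this]; exact hy
    have := hc0 _ hzK
    rw [← this]
    rw [← Equiv.sum_comp e (fun j => c j • y (e.symm j))]
    simp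
  · have h1 : ∑ i, c (e i) • x i = ∑ j, c j • x' j := by
      rw [← Equiv.sum_comp e (fun j => c j • x' j)]
      simp [hx']
    rw [h1]; exact hcx


lemma mem_closure_of_chars {M : Type*} [AddCommGroup M] (P : AddSubgroup (M →+ 𝕋))
    (A : AddSubgroup M) (x : M)
    (hx : ∀ ψ ∈ P, (∀ a ∈ A, ψ a = 0) → ψ x = 0) :
    x ∈ @closure M (tauS P) (A : Set M) := by
  classical
  letI t : TopologicalSpace M := tauS P
  have ht : t = ⨅ φ : ↥P, TopologicalSpace.induced ⇑(φ : M →+ 𝕋) inferInstance := by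
    show tauS P = _
    rw [tauS]
    exact (iInf_subtype'' (P : Set (M →+ 𝕋)) _).symm
  rw [mem_closure_iff_nhds]
  intro U hU
  rw [show (nhds x : Filter M) = @nhds M t x from rfl, ht, nhds_iInf] at hU
  obtain ⟨I, hIfin, V, hV, rfl⟩ := Filter.mem_iInf.mp hU
  haveI : Fintype ↥I := hIfin.fintype
  -- extract basic neighborhoods
  have hV' : ∀ i : ↥I, ∃ W : Set 𝕋, W ∈ nhds (((i : ↥P) : M →+ 𝕋) x) ∧
      (⇑((i : ↥P) : M →+ 𝕋)) ⁻¹' W ⊆ V i := by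
    intro i
    have := hV i
    rw [nhds_induced] at this
    exact Filter.mem_comap.mp this
  choose W hW hWsub using hV'
  set E : M →+ (↥I → 𝕋) := AddMonoidHom.mk' (fun m i => ((i : ↥P) : M →+ 𝕋) m)
    (fun a b => by funext i; exact map_add _ a b) with hE
  set Kc : AddSubgroup (↥I → 𝕋) := (A.map E).topologicalClosure with hKc
  have hKcc : IsClosed (Kc : Set (↥I → 𝕋)) := (A.map E).isClosed_topologicalClosure
  by_cases hmem : E x ∈ Kc
  · have hWn : Set.pi Set.univ W ∈ nhds (E x) := set_pi_mem_nhds Set.finite_univ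
      (fun i _ => hW i)
    have hclos : E x ∈ closure ((A.map E : Set (↥I → 𝕋))) := by
      have : (Kc : Set (↥I → 𝕋)) = closure (A.map E : Set (↥I → 𝕋)) :=
        AddSubgroup.topologicalClosure_coe
      rw [← this]; exact hmem
    rw [mem_closure_iff_nhds] at hclos
    obtain ⟨w, hwW, hwA⟩ := hclos (Set.pi Set.univ W) hWn
    obtain ⟨a, haA, haE⟩ := hwA
    refine ⟨a, ?_, haA⟩
    rw [Set.mem_iInter]
    intro i
    apply hWsub i
    show ((i : ↥P) : M →+ 𝕋) a ∈ W i
    have : ((i : ↥P) : M →+ 𝕋) a = w i := by rw [← haE]; rfl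
    rw [this]
    exact hwW i (Set.mem_univ i)
  · exfalso
    obtain ⟨c, hc0, hcx⟩ := torus_sep' Kc hKcc hmem
    set ψ : M →+ 𝕋 := ∑ i : ↥I, c i • ((i : ↥P) : M →+ 𝕋) with hψ
    have hψP : ψ ∈ P := by
      apply AddSubgroup.sum_mem
      intro i _
      exact AddSubgroup.zsmul_mem P (i : ↥P).2 (c i)
    have hψval : ∀ m : M, ψ m = ∑ i : ↥I, c i • (((i : ↥P) : M →+ 𝕋) m) := by
      intro m
      rw [hψ, AddMonoidHom.finset_sum_apply]
      exact Finset.sum_congr rfl fun i _ => rfl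
    have hψA : ∀ a ∈ A, ψ a = 0 := by
      intro a ha
      rw [hψval]
      have hEa : E a ∈ Kc := (A.map E).le_topologicalClosure ⟨a, ha, rfl⟩
      exact hc0 (E a) hEa
    have := hx ψ hψP hψA
    rw [hψval] at this
    exact hcx this

/-- Evaluation homomorphism into the double dual. -/
noncomputable def evHom (G : Type*) [AddCommGroup G] : G →+ ((G →+ 𝕋) →+ 𝕋) :=
  AddMonoidHom.mk' (fun g => AddMonoidHom.mk' (fun χ => χ g) (fun χ₁ χ₂ => rfl))
    (fun a b => by ext χ; exact map_add χ a b)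

lemma cont_tauS {G : Type*} [AddCommGroup G] {S : AddSubgroup (G →+ 𝕋)} {φ : G →+ 𝕋}
    (hφ : φ ∈ S) : @Continuous G 𝕋 (tauS S) _ ⇑φ := by
  letI := tauS S
  rw [continuous_iff_le_induced]
  exact iInf₂_le φ hφ

lemma tauS_dualTop (G : Type*) [AddCommGroup G] :
    tauS (evHom G).range = dualTop G := by
  apply le_antisymm
  · rw [dualTop]
    letI := tauS (evHom G).range
    rw [← continuous_iff_le_induced]
    apply continuous_pi
    intro g
    exact cont_tauS (S := (evHom G).range) (φ := evHom G g) (AddMonoidHom.mem_range.2 ⟨g, rfl⟩)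
  · rw [tauS]
    apply le_iInf₂
    intro φ hφ
    obtain ⟨g, rfl⟩ := AddMonoidHom.mem_range.1 hφ
    letI := dualTop G
    rw [← continuous_iff_le_induced]
    have h1 : @Continuous _ _ (dualTop G) _
        (fun χ : G →+ 𝕋 => (χ : G → 𝕋)) := continuous_induced_dom
    exact (continuous_apply g).comp h1

/-- Annihilator of a subgroup of characters, in `G`. -/
noncomputable def annG {G : Type*} [AddCommGroup G] (L : AddSubgroup (G →+ 𝕋)) : AddSubgroup G where
  carrier := {g | ∀ χ ∈ L, χ g = 0}
  zero_mem' := fun χ _ => map_zero χ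
  add_mem' := fun {a b} ha hb χ hχ => by rw [map_add, ha χ hχ, hb χ hχ, add_zero]
  neg_mem' := fun {a} ha χ hχ => by rw [map_neg, ha χ hχ, neg_zero]

/-- Annihilator of a subgroup of `G`, in the dual. -/
noncomputable def annD {G : Type*} [AddCommGroup G] (H : AddSubgroup G) : AddSubgroup (G →+ 𝕋) where
  carrier := {χ | ∀ h ∈ H, χ h = 0}
  zero_mem' := fun h _ => rfl
  add_mem' := fun {χ₁ χ₂} h1 h2 h hh => by
    rw [AddMonoidHom.add_apply, h1 h hh, h2 h hh, add_zero]
  neg_mem' := fun {χ} h1 h hh => by rw [AddMonoidHom.neg_apply, h1 h hh, neg_zero]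

lemma annD_closed {G : Type*} [AddCommGroup G] (H : AddSubgroup G) :
    @IsClosed _ (dualTop G) (annD H : Set (G →+ 𝕋)) := by
  letI := dualTop G
  have hrw : (annD H : Set (G →+ 𝕋)) = ⋂ h ∈ (H : Set G), (fun χ : G →+ 𝕋 => χ h) ⁻¹' {0} := by
    ext χ
    simp only [Set.mem_iInter, Set.mem_preimage, Set.mem_singleton_iff]
    rfl
  rw [hrw]
  refine isClosed_biInter fun h hh => ?_
  have hc : Continuous (fun χ : G →+ 𝕋 => χ h) :=
    (continuous_apply h).comp continuous_induced_dom
  exact isClosed_singleton.preimage hc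

lemma exists_char {A : Type*} [AddCommGroup A] {a : A} (ha : a ≠ 0) :
    ∃ χ : A →+ 𝕋, χ a ≠ 0 := by
  obtain ⟨c, hc⟩ := CharacterModule.exists_character_apply_ne_zero_of_ne_zero ha
  set f : ℚ →+ ℝ := AddMonoidHom.mk' (fun q => (q : ℝ)) (by intro x y; push_cast; ring) with hf
  have hmem : AddSubgroup.zmultiples (1:ℚ) ≤ (AddSubgroup.zmultiples (1:ℝ)).comap f := by
    intro q hq
    rw [AddSubgroup.mem_zmultiples_iff] at hq
    obtain ⟨z, hz⟩ := hq
    rw [AddSubgroup.mem_comap, AddSubgroup.mem_zmultiples_iff]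
    refine ⟨z, ?_⟩
    have hfq : f q = (q : ℝ) := rfl
    rw [hfq, ← hz, zsmul_eq_mul, zsmul_eq_mul, mul_one, mul_one]
    norm_cast
  set q2r : AddCircle (1:ℚ) →+ 𝕋 := QuotientAddGroup.map _ _ f hmem with hq
  have hker : ∀ x : AddCircle (1:ℚ), q2r x = 0 → x = 0 := by
    intro x hx
    obtain ⟨q, rfl⟩ := QuotientAddGroup.mk_surjective x
    have hxq : q2r (q : AddCircle (1:ℚ)) = ((q : ℝ) : 𝕋) := rfl
    rw [hxq, AddCircle.coe_eq_zero_iff] at hx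
    rw [show ((q : ℚ) : AddCircle (1:ℚ)) = 0 ↔ ∃ z : ℤ, z • (1:ℚ) = q from AddCircle.coe_eq_zero_iff _]
    obtain ⟨z, hz⟩ := hx
    refine ⟨z, ?_⟩
    rw [zsmul_eq_mul, mul_one] at hz ⊢
    exact_mod_cast hz
  exact ⟨q2r.comp (c : A →+ AddCircle (1:ℚ)), fun h => hc (hker _ h)⟩

theorem stmt11 {G : Type*} [AddCommGroup G]
    (S : AddSubgroup (G →+ AddCircle (1 : ℝ))) :
    (∀ H : AddSubgroup G, @Dense G (tauS S) (H : Set G) → H = ⊤) ↔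
      ∀ L : AddSubgroup (G →+ AddCircle (1 : ℝ)),
        @IsClosed _ (dualTop G) (L : Set (G →+ AddCircle (1 : ℝ))) → L ≠ ⊥ → S ⊓ L ≠ ⊥ := by
  constructor
  · intro hND L hLc hLb hSL
    have hH : ∀ x : G, x ∈ @closure G (tauS S) ((annG L : AddSubgroup G) : Set G) := by
      intro x
      apply mem_closure_of_chars
      intro ψ hψS hψA
      have hψL : ψ ∈ L := by
        have h1 : ψ ∈ @closure _ (tauS (evHom G).range) (L : Set (G →+ 𝕋)) := by
          apply mem_closure_of_chars
          intro Ψ hΨ hvan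
          obtain ⟨g, rfl⟩ := AddMonoidHom.mem_range.1 hΨ
          exact hψA g (fun χ hχ => hvan χ hχ)
        rw [tauS_dualTop] at h1
        have h2 : @closure _ (dualTop G) (L : Set (G →+ 𝕋)) = (L : Set (G →+ 𝕋)) := by
          letI := dualTop G
          exact hLc.closure_eq
        rw [h2] at h1
        exact h1
      have hmem : ψ ∈ S ⊓ L := AddSubgroup.mem_inf.2 ⟨hψS, hψL⟩
      rw [hSL, AddSubgroup.mem_bot] at hmem
      rw [hmem]
      rfl
    have hdense : @Dense G (tauS S) ((annG L : AddSubgroup G) : Set G) := hH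
    have htop := hND _ hdense
    obtain ⟨χ, hχL, hχ0⟩ : ∃ χ ∈ L, χ ≠ (0 : G →+ 𝕋) := by
      by_contra hctr
      push_neg at hctr
      exact hLb ((AddSubgroup.eq_bot_iff_forall L).2 hctr)
    obtain ⟨g, hg⟩ : ∃ g, χ g ≠ 0 := by
      by_contra hctr
      push_neg at hctr
      exact hχ0 (AddMonoidHom.ext hctr)
    have hgH : g ∈ annG L := htop ▸ AddSubgroup.mem_top g
    exact hg (hgH χ hχL)
  · intro hEss H hdense
    by_contra hne
    obtain ⟨g, hg⟩ : ∃ g, g ∉ H := by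
      by_contra hctr
      push_neg at hctr
      exact hne ((AddSubgroup.eq_top_iff' H).2 hctr)
    have hgq : (QuotientAddGroup.mk g : G ⧸ H) ≠ 0 := by
      intro h
      exact hg ((QuotientAddGroup.eq_zero_iff g).1 h)
    obtain ⟨χ₀, hχ₀⟩ := exists_char hgq
    set χ : G →+ 𝕋 := χ₀.comp (QuotientAddGroup.mk' H) with hχ
    have hχH : χ ∈ annD H := by
      intro h hh
      show χ₀ (QuotientAddGroup.mk' H h) = 0
      have : (QuotientAddGroup.mk' H) h = 0 := (QuotientAddGroup.eq_zero_iff h).2 hh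
      rw [this, map_zero]
    have hχne : χ ≠ 0 := by
      intro h
      apply hχ₀
      have : χ g = 0 := by rw [h]; rfl
      exact this
    have hLb : annD H ≠ (⊥ : AddSubgroup (G →+ 𝕋)) := by
      intro h
      rw [h, AddSubgroup.mem_bot] at hχH
      exact hχne hχH
    have hSL := hEss (annD H) (annD_closed H) hLb
    obtain ⟨ψ, hψm, hψne⟩ : ∃ ψ ∈ S ⊓ annD H, ψ ≠ (0 : G →+ 𝕋) := by
      by_contra hctr
      push_neg at hctr
      exact hSL ((AddSubgroup.eq_bot_iff_forall _).2 hctr)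
    have hψS : ψ ∈ S := (AddSubgroup.mem_inf.1 hψm).1
    have hψH : ψ ∈ annD H := (AddSubgroup.mem_inf.1 hψm).2
    letI := tauS S
    have hcont : Continuous ⇑ψ := cont_tauS hψS
    have hZ : IsClosed (⇑ψ ⁻¹' {0} : Set G) := isClosed_singleton.preimage hcont
    have hsub : (H : Set G) ⊆ ⇑ψ ⁻¹' {0} := fun h hh => hψH h hh
    have hcl : closure (H : Set G) ⊆ ⇑ψ ⁻¹' {0} := closure_minimal hsub hZ
    rw [hdense.closure_eq] at hcl
    obtain ⟨gψ, hgψ⟩ : ∃ x, ψ x ≠ 0 := by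
      by_contra hctr
      push_neg at hctr
      exact hψne (AddMonoidHom.ext hctr)
    exact hgψ (hcl (Set.mem_univ gψ))
end

section
/- Let G be a torsion-free Abelian group and let S be an essential subgroup of Ĝ, i.e., S ∩ B ≠ {0} for every nontrivial subgroup B of Ĝ. Then S is dense in Ĝ (with respect to the topology of pointwise convergence). -/
open AddCircle MeasureTheory

-- smul nonvanishing of sqrt2 in the circle
lemma sqrt2_smul_ne (n : ℤ) (hn : n ≠ 0) :
    n • ((Real.sqrt 2 : ℝ) : AddCircle (1:ℝ)) ≠ 0 := by
  intro h
  rw [← AddCircle.coe_zsmul] at h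
  rw [AddCircle.coe_eq_zero_iff] at h
  obtain ⟨k, hk⟩ := h
  have : (k : ℝ) = n * Real.sqrt 2 := by simpa using hk
  have : Real.sqrt 2 = ((k / n : ℚ) : ℝ) := by
    push_cast
    field_simp
    rw [this]; ring
  exact irrational_sqrt_two ⟨_, this.symm⟩

lemma exists_char_irrational {G : Type*} [AddCommGroup G]
    (hG : ∀ g : G, ∀ n : ℕ, 0 < n → n • g = 0 → g = 0)
    (h : G) (hh : h ≠ 0) :
    ∃ χ : G →+ AddCircle (1:ℝ), χ h = ((Real.sqrt 2 : ℝ) : AddCircle (1:ℝ)) := by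
  haveI : NoZeroSMulDivisors ℤ G := by
    constructor
    intro n g hng
    by_contra hcon
    push_neg at hcon
    obtain ⟨hn, hg⟩ := hcon
    rcases lt_trichotomy n 0 with hlt | heq | hgt
    · apply hg
      refine hG g (-n).toNat ?_ ?_
      · omega
      · have : ((-n).toNat : ℤ) = -n := by omega
        rw [← natCast_zsmul, this, neg_smul, hng, neg_zero]
    · exact hn heq
    · apply hg
      refine hG g n.toNat ?_ ?_
      · omega
      · have : ((n).toNat : ℤ) = n := by omega
        rw [← natCast_zsmul, this, hng]
  have hbaer : Module.Baer ℤ (AddCircle (1:ℝ)) := Module.Baer.of_divisible _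
  have hinj : Module.Injective ℤ (AddCircle (1:ℝ)) := hbaer.injective
  have hinj' := Module.ulift_injective_of_injective ℤ (M := AddCircle (1:ℝ)) hinj
  set α : AddCircle (1:ℝ) := ((Real.sqrt 2 : ℝ) : AddCircle (1:ℝ))
  let f : ULift.{_} ℤ →ₗ[ℤ] G :=
    (LinearMap.toSpanSingleton ℤ G h) ∘ₗ ULift.moduleEquiv.toLinearMap
  have hf : Function.Injective f := by
    intro a b hab
    have : a.down • h = b.down • h := hab
    exact ULift.ext a b (smul_left_injective ℤ hh this)
  let g : ULift.{_} ℤ →ₗ[ℤ] ULift (AddCircle (1:ℝ)) :=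
    ULift.moduleEquiv.symm.toLinearMap ∘ₗ (LinearMap.toSpanSingleton ℤ _ α) ∘ₗ
      ULift.moduleEquiv.toLinearMap
  obtain ⟨big, hbig⟩ := hinj'.out f hf g
  refine ⟨(ULift.moduleEquiv.toLinearMap ∘ₗ big).toAddMonoidHom, ?_⟩
  have := hbig (ULift.up 1)
  simp only [f, g, LinearMap.comp_apply, LinearEquiv.coe_toLinearMap, ULift.moduleEquiv] at this ⊢
  simp only [LinearMap.toSpanSingleton_apply, one_smul] at this
  have h2 : big ((1:ℤ) • h) = ULift.up ((1:ℤ) • α) := this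
  rw [one_smul, one_smul] at h2
  exact congrArg ULift.down h2

lemma separation {G : Type*} [AddCommGroup G]
    (hG : ∀ g : G, ∀ n : ℕ, 0 < n → n • g = 0 → g = 0)
    (S : AddSubgroup (G →+ AddCircle (1 : ℝ)))
    (hS : ∀ B : AddSubgroup (G →+ AddCircle (1 : ℝ)), B ≠ ⊥ → S ⊓ B ≠ ⊥)
    (h : G) (hh : h ≠ 0) : ∃ χ ∈ S, χ h ≠ 0 := by
  obtain ⟨χ₀, hχ₀⟩ := exists_char_irrational hG h hh
  set B : AddSubgroup (G →+ AddCircle (1:ℝ)) := AddSubgroup.zmultiples χ₀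
  have hB : B ≠ ⊥ := by
    intro hbot
    have : χ₀ ∈ B := AddSubgroup.mem_zmultiples χ₀
    rw [hbot, AddSubgroup.mem_bot] at this
    have := congrArg (fun ψ : G →+ AddCircle (1:ℝ) => ψ h) this
    simp only [AddMonoidHom.zero_apply, hχ₀] at this
    exact sqrt2_smul_ne 1 one_ne_zero (by simpa using this)
  have := hS B hB
  obtain ⟨⟨ξ, hξmem⟩, hξne⟩ := (AddSubgroup.ne_bot_iff_exists_ne_zero).mp this
  rw [ne_eq, AddSubgroup.mk_eq_zero] at hξne
  obtain ⟨hξS, hξB⟩ := hξmem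
  obtain ⟨n, hn⟩ := AddSubgroup.mem_zmultiples_iff.mp hξB
  refine ⟨ξ, hξS, ?_⟩
  have hn0 : n ≠ 0 := by
    rintro rfl; apply hξne; rw [← hn]; exact zero_smul ℤ χ₀
  rw [← hn]
  have : (n • χ₀) h = n • (χ₀ h) := rfl
  rw [this, hχ₀]
  exact sqrt2_smul_ne n hn0

lemma endoAddCircle (f : AddCircle (1:ℝ) →+ AddCircle (1:ℝ)) (hf : Continuous f) :
    ∃ n : ℤ, ∀ x, f x = n • x := by
  haveI : Fact (0 < (1:ℝ)) := ⟨one_pos⟩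
  let χ : C(AddCircle (1:ℝ), ℂ) := ⟨fun x => toCircle (f x), by
    exact continuous_induced_dom.comp (continuous_toCircle.comp hf)⟩
  have hχ : ∀ x, χ x = (toCircle (f x) : ℂ) := fun _ => rfl
  have hmul : ∀ x y, χ (x + y) = χ x * χ y := by
    intro x y
    simp only [hχ, map_add, toCircle_add, Circle.coe_mul]
  have key : ∀ (n : ℤ) (y : AddCircle (1:ℝ)),
      fourierCoeff (⇑χ) n * χ y = fourierCoeff (⇑χ) n * fourier n y := by
    intro n y
    have h1 : fourierCoeff (⇑χ) n * χ y
        = ∫ t, fourier (-n) t * χ (t + y) ∂haarAddCircle := by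
      rw [fourierCoeff, ← integral_mul_const]
      congr 1
      funext t
      rw [hmul t y, smul_eq_mul]
      ring
    have h2 : (∫ t, fourier (-n) t * χ (t + y) ∂haarAddCircle)
        = ∫ t, fourier (-n) (t - y) * χ t ∂haarAddCircle := by
      have := MeasureTheory.integral_add_right_eq_self
        (μ := (haarAddCircle : Measure (AddCircle (1:ℝ))))
        (fun t => fourier (-n) (t - y) * χ t) y
      rw [← this]
      congr 1
      funext t
      simp [add_sub_cancel_right]
    have h3 : ∀ t : AddCircle (1:ℝ),
        (fourier (-n) (t - y) : ℂ) = fourier (-n) t * fourier n y := by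
      intro t
      rw [fourier_apply, fourier_apply, fourier_apply, sub_eq_add_neg, smul_add,
        toCircle_add, Circle.coe_mul]
      congr 2
      rw [smul_neg, neg_zsmul, neg_neg]
    rw [h1, h2]
    calc (∫ t, fourier (-n) (t - y) * χ t ∂haarAddCircle)
        = ∫ t, (fourier (-n) t * χ t) * fourier n y ∂haarAddCircle := by
          congr 1; funext t; rw [h3 t]; ring
      _ = (∫ t, fourier (-n) t * χ t ∂haarAddCircle) * fourier n y := by
          rw [integral_mul_const]
      _ = fourierCoeff (⇑χ) n * fourier n y := by
          rw [fourierCoeff]; simp_rw [smul_eq_mul]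
  by_cases hc : ∃ n : ℤ, fourierCoeff (⇑χ) n ≠ 0
  · obtain ⟨n, hn⟩ := hc
    refine ⟨n, fun y => ?_⟩
    have := mul_left_cancel₀ hn (key n y)
    rw [hχ, fourier_apply] at this
    exact injective_toCircle one_ne_zero (Circle.coe_injective this)
  · push_neg at hc
    exfalso
    have htoLp : fourierBasis.repr (ContinuousMap.toLp 2 haarAddCircle ℂ χ) = 0 := by
      ext i
      rw [fourierBasis_repr, fourierCoeff_toLp, hc i]
      rfl
    have hLp0 : ContinuousMap.toLp 2 haarAddCircle ℂ χ = 0 := by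
      apply fourierBasis.repr.injective
      rw [htoLp, map_zero]
    have hae : ⇑χ =ᵐ[(haarAddCircle : Measure (AddCircle (1:ℝ)))] 0 := by
      have h1 := ContinuousMap.coeFn_toLp (p := 2) (μ := (haarAddCircle : Measure (AddCircle (1:ℝ)))) (𝕜 := ℂ) χ
      rw [hLp0] at h1
      exact (Lp.coeFn_zero ℂ 2 _).symm.trans h1 |>.symm
    obtain ⟨x, hx⟩ := hae.exists
    simp only [hχ, Pi.zero_apply] at hx
    exact Circle.coe_ne_zero _ hx

lemma piCharacter {k : ℕ} (ψ : (Fin k → AddCircle (1:ℝ)) →+ AddCircle (1:ℝ))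
    (hψ : Continuous ψ) :
    ∃ m : Fin k → ℤ, ∀ x, ψ x = ∑ i, m i • x i := by
  have hsingle : ∀ i : Fin k, ∃ n : ℤ, ∀ x : AddCircle (1:ℝ),
      ψ (Pi.single i x) = n • x := by
    intro i
    refine endoAddCircle (ψ.comp (AddMonoidHom.single (fun _ : Fin k => AddCircle (1:ℝ)) i)) ?_
    exact hψ.comp ((continuous_single (A := fun _ : Fin k => AddCircle (1:ℝ)) i).congr (fun x => rfl))
  choose m hm using hsingle
  refine ⟨m, fun x => ?_⟩
  have hx : x = ∑ i, Pi.single i (x i) := by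
    funext j
    simp [Finset.sum_apply, Pi.single_apply]
  calc ψ x = ψ (∑ i, Pi.single i (x i)) := by rw [← hx]
    _ = ∑ i, ψ (Pi.single i (x i)) := map_sum ψ _ _
    _ = ∑ i, m i • x i := by simp_rw [hm]

lemma circleSubgroup (E : AddSubgroup (AddCircle (1:ℝ))) :
    Dense (E : Set (AddCircle (1:ℝ))) ∨ ∃ n : ℤ, n ≠ 0 ∧ ∀ x ∈ E, n • x = 0 := by
  set p : ℝ →+ AddCircle (1:ℝ) := QuotientAddGroup.mk' (AddSubgroup.zmultiples (1:ℝ)) with hp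
  have hpc : Continuous p := continuous_quotient_mk'
  have hsurj : Function.Surjective p := QuotientAddGroup.mk'_surjective _
  set E' : AddSubgroup ℝ := E.comap p with hE'
  rcases AddSubgroup.dense_or_cyclic E' with hd | ⟨a, ha⟩
  · left
    have himg : (⇑p '' (E' : Set ℝ)) = (E : Set _) := by
      rw [show (E' : Set ℝ) = ⇑p ⁻¹' E from rfl, Set.image_preimage_eq _ hsurj]
    rw [← himg]
    exact (hsurj.denseRange).dense_image hpc hd
  · right
    have h1 : (1:ℝ) ∈ E' := by
      have : p 1 = 0 := by
        rw [hp, QuotientAddGroup.mk'_apply, QuotientAddGroup.eq_zero_iff]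
        exact AddSubgroup.mem_zmultiples 1
      simp only [hE', AddSubgroup.mem_comap, this]
      exact E.zero_mem
    rw [ha, ← AddSubgroup.zmultiples_eq_closure] at h1
    obtain ⟨n, hn⟩ := AddSubgroup.mem_zmultiples_iff.mp h1
    have hn0 : n ≠ 0 := by
      rintro rfl
      rw [zero_smul] at hn
      exact one_ne_zero hn.symm
    refine ⟨n, hn0, fun x hx => ?_⟩
    obtain ⟨r, rfl⟩ := hsurj x
    have hr : r ∈ E' := hx
    rw [ha, ← AddSubgroup.zmultiples_eq_closure] at hr
    obtain ⟨m, hm⟩ := AddSubgroup.mem_zmultiples_iff.mp hr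
    have : n • r = (m : ℝ) := by
      rw [← hm, smul_comm, hn]
      simp
    rw [← map_zsmul, this, hp, QuotientAddGroup.mk'_apply, QuotientAddGroup.eq_zero_iff]
    exact ⟨m, by simp⟩


lemma torusDense : ∀ (k : ℕ) (D : AddSubgroup (Fin k → AddCircle (1:ℝ))),
    (∀ m : Fin k → ℤ, (∀ d ∈ D, ∑ i, m i • d i = 0) → m = 0) →
    Dense (D : Set (Fin k → AddCircle (1:ℝ))) := by
  intro k
  induction k with
  | zero =>
      intro D _ x
      have : x = 0 := Subsingleton.elim x 0
      rw [this]
      exact subset_closure D.zero_mem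
  | succ k IH =>
      intro D hD
      haveI : Fact (0 < (1:ℝ)) := ⟨one_pos⟩
      set 𝕋 := AddCircle (1:ℝ)
      let pHom : (Fin (k+1) → 𝕋) →+ (Fin k → 𝕋) :=
        { toFun := fun x i => x i.castSucc
          map_zero' := rfl
          map_add' := fun _ _ => rfl }
      have hpc : Continuous pHom := continuous_pi fun i => continuous_apply _
      let e : 𝕋 →+ (Fin (k+1) → 𝕋) := AddMonoidHom.single (fun _ : Fin (k+1) => 𝕋) (Fin.last k)
      have he : ∀ (x : 𝕋) (j : Fin (k+1)), e x j = (Pi.single (M := fun _ : Fin (k+1) => 𝕋) (Fin.last k) x) j := fun _ _ => rfl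
      have hec : Continuous e :=
        (continuous_single (A := fun _ : Fin (k+1) => 𝕋) (Fin.last k)).congr fun x => rfl
      set C := D.topologicalClosure with hCdef
      have hCclosed : IsClosed (C : Set (Fin (k+1) → 𝕋)) := D.isClosed_topologicalClosure
      have hCcompact : IsCompact (C : Set (Fin (k+1) → 𝕋)) := hCclosed.isCompact
      -- the projected subgroup is dense by the IH
      set D₁ := D.map pHom with hD₁def
      have hD₁ : ∀ m : Fin k → ℤ, (∀ d₁ ∈ D₁, ∑ i, m i • d₁ i = 0) → m = 0 := by
        intro m hm
        have h0 := hD (Fin.snoc m 0) ?_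
        · funext i
          have := congrFun h0 i.castSucc
          rwa [Fin.snoc_castSucc] at this
        · intro d hd
          rw [Fin.sum_univ_castSucc]
          simp only [Fin.snoc_castSucc, Fin.snoc_last, zero_smul, add_zero]
          exact hm _ ⟨d, hd, rfl⟩
      have hdense₁ : Dense (D₁ : Set (Fin k → 𝕋)) := IH D₁ hD₁
      -- elements with zero projection are in the image of e
      have hker : ∀ z : Fin (k+1) → 𝕋, pHom z = 0 → z = e (z (Fin.last k)) := by
        intro z hz
        funext j
        refine Fin.lastCases ?_ (fun i => ?_) j
        · rw [he, Pi.single_eq_same]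
        · have := congrFun hz i
          rw [he, Pi.single_eq_of_ne (by simp [Fin.ext_iff, Fin.castSucc_lt_last i |>.ne])]
          exact this
      -- surjectivity of pHom on closed subgroups containing D's image
      have hpsurj : ∀ C' : AddSubgroup (Fin (k+1) → 𝕋), IsClosed (C' : Set (Fin (k+1) → 𝕋)) →
          (∀ d₁ ∈ D₁, d₁ ∈ ⇑pHom '' (C' : Set (Fin (k+1) → 𝕋))) →
          ∀ a : Fin k → 𝕋, ∃ c ∈ C', pHom c = a := by
        intro C' hclosed hsub a
        have hKcompact : IsCompact (⇑pHom '' (C' : Set (Fin (k+1) → 𝕋))) := (hclosed.isCompact).image hpc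
        have hKclosed : IsClosed (⇑pHom '' (C' : Set (Fin (k+1) → 𝕋))) := hKcompact.isClosed
        have : closure (D₁ : Set _) ⊆ ⇑pHom '' (C' : Set (Fin (k+1) → 𝕋)) :=
          closure_minimal (fun x hx => hsub x hx) hKclosed
        rw [hdense₁.closure_eq] at this
        obtain ⟨c, hc, hc'⟩ := this (Set.mem_univ a)
        exact ⟨c, hc, hc'⟩
      rcases circleSubgroup (C.comap e) with hE | ⟨n, hn0, hE⟩
      · -- dense case: {0}^k × 𝕋 ⊆ C, conclude density
        have hEclosed : IsClosed ((C.comap e : AddSubgroup 𝕋) : Set 𝕋) := by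
          have : ((C.comap e : AddSubgroup 𝕋) : Set 𝕋) = ⇑e ⁻¹' (C : Set (Fin (k+1) → 𝕋)) := rfl
          rw [this]
          exact hCclosed.preimage hec
        have hEuniv : ∀ b : 𝕋, e b ∈ C := by
          intro b
          have h1 : closure ((C.comap e : AddSubgroup 𝕋) : Set 𝕋) = Set.univ := hE.closure_eq
          rw [hEclosed.closure_eq] at h1
          have : b ∈ ((C.comap e : AddSubgroup 𝕋) : Set 𝕋) := h1 ▸ Set.mem_univ b
          exact this
        intro z
        have hsub : ∀ d₁ ∈ D₁, d₁ ∈ ⇑pHom '' (C : Set (Fin (k+1) → 𝕋)) := by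
          rintro d₁ ⟨d, hd, rfl⟩
          exact ⟨d, D.le_topologicalClosure hd, rfl⟩
        obtain ⟨c, hcC, hpc'⟩ := hpsurj C hCclosed hsub (pHom z)
        have hzc : pHom (z - c) = 0 := by rw [map_sub, hpc', sub_self]
        have : z - c = e ((z - c) (Fin.last k)) := hker _ hzc
        have hzC : z ∈ C := by
          have h2 : z = c + (z - c) := by abel
          rw [h2, this]
          exact C.add_mem hcC (hEuniv _)
        have hCeq : (C : Set (Fin (k+1) → 𝕋)) = closure (D : Set (Fin (k+1) → 𝕋)) :=
          AddSubgroup.topologicalClosure_coe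
        rw [← hCeq]
        exact hzC
      · -- torsion case: derive a contradiction with hD
        exfalso
        have hlc : ∀ (a : 𝕋) (b : Fin k → 𝕋) (j : Fin (k+1)),
            (Fin.lastCases a b j : 𝕋) = Fin.lastCases a b j := fun _ _ _ => rfl
        let μ : (Fin (k+1) → 𝕋) →+ (Fin (k+1) → 𝕋) :=
          { toFun := fun x j => Fin.lastCases (n • x (Fin.last k)) (fun i => x i.castSucc) j
            map_zero' := by
              funext j
              refine Fin.lastCases ?_ (fun i => ?_) j <;> simp
            map_add' := by
              intro x y
              funext j
              refine Fin.lastCases ?_ (fun i => ?_) j <;> simp [smul_add] }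
        have hμ : ∀ (x : Fin (k+1) → 𝕋) (j : Fin (k+1)),
            μ x j = Fin.lastCases (n • x (Fin.last k)) (fun i => x i.castSucc) j :=
          fun _ _ => rfl
        have hμc : Continuous μ := by
          refine continuous_pi fun j => ?_
          refine Fin.lastCases ?_ (fun i => ?_) j
          · refine ((continuous_zsmul n).comp (continuous_apply (Fin.last k))).congr fun x => ?_
            rw [hμ, Fin.lastCases_last]
            rfl
          · refine (continuous_apply (i.castSucc : Fin (k+1))).congr fun x => ?_
            rw [hμ, Fin.lastCases_castSucc]
        have hμp : ∀ x, pHom (μ x) = pHom x := by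
          intro x
          funext i
          show (μ x) i.castSucc = x i.castSucc
          rw [hμ, Fin.lastCases_castSucc]
        have hμlast : ∀ x, μ x (Fin.last k) = n • x (Fin.last k) := by
          intro x
          rw [hμ, Fin.lastCases_last]
        set C₂ := (D.map μ).topologicalClosure with hC₂def
        have hC₂closed : IsClosed (C₂ : Set (Fin (k+1) → 𝕋)) := (D.map μ).isClosed_topologicalClosure
        have hC₂eq : (C₂ : Set (Fin (k+1) → 𝕋)) = ⇑μ '' (C : Set (Fin (k+1) → 𝕋)) := by
          have h1 : (C₂ : Set (Fin (k+1) → 𝕋)) = closure (⇑μ '' (D : Set (Fin (k+1) → 𝕋))) := by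
            rw [hC₂def]
            rw [AddSubgroup.topologicalClosure_coe, AddSubgroup.coe_map]
          apply subset_antisymm
          · rw [h1]
            refine closure_minimal (Set.image_mono subset_closure) ?_
            exact (hCcompact.image hμc).isClosed
          · rw [h1]
            have hCeq2 : (C : Set (Fin (k+1) → 𝕋)) = closure (D : Set (Fin (k+1) → 𝕋)) :=
              AddSubgroup.topologicalClosure_coe
            rw [hCeq2]
            exact image_closure_subset_closure_image hμc
        -- trivial kernel of projection on C₂
        have hE₂ : ∀ x : 𝕋, e x ∈ C₂ → x = 0 := by
          intro x hx
          have : (e x : Fin (k+1) → 𝕋) ∈ ⇑μ '' (C : Set (Fin (k+1) → 𝕋)) := by rw [← hC₂eq]; exact hx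
          obtain ⟨c, hcC, hcx⟩ := this
          have hpc0 : pHom c = 0 := by
            have h1 : pHom (μ c) = pHom (e x) := by rw [hcx]
            have h2 : pHom (e x) = 0 := by
              funext i
              show e x i.castSucc = 0
              rw [he, Pi.single_eq_of_ne (by simp [Fin.ext_iff, Fin.castSucc_lt_last i |>.ne])]
            rw [hμp, h2] at h1
            exact h1
          have hc : c = e (c (Fin.last k)) := hker _ hpc0
          have hxb : x = n • c (Fin.last k) := by
            have h4 := congrFun hcx (Fin.last k)
            rw [hμlast] at h4
            have h3 : e x (Fin.last k) = x := by rw [he, Pi.single_eq_same]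
            exact (h4.trans h3).symm
          have hmem : c (Fin.last k) ∈ C.comap e := by
            show e (c (Fin.last k)) ∈ C
            rw [← hc]; exact hcC
          rw [hxb]
          exact hE _ hmem
        have hinj : ∀ z ∈ C₂, ∀ w ∈ C₂, pHom z = pHom w → z = w := by
          intro z hz w hw hpzw
          have hsub : z - w ∈ C₂ := C₂.sub_mem hz hw
          have h0 : pHom (z - w) = 0 := by rw [map_sub, hpzw, sub_self]
          have h1 : z - w = e ((z - w) (Fin.last k)) := hker _ h0
          have h2 : (z - w) (Fin.last k) = 0 := hE₂ _ (h1 ▸ hsub)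
          have : z - w = 0 := by rw [h1, h2, map_zero]
          exact sub_eq_zero.mp this
        -- pHom is bijective from C₂ to the torus
        have hsub₂ : ∀ d₁ ∈ D₁, d₁ ∈ ⇑pHom '' (C₂ : Set (Fin (k+1) → 𝕋)) := by
          rintro d₁ ⟨d, hd, rfl⟩
          refine ⟨μ d, (D.map μ).le_topologicalClosure ⟨d, hd, rfl⟩, hμp d⟩
        have hbij : Function.Bijective
            (fun c : ↥(C₂ : Set (Fin (k+1) → 𝕋)) => pHom (c : Fin (k+1) → 𝕋)) := by
          constructor
          · rintro ⟨z, hz⟩ ⟨w, hw⟩ hzw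
            exact Subtype.ext (hinj z hz w hw hzw)
          · intro a
            obtain ⟨c, hc, hc'⟩ := hpsurj C₂ hC₂closed hsub₂ a
            exact ⟨⟨c, hc⟩, hc'⟩
        haveI : CompactSpace ↥(C₂ : Set (Fin (k+1) → 𝕋)) :=
          isCompact_iff_compactSpace.mp hC₂closed.isCompact
        let F : ↥(C₂ : Set (Fin (k+1) → 𝕋)) ≃ (Fin k → 𝕋) := Equiv.ofBijective _ hbij
        have hFc : Continuous F := hpc.comp continuous_subtype_val
        let homeo := hFc.homeoOfEquivCompactToT2 (f := F)
        let ginv : (Fin k → 𝕋) → (Fin (k+1) → 𝕋) := fun a => (homeo.symm a : Fin (k+1) → 𝕋)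
        have hginv_mem : ∀ a, ginv a ∈ C₂ := fun a => (homeo.symm a).2
        have hginv_p : ∀ a, pHom (ginv a) = a := by
          intro a
          have := homeo.apply_symm_apply a
          exact this
        have hginv_eq : ∀ z ∈ C₂, ginv (pHom z) = z := by
          intro z hz
          exact hinj _ (hginv_mem _) z hz (hginv_p _)
        let ψ : (Fin k → 𝕋) →+ 𝕋 :=
          { toFun := fun a => ginv a (Fin.last k)
            map_zero' := by
              show ginv 0 (Fin.last k) = 0
              have h0 : ginv 0 = 0 := by
                have h1 := hginv_eq 0 C₂.zero_mem
                rwa [map_zero] at h1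
              rw [h0]
              rfl
            map_add' := by
              intro a b
              have hmem : ginv a + ginv b ∈ C₂ := C₂.add_mem (hginv_mem a) (hginv_mem b)
              have hab : ginv (a + b) = ginv a + ginv b := by
                refine hinj _ (hginv_mem _) _ hmem ?_
                rw [hginv_p, map_add, hginv_p, hginv_p]
              show ginv (a + b) (Fin.last k) = ginv a (Fin.last k) + ginv b (Fin.last k)
              rw [hab]
              rfl }
        have hψc : Continuous ψ :=
          (continuous_apply (Fin.last k)).comp (continuous_subtype_val.comp homeo.symm.continuous)
        obtain ⟨m, hm⟩ := piCharacter ψ hψc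
        -- every d in D satisfies the integer relation
        have hrel : ∀ d ∈ D, n • d (Fin.last k) = ∑ i, m i • d i.castSucc := by
          intro d hd
          have hμd : μ d ∈ C₂ := (D.map μ).le_topologicalClosure ⟨d, hd, rfl⟩
          have h1 : ginv (pHom (μ d)) = μ d := hginv_eq _ hμd
          have h2 : ψ (pHom (μ d)) = μ d (Fin.last k) := by
            show ginv (pHom (μ d)) (Fin.last k) = _
            rw [h1]
          rw [hμlast] at h2
          rw [← h2, hm]
          congr 1
          funext i
          rw [hμp]
          rfl
        have h0 := hD (Fin.snoc m (-n)) ?_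
        · have := congrFun h0 (Fin.last k)
          rw [Fin.snoc_last] at this
          simp only [Pi.zero_apply, neg_eq_zero] at this
          exact hn0 this
        · intro d hd
          rw [Fin.sum_univ_castSucc]
          simp only [Fin.snoc_castSucc, Fin.snoc_last]
          rw [← hrel d hd, neg_smul, add_neg_eq_zero]


lemma tf_nzsd {G : Type*} [AddCommGroup G]
    (hG : ∀ g : G, ∀ n : ℕ, 0 < n → n • g = 0 → g = 0) : NoZeroSMulDivisors ℤ G := by
  constructor
  intro n g hng
  by_contra hcon
  push_neg at hcon
  obtain ⟨hn, hg⟩ := hcon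
  rcases lt_trichotomy n 0 with hlt | heq | hgt
  · apply hg
    refine hG g (-n).toNat (by omega) ?_
    have : ((-n).toNat : ℤ) = -n := by omega
    rw [← natCast_zsmul, this, neg_smul, hng, neg_zero]
  · exact hn heq
  · apply hg
    refine hG g n.toNat (by omega) ?_
    have : ((n).toNat : ℤ) = n := by omega
    rw [← natCast_zsmul, this, hng]


theorem stmt12 {G : Type*} [AddCommGroup G]
    (hG : ∀ g : G, ∀ n : ℕ, 0 < n → n • g = 0 → g = 0)
    (S : AddSubgroup (G →+ AddCircle (1 : ℝ)))
    (hS : ∀ B : AddSubgroup (G →+ AddCircle (1 : ℝ)), B ≠ ⊥ → S ⊓ B ≠ ⊥) :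
    @Dense _ (dualTop G) (S : Set (G →+ AddCircle (1 : ℝ))) := by
  haveI : NoZeroSMulDivisors ℤ G := tf_nzsd hG
  letI : TopologicalSpace (G →+ AddCircle (1:ℝ)) :=
    TopologicalSpace.induced (fun φ : G →+ AddCircle (1:ℝ) =>
      (φ : G → AddCircle (1:ℝ))) Pi.topologicalSpace
  show Dense (S : Set (G →+ AddCircle (1 : ℝ)))
  rw [dense_iff_inter_open]
  rintro U hU ⟨φ, hφU⟩
  obtain ⟨V, hV, rfl⟩ := isOpen_induced_iff.mp hU
  have hφV : (⇑φ : G → AddCircle (1:ℝ)) ∈ V := hφU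
  obtain ⟨I, u, hu, hIV⟩ := isOpen_pi_iff.mp hV _ hφV
  -- free f.g. submodule spanned by the finitely many relevant points
  set H : Submodule ℤ G := Submodule.span ℤ (I : Set G) with hH
  haveI : Module.Finite ℤ H := Module.Finite.span_of_finite ℤ I.finite_toSet
  set ι := Module.Free.ChooseBasisIndex ℤ H with hι
  set k := Fintype.card ι with hk
  set b : Module.Basis (Fin k) ℤ H := (Module.Free.chooseBasis ℤ H).reindex (Fintype.equivFin ι)
    with hb
  -- the restriction homomorphism to the basis
  set r : (G →+ AddCircle (1:ℝ)) →+ (Fin k → AddCircle (1:ℝ)) :=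
    { toFun := fun χ i => χ (b i : G)
      map_zero' := rfl
      map_add' := fun _ _ => rfl } with hr
  set D := S.map r with hD'
  have hgmem : ∀ g ∈ I, (g : G) ∈ H := fun g hg => Submodule.subset_span hg
  have hrepr : ∀ g (hg : g ∈ I), ∀ χ : G →+ AddCircle (1:ℝ),
      χ g = ∑ i, (b.repr ⟨g, hgmem g hg⟩ i) • χ (b i : G) := by
    intro g hg χ
    have h1 : (∑ i, b.repr ⟨g, hgmem g hg⟩ i • b i : H) = ⟨g, hgmem g hg⟩ := b.sum_repr _
    have h2 : (g : G) = ∑ i, b.repr ⟨g, hgmem g hg⟩ i • (b i : G) := by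
      have h3 := congrArg (H.subtype) h1
      rw [map_sum] at h3
      simpa using h3.symm
    conv_lhs => rw [h2]
    rw [map_sum]
    congr 1
    funext i
    rw [map_zsmul]
  have hcoe : ∀ m : Fin k → ℤ, ((∑ i, m i • b i : H) : G) = ∑ i, m i • (b i : G) := by
    intro m
    rw [show ((∑ i, m i • b i : H) : G) = H.subtype (∑ i, m i • b i) from rfl, map_sum]
    rfl
  have hD : ∀ m : Fin k → ℤ, (∀ d ∈ D, ∑ i, m i • d i = 0) → m = 0 := by
    intro m hm
    by_contra hm0
    have hne : (∑ i, m i • (b i : G)) ≠ 0 := by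
      intro h0
      apply hm0
      have hs : (∑ i, m i • b i : H) = 0 := by
        apply Subtype.ext
        rw [hcoe m, h0]
        rfl
      have hli := Fintype.linearIndependent_iff.mp b.linearIndependent m (by
        simpa using hs)
      funext i
      exact hli i
    obtain ⟨χ, hχS, hχne⟩ := separation hG S hS _ hne
    apply hχne
    have hrel := hm (r χ) ⟨χ, hχS, rfl⟩
    rw [map_sum]
    have heach : ∀ i, χ (m i • (b i : G)) = m i • (r χ) i := by
      intro i
      rw [map_zsmul]
      rfl
    rw [Finset.sum_congr rfl (fun i _ => heach i)]
    exact hrel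
  have hdense := torusDense k D hD
  set a : Fin k → AddCircle (1:ℝ) := fun i => φ (b i : G) with ha
  set W : Set (Fin k → AddCircle (1:ℝ)) :=
    ⋂ g : {x // x ∈ I}, {x | (∑ i, b.repr ⟨g.1, hgmem g.1 g.2⟩ i • x i) ∈ u g.1} with hW
  have hWopen : IsOpen W := by
    refine isOpen_iInter_of_finite fun g => ?_
    refine IsOpen.preimage ?_ (hu g.1 g.2).1
    exact continuous_finset_sum _ fun i _ => (continuous_zsmul _).comp (continuous_apply i)
  have haW : a ∈ W := by
    refine Set.mem_iInter.mpr fun g => ?_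
    show (∑ i, b.repr ⟨g.1, hgmem g.1 g.2⟩ i • a i) ∈ u g.1
    have := hrepr g.1 g.2 φ
    rw [← this]
    exact (hu g.1 g.2).2
  obtain ⟨y, hyW, hyD⟩ := (mem_closure_iff.mp (hdense a)) W hWopen haW
  obtain ⟨χ, hχS, rfl⟩ := hyD
  refine ⟨χ, ?_, hχS⟩
  show (⇑χ : G → AddCircle (1:ℝ)) ∈ V
  apply hIV
  intro g hg
  have hgW := Set.mem_iInter.mp hyW ⟨g, hg⟩
  show χ g ∈ u g
  rw [hrepr g hg χ]
  exact hgW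
end

section
/- Let G be an Abelian group and let R be a closed subgroup of Ĝ (in the topology of pointwise convergence). Then for every subgroup H of G, the closure of H in (G, τ_R) equals H + A(G, R), where A(G, R) = {g ∈ G : φ(g) = 0 for all φ ∈ R}. In particular, H is τ_R-closed if and only if H = H + A(G, R). -/
open MeasureTheory Complex

noncomputable abbrev TT := AddCircle (1 : ℝ)

lemma tc_cont : Continuous (fun t : TT => (AddCircle.toCircle t : ℂ)) := by
  exact continuous_induced_dom.comp AddCircle.continuous_toCircle

lemma tc_inj : Function.Injective (AddCircle.toCircle : TT → Circle) :=
  AddCircle.injective_toCircle one_ne_zero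

lemma tc_conj (t : TT) : (starRingEnd ℂ) (AddCircle.toCircle t : ℂ) = (AddCircle.toCircle (-t) : ℂ) := by
  have h : AddCircle.toCircle (-t) = (AddCircle.toCircle t)⁻¹ := by
    apply eq_inv_of_mul_eq_one_left
    rw [← AddCircle.toCircle_add, neg_add_cancel, AddCircle.toCircle_zero]
  rw [h, Circle.coe_inv_eq_conj]

/-- Integral of a nontrivial character of a compact group vanishes. -/
lemma char_integral_eq_zero {K : Type*} [AddCommGroup K] [TopologicalSpace K]
    [IsTopologicalAddGroup K] [MeasurableSpace K] [BorelSpace K]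
    (μ : Measure K) [μ.IsAddLeftInvariant]
    (c : K →+ TT) (hc : ∃ x, c x ≠ 0) :
    ∫ x, (AddCircle.toCircle (c x) : ℂ) ∂μ = 0 := by
  obtain ⟨x₀, h0⟩ := hc
  have h1 : ∫ x, (AddCircle.toCircle (c (x₀ + x)) : ℂ) ∂μ
      = ∫ x, (AddCircle.toCircle (c x) : ℂ) ∂μ :=
    integral_add_left_eq_self (fun y => (AddCircle.toCircle (c y) : ℂ)) x₀
  have h2 : (fun x => (AddCircle.toCircle (c (x₀ + x)) : ℂ))
      = fun x => (AddCircle.toCircle (c x₀) : ℂ) * (AddCircle.toCircle (c x) : ℂ) := by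
    funext x
    rw [map_add, AddCircle.toCircle_add, Circle.coe_mul]
  rw [h2, integral_const_mul] at h1
  have h3 : ((AddCircle.toCircle (c x₀) : ℂ) - 1) * ∫ x, (AddCircle.toCircle (c x) : ℂ) ∂μ = 0 := by
    rw [sub_mul, one_mul, h1, sub_self]
  rcases mul_eq_zero.mp h3 with h | h
  · exfalso
    apply h0
    apply tc_inj
    rw [AddCircle.toCircle_zero]
    ext
    rw [Circle.coe_one]
    linear_combination h
  · exact h

lemma cont_integrable {K : Type*} [TopologicalSpace K] [CompactSpace K]
    [MeasurableSpace K] [BorelSpace K] (μ : Measure K) [IsFiniteMeasure μ]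
    {f : K → ℂ} (hf : Continuous f) : Integrable f μ :=
  hf.integrable_of_hasCompactSupport
    (IsCompact.of_isClosed_subset isCompact_univ (isClosed_tsupport f) (Set.subset_univ _))

lemma mem_of_separating {K : Type*} [AddCommGroup K] [TopologicalSpace K]
    [IsTopologicalAddGroup K] [CompactSpace K] [T2Space K]
    (Λ : AddSubgroup (K →+ TT))
    (hcont : ∀ χ ∈ Λ, Continuous χ)
    (hsep : ∀ x : K, x ≠ 0 → ∃ χ ∈ Λ, χ x ≠ 0)
    (f : K →+ TT) (hf : Continuous f) : f ∈ Λ := by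
  by_contra hfΛ
  borelize K
  have : Nonempty K := ⟨0⟩
  set μ : Measure K := MeasureTheory.Measure.addHaar with hμ
  -- the set of continuous-map versions of characters in Λ
  set S : Set C(K, ℂ) := {p | ∃ χ ∈ Λ, ∀ x, p x = (AddCircle.toCircle (χ x) : ℂ)} with hS
  -- basic members
  have hmk : ∀ (χ : K →+ TT) (hχ : χ ∈ Λ), (⟨fun x => (AddCircle.toCircle (χ x) : ℂ),
      tc_cont.comp (hcont χ hχ)⟩ : C(K, ℂ)) ∈ S := by
    intro χ hχ
    exact ⟨χ, hχ, fun x => rfl⟩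
  have hone : (1 : C(K, ℂ)) ∈ S := by
    refine ⟨0, zero_mem _, fun x => ?_⟩
    simp [AddCircle.toCircle_zero]
  have hmul : ∀ p ∈ S, ∀ q ∈ S, p * q ∈ S := by
    rintro p ⟨χ, hχ, hp⟩ q ⟨ψ, hψ, hq⟩
    refine ⟨χ + ψ, add_mem hχ hψ, fun x => ?_⟩
    simp [hp x, hq x, AddCircle.toCircle_add]
  have hstarS : ∀ p ∈ S, star p ∈ S := by
    rintro p ⟨χ, hχ, hp⟩
    refine ⟨-χ, neg_mem hχ, fun x => ?_⟩
    have : (star p) x = (starRingEnd ℂ) (p x) := rfl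
    rw [this, hp x, tc_conj]
    rfl
  -- the span of S
  set M : Submodule ℂ C(K, ℂ) := Submodule.span ℂ S with hM
  have hadj : Subalgebra.toSubmodule (Algebra.adjoin ℂ S) = M := by
    let Smon : Submonoid C(K, ℂ) :=
      { carrier := S
        mul_mem' := fun ha hb => hmul _ ha _ hb
        one_mem' := hone }
    have : Submonoid.closure S = Smon := Submonoid.closure_eq Smon
    rw [Algebra.adjoin_eq_span, this, hM]
    rfl
  have hmemadj : ∀ p : C(K, ℂ), p ∈ Algebra.adjoin ℂ S ↔ p ∈ M := by
    intro p
    rw [← hadj]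
    rfl
  have hMstar : ∀ p ∈ M, star p ∈ M := by
    intro p hp
    induction hp using Submodule.span_induction with
    | mem x hx => exact Submodule.subset_span (hstarS x hx)
    | zero => simpa using Submodule.zero_mem M
    | add x y _ _ hx hy => rw [star_add]; exact Submodule.add_mem M hx hy
    | smul c x _ hx => rw [star_smul]; exact Submodule.smul_mem M _ hx
  -- the star subalgebra
  set A : StarSubalgebra ℂ C(K, ℂ) :=
    { Algebra.adjoin ℂ S with
      star_mem' := fun {a} ha => by
        have : a ∈ Algebra.adjoin ℂ S := ha
        exact (hmemadj _).mpr (hMstar a ((hmemadj a).mp this)) } with hAdef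
  have hAS : ∀ p : C(K, ℂ), p ∈ A ↔ p ∈ M := hmemadj
  -- separation of points
  have hA_sep : A.SeparatesPoints := by
    intro x y hxy
    obtain ⟨χ, hχ, hne⟩ := hsep (x - y) (sub_ne_zero.mpr hxy)
    refine ⟨_, ⟨⟨fun z => (AddCircle.toCircle (χ z) : ℂ),
      tc_cont.comp (hcont χ hχ)⟩, ?_, rfl⟩, ?_⟩
    · exact (hAS _).mpr (Submodule.subset_span (hmk χ hχ))
    · intro h
      apply hne
      have : χ x = χ y := tc_inj (Subtype.ext h)
      rw [map_sub, this, sub_self]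
    
  -- Stone-Weierstrass
  have hSW := ContinuousMap.starSubalgebra_topologicalClosure_eq_top_of_separatesPoints A hA_sep
  set F : C(K, ℂ) := ⟨fun x => (AddCircle.toCircle (f x) : ℂ), tc_cont.comp hf⟩ with hF
  have hFclos : (F : C(K, ℂ)) ∈ closure (A : Set C(K, ℂ)) := by
    rw [← StarSubalgebra.topologicalClosure_coe, hSW]
    trivial
  obtain ⟨p, hpA, hpd⟩ := Metric.mem_closure_iff.mp hFclos (1/2) (by norm_num)
  -- orthogonality
  have horth : ∀ q ∈ M, ∫ x, F x * (starRingEnd ℂ) (q x) ∂μ = 0 := by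
    intro q hq
    induction hq using Submodule.span_induction with
    | mem x hx =>
      obtain ⟨χ, hχ, hx⟩ := hx
      have hfn : f - χ ≠ 0 := by
        intro h
        exact hfΛ (by rwa [sub_eq_zero.mp h])
      have hcc : ∃ z, (f - χ) z ≠ 0 := by
        by_contra hz
        push_neg at hz
        exact hfn (AddMonoidHom.ext fun z => by simpa using hz z)
      have := char_integral_eq_zero μ (f - χ) hcc
      rw [← this]
      congr 1
      funext z
      rw [hx z, tc_conj, hF]
      simp only [ContinuousMap.coe_mk]
      rw [← Circle.coe_mul, ← AddCircle.toCircle_add]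
      simp [sub_eq_add_neg]
    | zero => simp
    | add x y hxM hyM hx hy =>
      have hix : Integrable (fun z => F z * (starRingEnd ℂ) (x z)) μ :=
        cont_integrable μ (F.continuous.mul (Complex.continuous_conj.comp x.continuous))
      have hiy : Integrable (fun z => F z * (starRingEnd ℂ) (y z)) μ :=
        cont_integrable μ (F.continuous.mul (Complex.continuous_conj.comp y.continuous))
      have : (fun z => F z * (starRingEnd ℂ) ((x + y) z))
          = fun z => F z * (starRingEnd ℂ) (x z) + F z * (starRingEnd ℂ) (y z) := by
        funext z
        simp [mul_add]
      rw [this, integral_add hix hiy, hx, hy, add_zero]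
    | smul c x hxM hx =>
      have : (fun z => F z * (starRingEnd ℂ) ((c • x) z))
          = fun z => (starRingEnd ℂ) c * (F z * (starRingEnd ℂ) (x z)) := by
        funext z
        simp [ContinuousMap.smul_apply]
        ring
      rw [this, integral_const_mul, hx, mul_zero]
  have hp0 : ∫ x, F x * (starRingEnd ℂ) (p x) ∂μ = 0 := horth p ((hAS p).mp hpA)
  -- the integral of |F|^2
  have hFF : (fun x => F x * (starRingEnd ℂ) (F x)) = fun _ => (1 : ℂ) := by
    funext x
    rw [hF]
    simp only [ContinuousMap.coe_mk]
    rw [tc_conj, ← Circle.coe_mul, ← AddCircle.toCircle_add, add_neg_cancel,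
      AddCircle.toCircle_zero, Circle.coe_one]
  have hμfin : IsFiniteMeasure μ := inferInstance
  set m : ℝ := (μ Set.univ).toReal with hm
  have hIF : ∫ x, F x * (starRingEnd ℂ) (F x) ∂μ = (m : ℂ) := by
    rw [hFF, integral_const]
    simp [hm, measureReal_def]
  have hsub : ∫ x, F x * (starRingEnd ℂ) (F x - p x) ∂μ = (m : ℂ) := by
    have : (fun x => F x * (starRingEnd ℂ) (F x - p x))
        = fun x => F x * (starRingEnd ℂ) (F x) - F x * (starRingEnd ℂ) (p x) := by
      funext x
      rw [map_sub, mul_sub]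
    have hiF : Integrable (fun z => F z * (starRingEnd ℂ) (F z)) μ :=
      cont_integrable μ (F.continuous.mul (Complex.continuous_conj.comp F.continuous))
    have hip : Integrable (fun z => F z * (starRingEnd ℂ) (p z)) μ :=
      cont_integrable μ (F.continuous.mul (Complex.continuous_conj.comp p.continuous))
    rw [this, integral_sub hiF hip, hIF, hp0, sub_zero]
  have hbound : ‖∫ x, F x * (starRingEnd ℂ) (F x - p x) ∂μ‖ ≤ dist F p * m := by
    apply norm_integral_le_of_norm_le_const
    filter_upwards with x
    rw [norm_mul]
    have h1 : ‖F x‖ = 1 := by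
      rw [hF]
      simp only [ContinuousMap.coe_mk]
      rw [Circle.norm_coe]
    rw [h1, one_mul, Complex.norm_conj, ← dist_eq_norm]
    exact ContinuousMap.dist_apply_le_dist x
  have hmpos : 0 < m := by
    rw [hm]
    apply ENNReal.toReal_pos
    · exact (isOpen_univ.measure_pos μ ⟨0, trivial⟩).ne'
    · exact measure_ne_top μ _
  rw [hsub] at hbound
  have habs : |m| ≤ dist F p * m := by simpa using hbound
  rw [abs_of_pos hmpos] at habs
  nlinarith [dist_nonneg (x := F) (y := p)]

open Pointwise in
theorem stmt14 {G : Type*} [AddCommGroup G]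
    (R : AddSubgroup (G →+ AddCircle (1 : ℝ)))
    (hR : @IsClosed _ (dualTop G) (R : Set (G →+ AddCircle (1 : ℝ))))
    (H : AddSubgroup G) :
    @closure G (tauS R) (H : Set G) = (H : Set G) + {g : G | ∀ φ ∈ R, φ g = 0} ∧
      (@IsClosed G (tauS R) (H : Set G) ↔
        (H : Set G) = (H : Set G) + {g : G | ∀ φ ∈ R, φ g = 0}) := by
  classical
  have main : @closure G (tauS R) (H : Set G)
      = (H : Set G) + {g : G | ∀ φ ∈ R, φ g = 0} := by
    set A : Set G := {g : G | ∀ φ ∈ R, φ g = 0} with hA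
    set e : G → (↥R → TT) := fun g φ => (φ : G →+ TT) g with he
    have hτ : tauS R = TopologicalSpace.induced e Pi.topologicalSpace := by
      have h2 : TopologicalSpace.induced e (Pi.topologicalSpace) =
          ⨅ φ : ↥R, TopologicalSpace.induced (⇑(φ : G →+ TT)) inferInstance := by
        rw [show (Pi.topologicalSpace : TopologicalSpace (↥R → TT))
            = ⨅ φ : ↥R, TopologicalSpace.induced (fun x => x φ) inferInstance from rfl,
          induced_iInf]
        simp only [induced_compose]
        rfl
      rw [h2, tauS]
      exact (iInf_subtype'' (R : Set (G →+ TT))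
        (fun φ => TopologicalSpace.induced (⇑φ) inferInstance)).symm
    have hclos : ∀ g : G, g ∈ @closure G (tauS R) (H : Set G) ↔
        e g ∈ closure (e '' (H : Set G)) := by
      intro g
      rw [hτ]
      exact closure_induced
    apply Set.Subset.antisymm
    · -- hard direction
      intro g hg
      rw [hclos g] at hg
      letI : TopologicalSpace (G →+ TT) := dualTop G
      have stepA : ∀ ψ : ↥R, (∀ x ∈ H, (ψ : G →+ TT) x = 0) → (ψ : G →+ TT) g = 0 := by
        intro ψ hψ
        have hcl : IsClosed {x : ↥R → TT | x ψ = 0} :=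
          isClosed_eq (continuous_apply ψ) continuous_const
        have hsub : e '' (H : Set G) ⊆ {x : ↥R → TT | x ψ = 0} := by
          rintro _ ⟨h, hh, rfl⟩
          exact hψ h hh
        exact closure_minimal hsub hcl hg
      have hcoe_emb : Topology.IsEmbedding (fun φ : G →+ TT => (φ : G → TT)) :=
        ⟨⟨rfl⟩, DFunLike.coe_injective⟩
      have hrange : IsClosed (Set.range (fun φ : G →+ TT => (φ : G → TT))) := by
        have hr : Set.range (fun φ : G →+ TT => (φ : G → TT))
            = ⋂ (a : G), ⋂ (b : G), {x : G → TT | x (a + b) = x a + x b} := by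
          ext x
          simp only [Set.mem_range, Set.mem_iInter, Set.mem_setOf_eq]
          constructor
          · rintro ⟨φ, rfl⟩ a b; exact map_add φ a b
          · intro hx; exact ⟨AddMonoidHom.mk' x (fun a b => hx a b), rfl⟩
        rw [hr]
        exact isClosed_iInter fun a => isClosed_iInter fun b =>
          isClosed_eq (continuous_apply _) ((continuous_apply a).add (continuous_apply b))
      have hcemb : Topology.IsClosedEmbedding (fun φ : G →+ TT => (φ : G → TT)) :=
        ⟨hcoe_emb, hrange⟩
      haveI : T2Space (G →+ TT) := hcoe_emb.t2Space
      have hRcompact : IsCompact (R : Set (G →+ TT)) := by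
        rw [hcoe_emb.isCompact_iff]
        exact ((hcemb.isClosedMap _ hR)).isCompact
      haveI hRcs : CompactSpace ↥R := isCompact_iff_compactSpace.mp hRcompact
      -- the compact image group K inside functions on H
      set ρm : ↥R →+ (↥H → TT) := AddMonoidHom.mk'
        (fun φ => fun h => (φ : G →+ TT) h) (by
          intro φ ψ
          funext h
          rfl) with hρm
      have hρmc : Continuous (fun φ : ↥R => ρm φ) :=
        continuous_pi fun h => ((continuous_apply (h : G)).comp
          (hcoe_emb.continuous.comp continuous_subtype_val))
      set K := ρm.range with hK
      haveI hKcs : CompactSpace ↥K := by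
        apply isCompact_iff_compactSpace.mp
        have : (K : Set (↥H → TT)) = Set.range (fun φ : ↥R => ρm φ) :=
          AddMonoidHom.coe_range ρm
        rw [this]
        exact isCompact_range hρmc
      set ρK : ↥R → ↥K := fun φ => ⟨ρm φ, AddMonoidHom.mem_range.mpr ⟨φ, rfl⟩⟩ with hρK
      have hρKc : Continuous ρK := Continuous.subtype_mk hρmc _
      have hρKsurj : Function.Surjective ρK := by
        rintro ⟨x, hx⟩
        obtain ⟨φ, rfl⟩ := AddMonoidHom.mem_range.mp hx
        exact ⟨φ, rfl⟩
      set val : ↥R → TT := fun φ => (φ : G →+ TT) g with hval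
      have hvalc : Continuous val := (continuous_apply g).comp
        (hcoe_emb.continuous.comp continuous_subtype_val)
      have hwd : ∀ φ ψ : ↥R, ρm φ = ρm ψ → val φ = val ψ := by
        intro φ ψ hEq
        have h0 : ((φ - ψ : ↥R) : G →+ TT) g = 0 := by
          apply stepA
          intro x hx
          have h1 : ρm φ ⟨x, hx⟩ = ρm ψ ⟨x, hx⟩ := congrFun hEq ⟨x, hx⟩
          have h2 : (φ : G →+ TT) x = (ψ : G →+ TT) x := h1
          rw [AddSubgroup.coe_sub, AddMonoidHom.sub_apply, h2, sub_self]
        rw [AddSubgroup.coe_sub, AddMonoidHom.sub_apply] at h0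
        exact sub_eq_zero.mp h0
      have hex : ∀ x : ↥K, ∃ φ : ↥R, ρm φ = (x : ↥H → TT) :=
        fun x => AddMonoidHom.mem_range.mp x.2
      set sec : ↥K → ↥R := fun x => (hex x).choose with hsecdef
      have hsec : ∀ x : ↥K, ρm (sec x) = (x : ↥H → TT) := fun x => (hex x).choose_spec
      have hf0ρ : ∀ φ : ↥R, val (sec (ρK φ)) = val φ := by
        intro φ
        exact hwd _ _ (hsec (ρK φ))
      set f : ↥K →+ TT := AddMonoidHom.mk' (fun x => val (sec x)) (by
        intro x y
        have h1 : ρm (sec (x + y)) = ρm (sec x + sec y) := by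
          rw [map_add, hsec, hsec, hsec]
          rfl
        show val (sec (x + y)) = val (sec x) + val (sec y)
        rw [hwd _ _ h1]
        show ((sec x + sec y : ↥R) : G →+ TT) g = _
        rw [AddSubgroup.coe_add, AddMonoidHom.add_apply]) with hfdef
      have hfρ : ∀ φ : ↥R, f (ρK φ) = val φ := hf0ρ
      have hfc : Continuous f := by
        rw [continuous_iff_isClosed]
        intro C hC
        have h1 : (⇑f) ⁻¹' C = ρK '' (val ⁻¹' C) := by
          ext x
          constructor
          · intro hx
            obtain ⟨φ, rfl⟩ := hρKsurj x
            refine ⟨φ, ?_, rfl⟩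
            rw [Set.mem_preimage, ← hfρ φ]
            exact hx
          · rintro ⟨φ, hφ, rfl⟩
            rw [Set.mem_preimage, hfρ]
            exact hφ
        rw [h1]
        exact (((hC.preimage hvalc).isCompact).image hρKc).isClosed
      set evm : ↥H → (↥K →+ TT) := fun h =>
        (Pi.evalAddMonoidHom (fun _ : ↥H => TT) h).comp K.subtype with hevm
      have hevadd : ∀ h h' : ↥H, evm (h + h') = evm h + evm h' := by
        intro h h'
        ext x
        obtain ⟨φ, hφ⟩ := hex x
        rw [AddMonoidHom.add_apply]
        have h1 : ∀ k : ↥H, evm k x = (x : ↥H → TT) k := fun k => rfl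
        rw [h1, h1, h1, ← hφ]
        show (φ : G →+ TT) ((h : G) + (h' : G)) = (φ : G →+ TT) h + (φ : G →+ TT) h'
        exact map_add _ _ _
      set evh : ↥H →+ (↥K →+ TT) := AddMonoidHom.mk' evm hevadd with hevh
      set Λ := evh.range with hΛ
      have hcontΛ : ∀ χ ∈ Λ, Continuous χ := by
        rintro χ ⟨h, rfl⟩
        exact (continuous_apply h).comp continuous_subtype_val
      have hsepΛ : ∀ x : ↥K, x ≠ 0 → ∃ χ ∈ Λ, χ x ≠ 0 := by
        intro x hx
        by_contra hcon
        push_neg at hcon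
        apply hx
        apply Subtype.ext
        funext h
        have := hcon (evh h) ⟨h, rfl⟩
        exact this
      have hfΛ : f ∈ Λ := mem_of_separating Λ hcontΛ hsepΛ f hfc
      obtain ⟨h, hh⟩ := hfΛ
      have hval_eq : ∀ φ : ↥R, (φ : G →+ TT) g = (φ : G →+ TT) (h : G) := by
        intro φ
        have h1 : evh h (ρK φ) = f (ρK φ) := by rw [hh]
        rw [hfρ φ] at h1
        exact h1.symm
      rw [Set.mem_add]
      refine ⟨(h : G), h.2, g - h, ?_, by abel⟩
      intro φ hφ
      rw [map_sub, hval_eq ⟨φ, hφ⟩, sub_self]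
    · rintro x ⟨h, hh, a, ha, rfl⟩
      rw [hclos]
      have hee : e (h + a) = e h := by
        funext φ
        have h0 : (φ : G →+ TT) a = 0 := ha φ.1 φ.2
        show (φ : G →+ TT) (h + a) = (φ : G →+ TT) h
        rw [map_add, h0, add_zero]
      rw [hee]
      exact subset_closure ⟨h, hh, rfl⟩
  refine ⟨main, ?_⟩
  letI : TopologicalSpace G := tauS R
  constructor
  · intro hcl
    rw [← main]
    exact (IsClosed.closure_eq hcl).symm
  · intro heq
    have h2 : closure (H : Set G) = (H : Set G) := by
      rw [show closure (H : Set G) = @closure G (tauS R) (H : Set G) from rfl, main, ← heq]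
    exact closure_eq_iff_isClosed.mp h2
end
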